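/- arXiv:2004.02712 — 6 statements merged into one kernel-verified Lean document; each statement's English description precedes it below -/
import Mathlib

section
/- (Theorem 1, radial form.) For every real α > 0, the supremum V_{k,N,α} = sup{∫_0^1 r^{N−1}|v(r)|^{k*+r^α} dr : v ∈ X_1, ‖v‖_{X_1} = 1} is finite. (Via the identities ∫_B |u|^{k*+|x|^α} dx = ω_{N−1}∫_0^1 r^{N−1}|v|^{k*+r^α} dr and ‖u‖_{Φ^k_0} = ‖v‖_{X_1} for radially symmetric u(x) = −v(|x|), this is the supercritical Sobolev-type inequality for radially symmetric k-admissible functions on the unit ball.) -/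
open MeasureTheory Real Set Filter Asymptotics

/-- `k* = N(k+1)/(N-2k)`, the critical exponent for the `k`-Hessian operator. -/
noncomputable def kstar (N k : ℕ) : ℝ :=
  ((N : ℝ) * ((k : ℝ) + 1)) / ((N : ℝ) - 2 * (k : ℝ))

/-- `ω_{N-1} = 2 π^{N/2} / Γ(N/2)`, the surface area of the unit sphere in `ℝ^N`. -/
noncomputable def omegaSphere (N : ℕ) : ℝ :=
  2 * Real.pi ^ ((N : ℝ) / 2) / Real.Gamma ((N : ℝ) / 2)

/-- `ω_{N,k} = ω_{N-1} * C(N,k) / N`. -/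
noncomputable def omegaNk (N k : ℕ) : ℝ :=
  omegaSphere N * (N.choose k : ℝ) / (N : ℝ)

/-- Membership in the weighted Sobolev space `X_1`: `v` is locally absolutely
continuous on `(0,1)` (expressed via the fundamental theorem of calculus for its
a.e. derivative `deriv v`), tends to `0` at `1⁻` (with value `0` at `1`), and the
weighted integrals of `|v'|^{k+1}` and `|v|^{k+1}` are finite. -/
structure MemX1 (N k : ℕ) (v : ℝ → ℝ) : Prop where
  ftc : ∀ a ∈ Set.Ioo (0:ℝ) 1, ∀ b ∈ Set.Ioo (0:ℝ) 1,
    IntervalIntegrable (deriv v) MeasureTheory.volume a b ∧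
      v b - v a = ∫ s in a..b, deriv v s
  lim_one : Filter.Tendsto v (nhdsWithin 1 (Set.Iio 1)) (nhds 0)
  val_one : v 1 = 0
  int_deriv : MeasureTheory.IntegrableOn
    (fun r : ℝ => r ^ ((N : ℝ) - (k : ℝ)) * |deriv v r| ^ ((k : ℝ) + 1)) (Set.Ioo 0 1)
  int_self : MeasureTheory.IntegrableOn
    (fun r : ℝ => r ^ ((N : ℝ) - 1) * |v r| ^ ((k : ℝ) + 1)) (Set.Ioo 0 1)

/-- The norm of `X_1`: `‖v‖ = (ω_{N,k} ∫_0^1 r^{N-k} |v'|^{k+1} dr)^{1/(k+1)}`. -/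
noncomputable def X1norm (N k : ℕ) (v : ℝ → ℝ) : ℝ :=
  (omegaNk N k * ∫ r in Set.Ioo (0:ℝ) 1,
      r ^ ((N : ℝ) - (k : ℝ)) * |deriv v r| ^ ((k : ℝ) + 1)) ^ (1 / ((k : ℝ) + 1))

/-- The supercritical functional `∫_0^1 r^{N-1} |v|^{k* + r^α} dr`. -/
noncomputable def superInt (N k : ℕ) (α : ℝ) (v : ℝ → ℝ) : ℝ :=
  ∫ r in Set.Ioo (0:ℝ) 1, r ^ ((N : ℝ) - 1) * |v r| ^ (kstar N k + r ^ α)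

/-- `V_{k,N,α}`, the supremum of the supercritical functional on the unit sphere of `X_1`. -/
noncomputable def Vsup (N k : ℕ) (α : ℝ) : ℝ :=
  sSup ((fun v => superInt N k α v) '' {v : ℝ → ℝ | MemX1 N k v ∧ X1norm N k v = 1})

/-- The critical functional `∫_0^1 r^{N-1} |v|^{k*} dr`. -/
noncomputable def critInt (N k : ℕ) (v : ℝ → ℝ) : ℝ :=
  ∫ r in Set.Ioo (0:ℝ) 1, r ^ ((N : ℝ) - 1) * |v r| ^ (kstar N k)

/-- `V_{k,N}`, the supremum of the critical functional on the unit sphere of `X_1`. -/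
noncomputable def VkN (N k : ℕ) : ℝ :=
  sSup ((fun v => critInt N k v) '' {v : ℝ → ℝ | MemX1 N k v ∧ X1norm N k v = 1})

/-- The normalizing constant `ĉ = (N ((N-2k)/k)^k)^{(N-2k)/(2k)}`. -/
noncomputable def chat (N k : ℕ) : ℝ :=
  ((N : ℝ) * (((N : ℝ) - 2 * (k : ℝ)) / (k : ℝ)) ^ k) ^ (((N : ℝ) - 2 * (k : ℝ)) / (2 * (k : ℝ)))

/-- The instanton `v*_ε(r) = ĉ (ε^{2/(k+1)} / (ε² + r²))^{(N-2k)/(2k)}`. -/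
noncomputable def vstar (N k : ℕ) (ε r : ℝ) : ℝ :=
  chat N k * (ε ^ ((2 : ℝ) / ((k : ℝ) + 1)) / (ε ^ 2 + r ^ 2)) ^
    (((N : ℝ) - 2 * (k : ℝ)) / (2 * (k : ℝ)))

/-- `K = ∫_0^∞ r^{N-1} (v*_1(r))^{k*} dr = S^{N/(2k)}`. -/
noncomputable def Kconst (N k : ℕ) : ℝ :=
  ∫ r in Set.Ioi (0:ℝ), r ^ ((N : ℝ) - 1) * vstar N k 1 r ^ kstar N k

section Thm1Aux

open MeasureTheory Real Set Filter
open scoped ENNReal NNReal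

namespace Thm1Aux

lemma conj (k : ℕ) (hk : 1 ≤ k) : Real.HolderConjugate ((k:ℝ)+1) (((k:ℝ)+1)/(k:ℝ)) := by
  have hk' : (1:ℝ) ≤ (k:ℝ) := by exact_mod_cast hk
  have hk0 : (k:ℝ) ≠ 0 := by linarith
  rw [Real.holderConjugate_iff]
  constructor
  · linarith
  · field_simp; ring

lemma neglog_bound {α r : ℝ} (hα : 0 < α) (hr : 0 < r) :
    (-Real.log r) * r ^ α ≤ 1 / (Real.exp 1 * α) := by
  have h2 : ∀ y : ℝ, 0 < y → Real.log y ≤ y / Real.exp 1 := by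
    intro y hy
    have h := Real.log_le_sub_one_of_pos (div_pos hy (Real.exp_pos 1))
    rw [Real.log_div hy.ne' (Real.exp_pos 1).ne', Real.log_exp] at h
    linarith
  have h1 : Real.log (r ^ (-α)) = -α * Real.log r := Real.log_rpow hr _
  have h3 := h2 (r ^ (-α)) (Real.rpow_pos_of_pos hr _)
  rw [h1] at h3
  have h4 : r ^ (-α) * r ^ α = 1 := by
    rw [← Real.rpow_add hr]; simp
  have h5 : 0 < r ^ α := Real.rpow_pos_of_pos hr _
  have h6 : (-Real.log r) * r ^ α * α ≤ 1 / Real.exp 1 := by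
    have := mul_le_mul_of_nonneg_right h3 h5.le
    calc (-Real.log r) * r ^ α * α = -α * Real.log r * r ^ α := by ring
    _ ≤ r ^ (-α) / Real.exp 1 * r ^ α := this
    _ = 1 / Real.exp 1 := by rw [div_mul_eq_mul_div, h4]
  rw [div_mul_eq_div_div]
  exact (le_div_iff₀ hα).2 h6

lemma tail_weight {e r : ℝ} (he : e < -1) (hr : 0 < r) (hr1 : r < 1) :
    ∫⁻ s in Set.Ioo r 1, ENNReal.ofReal (s ^ e) ≤ ENNReal.ofReal (r ^ (e+1) / (-(e+1))) := by
  have h0 : (0:ℝ) ∉ Set.uIcc r 1 := by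
    rw [Set.uIcc_of_le hr1.le]
    intro h; exact absurd h.1 (not_le.2 hr)
  have hint : IntervalIntegrable (fun s : ℝ => s ^ e) volume r 1 :=
    intervalIntegral.intervalIntegrable_rpow (Or.inr h0)
  have hio : IntegrableOn (fun s : ℝ => s ^ e) (Set.Ioo r 1) volume :=
    ((intervalIntegrable_iff_integrableOn_Ioc_of_le hr1.le).1 hint).mono_set Set.Ioo_subset_Ioc_self
  have hnn : 0 ≤ᵐ[volume.restrict (Set.Ioo r 1)] fun s : ℝ => s ^ e := by
    filter_upwards [ae_restrict_mem measurableSet_Ioo] with s hs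
    exact Real.rpow_nonneg (le_of_lt (lt_trans hr hs.1)) e
  rw [← ofReal_integral_eq_lintegral_ofReal hio hnn]
  apply ENNReal.ofReal_le_ofReal
  have heq : ∫ s in Set.Ioo r 1, s ^ e = ∫ s in r..1, s ^ e := by
    rw [intervalIntegral.integral_of_le hr1.le, integral_Ioc_eq_integral_Ioo]
  rw [heq, integral_rpow (Or.inr ⟨by linarith, h0⟩)]
  rw [Real.one_rpow]
  have hpos : 0 < -(e+1) := by linarith
  have key : (1 - r ^ (e+1))/(e+1) = (r ^ (e+1) - 1)/(-(e+1)) := by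
    rw [div_neg, ← neg_div, neg_sub]
  rw [key]
  exact (div_le_div_iff_of_pos_right hpos).2 (by linarith)

lemma head_weight {e s : ℝ} (he : -1 < e) (hs : 0 < s) :
    ∫⁻ r in Set.Ioo 0 s, ENNReal.ofReal (r ^ e) = ENNReal.ofReal (s ^ (e+1) / (e+1)) := by
  have hint : IntervalIntegrable (fun r : ℝ => r ^ e) volume 0 s :=
    intervalIntegral.intervalIntegrable_rpow' he
  have hio : IntegrableOn (fun r : ℝ => r ^ e) (Set.Ioo 0 s) volume :=
    ((intervalIntegrable_iff_integrableOn_Ioc_of_le hs.le).1 hint).mono_set Set.Ioo_subset_Ioc_self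
  have hnn : 0 ≤ᵐ[volume.restrict (Set.Ioo 0 s)] fun r : ℝ => r ^ e := by
    filter_upwards [ae_restrict_mem measurableSet_Ioo] with r hrr
    exact Real.rpow_nonneg hrr.1.le e
  rw [← ofReal_integral_eq_lintegral_ofReal hio hnn]
  congr 1
  have heq : ∫ r in Set.Ioo 0 s, r ^ e = ∫ r in (0:ℝ)..s, r ^ e := by
    rw [intervalIntegral.integral_of_le hs.le, integral_Ioc_eq_integral_Ioo]
  rw [heq, integral_rpow (Or.inl he), Real.zero_rpow (by linarith)]
  ring

lemma holder_tail (k : ℕ) (hk : 1 ≤ k) (φ : ℝ → ℝ≥0∞) (hφ : Measurable φ) (δ r : ℝ) (hr : 0 < r) :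
    ∫⁻ s in Set.Ioo r 1, φ s ≤
      (∫⁻ s in Set.Ioo r 1, ENNReal.ofReal (s ^ δ) * φ s ^ ((k:ℝ)+1)) ^ (1/((k:ℝ)+1)) *
      (∫⁻ s in Set.Ioo r 1, ENNReal.ofReal (s ^ (-(δ/(k:ℝ))))) ^ ((k:ℝ)/((k:ℝ)+1)) := by
  have hk' : (1:ℝ) ≤ (k:ℝ) := by exact_mod_cast hk
  have hk0 : (k:ℝ) ≠ 0 := by linarith
  have hp0 : ((k:ℝ)+1) ≠ 0 := by linarith
  set p : ℝ := (k:ℝ)+1 with hp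
  set q : ℝ := ((k:ℝ)+1)/(k:ℝ) with hq
  set μ := volume.restrict (Set.Ioo r (1:ℝ)) with hμ
  set f : ℝ → ℝ≥0∞ := fun s => ENNReal.ofReal (s ^ (δ/p)) * φ s with hf
  set g : ℝ → ℝ≥0∞ := fun s => ENNReal.ofReal (s ^ (-(δ/p))) with hg
  have hfm : AEMeasurable f μ := ((measurable_id.pow_const (δ/p)).ennreal_ofReal.mul hφ).aemeasurable
  have hgm : AEMeasurable g μ := (measurable_id.pow_const (-(δ/p))).ennreal_ofReal.aemeasurable
  have hae : ∀ᵐ s ∂μ, s ∈ Set.Ioo r (1:ℝ) := ae_restrict_mem measurableSet_Ioo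
  have h1 : ∫⁻ s, φ s ∂μ = ∫⁻ s, (f * g) s ∂μ := by
    apply lintegral_congr_ae
    filter_upwards [hae] with s hs
    have hs0 : 0 < s := lt_trans hr hs.1
    simp only [Pi.mul_apply, hf, hg]
    rw [mul_comm (ENNReal.ofReal (s ^ (δ/p))) (φ s), mul_assoc, ← ENNReal.ofReal_mul
      (Real.rpow_nonneg hs0.le _), ← Real.rpow_add hs0]
    simp
  have h2 := ENNReal.lintegral_mul_le_Lp_mul_Lq μ (conj k hk) hfm hgm
  rw [h1]
  refine le_trans h2 ?_
  have hfp : ∫⁻ s, f s ^ p ∂μ = ∫⁻ s in Set.Ioo r 1, ENNReal.ofReal (s ^ δ) * φ s ^ p := by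
    apply lintegral_congr_ae
    filter_upwards [hae] with s hs
    have hs0 : 0 < s := lt_trans hr hs.1
    rw [hf]
    rw [ENNReal.mul_rpow_of_nonneg _ _ (by linarith : (0:ℝ) ≤ p),
      ENNReal.ofReal_rpow_of_nonneg (Real.rpow_nonneg hs0.le _) (by linarith : (0:ℝ) ≤ p),
      ← Real.rpow_mul hs0.le, div_mul_cancel₀ _ hp0]
  have hgq : ∫⁻ s, g s ^ q ∂μ = ∫⁻ s in Set.Ioo r 1, ENNReal.ofReal (s ^ (-(δ/(k:ℝ)))) := by
    apply lintegral_congr_ae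
    filter_upwards [hae] with s hs
    have hs0 : 0 < s := lt_trans hr hs.1
    rw [hg]
    rw [ENNReal.ofReal_rpow_of_nonneg (Real.rpow_nonneg hs0.le _)
      (by positivity : (0:ℝ) ≤ q), ← Real.rpow_mul hs0.le]
    have hpq : -(δ/p) * q = -(δ/(k:ℝ)) := by rw [hp, hq]; field_simp
    rw [hpq]
  rw [hfp, hgq]
  have hq1 : 1/q = (k:ℝ)/((k:ℝ)+1) := by rw [hq]; rw [one_div, inv_div]
  rw [hq1]

end Thm1Aux

end Thm1Aux

open scoped ENNReal NNReal

/-- Auxiliary constant: the radial-lemma constant `A` with `|v(r)| ≤ A r^{-β}`. -/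
noncomputable def thm1A (N k : ℕ) : ℝ :=
  (1 / omegaNk N k) ^ (1/((k:ℝ)+1)) * ((k:ℝ)/((N:ℝ)-2*(k:ℝ))) ^ ((k:ℝ)/((k:ℝ)+1))

/-- Auxiliary constant for the pointwise bound. -/
noncomputable def thm1D (N k : ℕ) (α : ℝ) : ℝ :=
  max (thm1A N k) 1 ^ (kstar N k - ((k:ℝ)+1) + 1) *
    Real.exp ((((N:ℝ)-2*(k:ℝ))/((k:ℝ)+1)) * (1 / (Real.exp 1 * α))) * (2*(k:ℝ)) ^ (k:ℝ)

/-- The final uniform bound. -/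
noncomputable def thm1B (N k : ℕ) (α : ℝ) : ℝ :=
  thm1D N k α * (1/((N:ℝ)-2*(k:ℝ)-1/2)) * (1 / omegaNk N k)

lemma omegaNk_pos (N k : ℕ) (hN : 2 * k < N) : 0 < omegaNk N k := by
  have hN0 : 0 < N := lt_of_le_of_lt (Nat.zero_le _) hN
  have h1 : 0 < Real.pi ^ ((N:ℝ)/2) := Real.rpow_pos_of_pos Real.pi_pos _
  have h2 : 0 < Real.Gamma ((N:ℝ)/2) := Real.Gamma_pos_of_pos (by positivity)
  have h3 : 0 < (N.choose k : ℝ) := by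
    exact_mod_cast Nat.choose_pos (by omega : k ≤ N)
  have h4 : 0 < (N:ℝ) := by exact_mod_cast hN0
  unfold omegaNk omegaSphere
  positivity

lemma thm1A_nonneg (N k : ℕ) (hN : 2 * k < N) : 0 ≤ thm1A N k := by
  have h1 := omegaNk_pos N k hN
  have h2 : (0:ℝ) < (N:ℝ) - 2*(k:ℝ) := by
    have : 2*(k:ℝ) < (N:ℝ) := by exact_mod_cast hN
    linarith
  unfold thm1A
  exact mul_nonneg (Real.rpow_nonneg (by positivity) _) (Real.rpow_nonneg (by positivity) _)

lemma thm1D_nonneg (N k : ℕ) (α : ℝ) : 0 ≤ thm1D N k α := by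
  unfold thm1D
  have h1 : (0:ℝ) < max (thm1A N k) 1 := lt_of_lt_of_le one_pos (le_max_right _ _)
  positivity

set_option maxHeartbeats 2000000 in
lemma thm1_main_bound (N k : ℕ) (hk : 1 ≤ k) (hN : 2 * k < N) (α : ℝ) (hα : 0 < α)
    (v : ℝ → ℝ) (hv : MemX1 N k v) (hn : X1norm N k v = 1) :
    superInt N k α v ≤ thm1B N k α := by
  classical
  have hK1 : (1:ℝ) ≤ (k:ℝ) := by exact_mod_cast hk
  have hK0 : (0:ℝ) < (k:ℝ) := by linarith
  have hNK : 2*(k:ℝ) < (N:ℝ) := by exact_mod_cast hN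
  have hNK1 : 2*(k:ℝ) + 1 ≤ (N:ℝ) := by exact_mod_cast Nat.succ_le_of_lt hN
  have hp0 : (0:ℝ) < (k:ℝ)+1 := by linarith
  have hω : 0 < omegaNk N k := omegaNk_pos N k hN
  have hn2K : (0:ℝ) < (N:ℝ) - 2*(k:ℝ) := by linarith
  have hnK : (0:ℝ) < (N:ℝ) - (k:ℝ) := by linarith
  have hks : (k:ℝ)+1 < kstar N k := by
    unfold kstar
    rw [lt_div_iff₀ hn2K]
    nlinarith
  set φ : ℝ → ℝ≥0∞ := fun s => ENNReal.ofReal |deriv v s| with hφdef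
  have hφm : Measurable φ := (measurable_deriv v).abs.ennreal_ofReal
  -- real energy identity
  have hJ : ∫ s in Set.Ioo (0:ℝ) 1, s ^ ((N:ℝ)-(k:ℝ)) * |deriv v s| ^ ((k:ℝ)+1)
      = 1/omegaNk N k := by
    have hJnn : 0 ≤ ∫ s in Set.Ioo (0:ℝ) 1, s ^ ((N:ℝ)-(k:ℝ)) * |deriv v s| ^ ((k:ℝ)+1) := by
      apply setIntegral_nonneg measurableSet_Ioo
      intro x hx
      exact mul_nonneg (Real.rpow_nonneg hx.1.le _) (Real.rpow_nonneg (abs_nonneg _) _)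
    have h0 : 0 ≤ omegaNk N k * ∫ s in Set.Ioo (0:ℝ) 1,
        s ^ ((N:ℝ)-(k:ℝ)) * |deriv v s| ^ ((k:ℝ)+1) := mul_nonneg hω.le hJnn
    unfold X1norm at hn
    have h2 := congrArg (fun x : ℝ => x ^ ((k:ℝ)+1)) hn
    rw [← Real.rpow_mul h0, one_div, inv_mul_cancel₀ (ne_of_gt hp0), Real.rpow_one,
      Real.one_rpow] at h2
    rw [eq_div_iff (ne_of_gt hω)]
    linarith [h2]
  -- energy identity in ℝ≥0∞
  have hE : ∫⁻ s in Set.Ioo (0:ℝ) 1, ENNReal.ofReal (s ^ ((N:ℝ)-(k:ℝ))) * φ s ^ ((k:ℝ)+1)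
      = ENNReal.ofReal (1/omegaNk N k) := by
    have hnn : 0 ≤ᵐ[volume.restrict (Set.Ioo (0:ℝ) 1)]
        fun s => s ^ ((N:ℝ)-(k:ℝ)) * |deriv v s| ^ ((k:ℝ)+1) := by
      filter_upwards [ae_restrict_mem measurableSet_Ioo] with s hs
      exact mul_nonneg (Real.rpow_nonneg hs.1.le _) (Real.rpow_nonneg (abs_nonneg _) _)
    rw [← hJ, ofReal_integral_eq_lintegral_ofReal hv.int_deriv hnn]
    apply lintegral_congr_ae
    filter_upwards [ae_restrict_mem measurableSet_Ioo] with s hs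
    rw [ENNReal.ofReal_mul (Real.rpow_nonneg hs.1.le _),
      ENNReal.ofReal_rpow_of_nonneg (abs_nonneg _) (by linarith : (0:ℝ) ≤ (k:ℝ)+1)]
  -- integrability of the derivative on tails
  have hd_int : ∀ r : ℝ, 0 < r → IntegrableOn (deriv v) (Set.Ioo r 1) volume := by
    intro r hr0
    apply Integrable.mono'
      (g := fun s => 1 + r ^ ((k:ℝ)-(N:ℝ)) * (s ^ ((N:ℝ)-(k:ℝ)) * |deriv v s| ^ ((k:ℝ)+1)))
    · exact (integrableOn_const measure_Ioo_lt_top.ne).add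
        ((hv.int_deriv.mono_set (Set.Ioo_subset_Ioo hr0.le le_rfl)).const_mul _)
    · exact (measurable_deriv v).aestronglyMeasurable
    · filter_upwards [ae_restrict_mem measurableSet_Ioo] with s hs
      rw [Real.norm_eq_abs]
      have hs0 : 0 < s := lt_trans hr0 hs.1
      rcases le_or_gt (|deriv v s|) 1 with h | h
      · have h2 : 0 ≤ r ^ ((k:ℝ)-(N:ℝ)) * (s ^ ((N:ℝ)-(k:ℝ)) * |deriv v s| ^ ((k:ℝ)+1)) := by
          have := Real.rpow_nonneg hr0.le ((k:ℝ)-(N:ℝ))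
          have := Real.rpow_nonneg hs0.le ((N:ℝ)-(k:ℝ))
          have := Real.rpow_nonneg (abs_nonneg (deriv v s)) ((k:ℝ)+1)
          positivity
        linarith
      · have h1 : |deriv v s| ≤ |deriv v s| ^ ((k:ℝ)+1) := by
          nth_rewrite 1 [← Real.rpow_one (|deriv v s|)]
          exact Real.rpow_le_rpow_of_exponent_le h.le (by linarith)
        have h2 : r ^ ((N:ℝ)-(k:ℝ)) ≤ s ^ ((N:ℝ)-(k:ℝ)) :=
          Real.rpow_le_rpow hr0.le hs.1.le (by linarith)
        have h3 : r ^ ((k:ℝ)-(N:ℝ)) * r ^ ((N:ℝ)-(k:ℝ)) = 1 := by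
          rw [← Real.rpow_add hr0]; simp
        have h4 : 0 ≤ |deriv v s| ^ ((k:ℝ)+1) := Real.rpow_nonneg (abs_nonneg _) _
        have h5 : 0 ≤ r ^ ((k:ℝ)-(N:ℝ)) := Real.rpow_nonneg hr0.le _
        have h6 := mul_le_mul_of_nonneg_left (mul_le_mul_of_nonneg_right h2 h4) h5
        nlinarith [h6]
  -- pointwise bound |v r| ≤ ∫_r^1 |v'|
  have hvle : ∀ r ∈ Set.Ioo (0:ℝ) 1,
      ENNReal.ofReal (|v r|) ≤ ∫⁻ s in Set.Ioo r 1, φ s := by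
    intro r hr
    have habs : IntegrableOn (fun s => |deriv v s|) (Set.Ioo r 1) volume := (hd_int r hr.1).abs
    have hnn' : 0 ≤ᵐ[volume.restrict (Set.Ioo r 1)] fun s => |deriv v s| :=
      Filter.Eventually.of_forall fun s => abs_nonneg _
    have key : ∀ b ∈ Set.Ioo r 1, |v b - v r| ≤ ∫ s in Set.Ioo r 1, |deriv v s| := by
      intro b hb
      obtain ⟨hbi, hfb⟩ := hv.ftc r hr b ⟨lt_trans hr.1 hb.1, hb.2⟩
      rw [hfb]
      refine le_trans (intervalIntegral.abs_integral_le_integral_abs hb.1.le) ?_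
      rw [intervalIntegral.integral_of_le hb.1.le]
      apply setIntegral_mono_set habs hnn'
      exact HasSubset.Subset.eventuallyLE fun x hx => ⟨hx.1, lt_of_le_of_lt hx.2 hb.2⟩
    have hlim : Filter.Tendsto (fun b => |v b - v r|) (nhdsWithin 1 (Set.Iio 1))
        (nhds (|v r|)) := by
      have h1 := (hv.lim_one.sub_const (v r)).abs
      simpa using h1
    have hineq : |v r| ≤ ∫ s in Set.Ioo r 1, |deriv v s| := by
      apply le_of_tendsto hlim
      filter_upwards [Ioo_mem_nhdsLT_of_mem (⟨hr.2, le_refl (1:ℝ)⟩ : (1:ℝ) ∈ Set.Ioc r 1)]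
        with b hb
      exact key b hb
    calc ENNReal.ofReal (|v r|) ≤ ENNReal.ofReal (∫ s in Set.Ioo r 1, |deriv v s|) :=
          ENNReal.ofReal_le_ofReal hineq
    _ = ∫⁻ s in Set.Ioo r 1, φ s := ofReal_integral_eq_lintegral_ofReal habs hnn'
  -- the radial pointwise bound (critical decay)
  have hA : ∀ r ∈ Set.Ioo (0:ℝ) 1, (∫⁻ s in Set.Ioo r 1, φ s)
      ≤ ENNReal.ofReal (thm1A N k * r ^ (-(((N:ℝ)-2*(k:ℝ))/((k:ℝ)+1)))) := by
    intro r hr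
    have h1 := Thm1Aux.holder_tail k hk φ hφm ((N:ℝ)-(k:ℝ)) r hr.1
    have h2 : (∫⁻ s in Set.Ioo r 1, ENNReal.ofReal (s ^ ((N:ℝ)-(k:ℝ))) * φ s ^ ((k:ℝ)+1))
        ≤ ENNReal.ofReal (1/omegaNk N k) := by
      rw [← hE]; exact lintegral_mono_set (Set.Ioo_subset_Ioo hr.1.le le_rfl)
    have he1 : -(((N:ℝ)-(k:ℝ))/(k:ℝ)) < -1 := by
      have h : 1 < ((N:ℝ)-(k:ℝ))/(k:ℝ) := by rw [lt_div_iff₀ hK0]; linarith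
      linarith
    have h3 := Thm1Aux.tail_weight he1 hr.1 hr.2
    have hee : -(((N:ℝ)-(k:ℝ))/(k:ℝ)) + 1 = -(((N:ℝ)-2*(k:ℝ))/(k:ℝ)) := by
      field_simp; ring
    have hneg : -(-(((N:ℝ)-(k:ℝ))/(k:ℝ)) + 1) = ((N:ℝ)-2*(k:ℝ))/(k:ℝ) := by
      rw [hee]; ring
    refine le_trans h1 ?_
    have h4 := mul_le_mul' (ENNReal.rpow_le_rpow h2 (by positivity : (0:ℝ) ≤ 1/((k:ℝ)+1)))
      (ENNReal.rpow_le_rpow h3 (by positivity : (0:ℝ) ≤ (k:ℝ)/((k:ℝ)+1)))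
    refine le_trans h4 (le_of_eq ?_)
    rw [ENNReal.ofReal_rpow_of_nonneg (by positivity) (by positivity : (0:ℝ) ≤ 1/((k:ℝ)+1)),
      ENNReal.ofReal_rpow_of_nonneg (div_nonneg (Real.rpow_nonneg hr.1.le _)
        (by rw [hneg]; positivity)) (by positivity : (0:ℝ) ≤ (k:ℝ)/((k:ℝ)+1)),
      ← ENNReal.ofReal_mul (by positivity)]
    congr 1
    rw [hee, neg_neg,
      show r ^ (-(((N:ℝ)-2*(k:ℝ))/(k:ℝ))) / (((N:ℝ)-2*(k:ℝ))/(k:ℝ))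
          = r ^ (-(((N:ℝ)-2*(k:ℝ))/(k:ℝ))) * ((k:ℝ)/((N:ℝ)-2*(k:ℝ))) by
        rw [div_eq_mul_inv, inv_div],
      Real.mul_rpow (Real.rpow_nonneg hr.1.le _) (div_nonneg hK0.le hn2K.le),
      ← Real.rpow_mul hr.1.le,
      show -(((N:ℝ)-2*(k:ℝ))/(k:ℝ)) * ((k:ℝ)/((k:ℝ)+1)) = -(((N:ℝ)-2*(k:ℝ))/((k:ℝ)+1)) by
        field_simp]
    unfold thm1A
    ring
  -- the weighted Hoelder bound producing G
  set G : ℝ → ℝ≥0∞ := fun r => ∫⁻ s in Set.Ioo r 1,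
      ENNReal.ofReal (s ^ ((k:ℝ)+1/2)) * φ s ^ ((k:ℝ)+1) with hGdef
  have hGb : ∀ r ∈ Set.Ioo (0:ℝ) 1, (∫⁻ s in Set.Ioo r 1, φ s) ^ ((k:ℝ)+1)
      ≤ ENNReal.ofReal ((2*(k:ℝ)) ^ (k:ℝ) * r ^ (-(1:ℝ)/2)) * G r := by
    intro r hr
    have h1 := Thm1Aux.holder_tail k hk φ hφm ((k:ℝ)+1/2) r hr.1
    have he1 : -(((k:ℝ)+1/2)/(k:ℝ)) < -1 := by
      have h : 1 < ((k:ℝ)+1/2)/(k:ℝ) := by rw [lt_div_iff₀ hK0]; linarith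
      linarith
    have h3 := Thm1Aux.tail_weight he1 hr.1 hr.2
    have hee : -(((k:ℝ)+1/2)/(k:ℝ)) + 1 = -(1/(2*(k:ℝ))) := by field_simp; ring
    have h3' : (∫⁻ s in Set.Ioo r 1, ENNReal.ofReal (s ^ (-(((k:ℝ)+1/2)/(k:ℝ)))))
        ≤ ENNReal.ofReal (2*(k:ℝ) * r ^ (-(1/(2*(k:ℝ))))) := by
      refine le_trans h3 (le_of_eq ?_)
      congr 1
      rw [hee, neg_neg, one_div, div_inv_eq_mul]
      ring
    have h4 : (∫⁻ s in Set.Ioo r 1, φ s)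
        ≤ (G r) ^ (1/((k:ℝ)+1)) *
          (ENNReal.ofReal (2*(k:ℝ) * r ^ (-(1/(2*(k:ℝ)))))) ^ ((k:ℝ)/((k:ℝ)+1)) :=
      le_trans h1 (mul_le_mul' le_rfl (ENNReal.rpow_le_rpow h3' (by positivity)))
    have h5 := ENNReal.rpow_le_rpow h4 hp0.le
    rw [ENNReal.mul_rpow_of_nonneg _ _ hp0.le, ← ENNReal.rpow_mul, ← ENNReal.rpow_mul,
      one_div_mul_cancel (ne_of_gt hp0), ENNReal.rpow_one,
      div_mul_cancel₀ _ (ne_of_gt hp0)] at h5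
    refine le_trans h5 (le_of_eq ?_)
    rw [ENNReal.ofReal_rpow_of_nonneg
      (mul_nonneg (by positivity) (Real.rpow_nonneg hr.1.le _)) hK0.le, mul_comm]
    congr 1
    rw [Real.mul_rpow (by positivity) (Real.rpow_nonneg hr.1.le _), ← Real.rpow_mul hr.1.le,
      show -(1/(2*(k:ℝ))) * (k:ℝ) = -(1:ℝ)/2 by field_simp]
  -- the exponent-product identity
  have hβσ : (((N:ℝ)-2*(k:ℝ))/((k:ℝ)+1)) * (kstar N k - ((k:ℝ)+1)) = 2*(k:ℝ) := by
    unfold kstar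
    field_simp
    ring
  -- pointwise domination of the supercritical integrand
  have step4 : ∀ r ∈ Set.Ioo (0:ℝ) 1,
      ENNReal.ofReal (r ^ ((N:ℝ)-1) * |v r| ^ (kstar N k + r ^ α))
        ≤ ENNReal.ofReal (thm1D N k α * r ^ ((N:ℝ)-2*(k:ℝ)-3/2)) * G r := by
    intro r hr
    have hr0 : 0 < r := hr.1
    have hra : 0 < r ^ α := Real.rpow_pos_of_pos hr0 α
    have hra1 : r ^ α ≤ 1 := Real.rpow_le_one hr0.le hr.2.le hα.le
    have hσnn : 0 ≤ kstar N k - ((k:ℝ)+1) + r ^ α := by linarith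
    have hernn : 0 ≤ kstar N k + r ^ α := by linarith
    have hβ0 : 0 < ((N:ℝ)-2*(k:ℝ))/((k:ℝ)+1) := div_pos hn2K hp0
    have hreal : (thm1A N k * r ^ (-(((N:ℝ)-2*(k:ℝ))/((k:ℝ)+1)))) ^ (kstar N k - ((k:ℝ)+1) + r ^ α)
        ≤ max (thm1A N k) 1 ^ (kstar N k - ((k:ℝ)+1) + 1) *
          (r ^ (-(2*(k:ℝ))) * Real.exp ((((N:ℝ)-2*(k:ℝ))/((k:ℝ)+1)) * (1 / (Real.exp 1 * α)))) := by
      rw [Real.mul_rpow (thm1A_nonneg N k hN) (Real.rpow_nonneg hr0.le _)]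
      have hA1 : thm1A N k ^ (kstar N k - ((k:ℝ)+1) + r ^ α)
          ≤ max (thm1A N k) 1 ^ (kstar N k - ((k:ℝ)+1) + 1) := by
        refine le_trans (Real.rpow_le_rpow (thm1A_nonneg N k hN) (le_max_left (thm1A N k) (1:ℝ)) hσnn) ?_
        exact Real.rpow_le_rpow_of_exponent_le (le_max_right _ _) (by linarith)
      have hA2 : (r ^ (-(((N:ℝ)-2*(k:ℝ))/((k:ℝ)+1)))) ^ (kstar N k - ((k:ℝ)+1) + r ^ α)
          ≤ r ^ (-(2*(k:ℝ))) * Real.exp ((((N:ℝ)-2*(k:ℝ))/((k:ℝ)+1)) * (1 / (Real.exp 1 * α))) := by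
        rw [← Real.rpow_mul hr0.le]
        have hsplit : (-(((N:ℝ)-2*(k:ℝ))/((k:ℝ)+1))) * (kstar N k - ((k:ℝ)+1) + r ^ α)
            = (-(2*(k:ℝ))) + (-(((N:ℝ)-2*(k:ℝ))/((k:ℝ)+1)) * r ^ α) := by
          linear_combination (-1 : ℝ) * hβσ
        rw [hsplit, Real.rpow_add hr0]
        apply mul_le_mul_of_nonneg_left ?_ (Real.rpow_nonneg hr0.le _)
        rw [Real.rpow_def_of_pos hr0]
        apply Real.exp_le_exp.2
        have hnl := Thm1Aux.neglog_bound hα hr0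
        calc Real.log r * (-(((N:ℝ)-2*(k:ℝ))/((k:ℝ)+1)) * r ^ α)
            = (((N:ℝ)-2*(k:ℝ))/((k:ℝ)+1)) * ((-Real.log r) * r ^ α) := by ring
          _ ≤ (((N:ℝ)-2*(k:ℝ))/((k:ℝ)+1)) * (1 / (Real.exp 1 * α)) :=
              mul_le_mul_of_nonneg_left hnl hβ0.le
      have hApos : 0 ≤ (r ^ (-(((N:ℝ)-2*(k:ℝ))/((k:ℝ)+1)))) ^ (kstar N k - ((k:ℝ)+1) + r ^ α) :=
        Real.rpow_nonneg (Real.rpow_nonneg hr0.le _) _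
      have hmax : (0:ℝ) ≤ max (thm1A N k) 1 ^ (kstar N k - ((k:ℝ)+1) + 1) :=
        Real.rpow_nonneg (le_trans zero_le_one (le_max_right _ _)) _
      exact mul_le_mul hA1 hA2 hApos hmax
    calc ENNReal.ofReal (r ^ ((N:ℝ)-1) * |v r| ^ (kstar N k + r ^ α))
        = ENNReal.ofReal (r ^ ((N:ℝ)-1)) * ENNReal.ofReal (|v r|) ^ (kstar N k + r ^ α) := by
          rw [ENNReal.ofReal_mul (Real.rpow_nonneg hr0.le _),
            ENNReal.ofReal_rpow_of_nonneg (abs_nonneg _) hernn]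
      _ ≤ ENNReal.ofReal (r ^ ((N:ℝ)-1)) * (∫⁻ s in Set.Ioo r 1, φ s) ^ (kstar N k + r ^ α) :=
          mul_le_mul_right (ENNReal.rpow_le_rpow (hvle r hr) hernn) _
      _ = ENNReal.ofReal (r ^ ((N:ℝ)-1)) * ((∫⁻ s in Set.Ioo r 1, φ s) ^ ((k:ℝ)+1) *
            (∫⁻ s in Set.Ioo r 1, φ s) ^ (kstar N k - ((k:ℝ)+1) + r ^ α)) := by
          rw [← ENNReal.rpow_add_of_nonneg _ _ hp0.le hσnn]
          congr 2
          ring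
      _ ≤ ENNReal.ofReal (r ^ ((N:ℝ)-1)) * ((ENNReal.ofReal ((2*(k:ℝ)) ^ (k:ℝ) * r ^ (-(1:ℝ)/2)) * G r) *
            (ENNReal.ofReal (thm1A N k * r ^ (-(((N:ℝ)-2*(k:ℝ))/((k:ℝ)+1))))) ^ (kstar N k - ((k:ℝ)+1) + r ^ α)) :=
          mul_le_mul_right (mul_le_mul' (hGb r hr) (ENNReal.rpow_le_rpow (hA r hr) hσnn)) _
      _ = ENNReal.ofReal (r ^ ((N:ℝ)-1) * ((2*(k:ℝ)) ^ (k:ℝ) * r ^ (-(1:ℝ)/2)) *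
            ((thm1A N k * r ^ (-(((N:ℝ)-2*(k:ℝ))/((k:ℝ)+1)))) ^ (kstar N k - ((k:ℝ)+1) + r ^ α))) * G r := by
          rw [ENNReal.ofReal_rpow_of_nonneg
            (mul_nonneg (thm1A_nonneg N k hN) (Real.rpow_nonneg hr0.le _)) hσnn,
            ENNReal.ofReal_mul (by positivity : (0:ℝ) ≤ r ^ ((N:ℝ)-1) * ((2*(k:ℝ)) ^ (k:ℝ) * r ^ (-(1:ℝ)/2))),
            ENNReal.ofReal_mul (by positivity : (0:ℝ) ≤ r ^ ((N:ℝ)-1))]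
          ring
      _ ≤ ENNReal.ofReal (thm1D N k α * r ^ ((N:ℝ)-2*(k:ℝ)-3/2)) * G r := by
          refine mul_le_mul_left (ENNReal.ofReal_le_ofReal ?_) _
          refine le_trans (mul_le_mul_of_nonneg_left hreal (by positivity)) (le_of_eq ?_)
          have hcol : r ^ ((N:ℝ)-1) * r ^ (-(1:ℝ)/2) * r ^ (-(2*(k:ℝ)))
              = r ^ ((N:ℝ)-2*(k:ℝ)-3/2) := by
            rw [← Real.rpow_add hr0, ← Real.rpow_add hr0]
            congr 1
            ring
          unfold thm1D
          rw [← hcol]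
          ring
  -- Tonelli computation
  set W : ℝ → ℝ≥0∞ := fun s => ENNReal.ofReal (s ^ ((k:ℝ)+1/2)) * φ s ^ ((k:ℝ)+1) with hWdef
  have hWm : Measurable W := (measurable_id.pow_const _).ennreal_ofReal.mul (hφm.pow_const _)
  have hWne : ∀ s, W s ≠ ⊤ := fun s => ENNReal.mul_ne_top ENNReal.ofReal_ne_top
    (ENNReal.rpow_ne_top_of_nonneg hp0.le ENNReal.ofReal_ne_top)
  set U : ℝ → ℝ → ℝ≥0∞ := fun r s =>
    if r < s then ENNReal.ofReal (r ^ ((N:ℝ)-2*(k:ℝ)-3/2)) * W s else 0 with hUdef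
  have hUm : Measurable (Function.uncurry U) := by
    have : Function.uncurry U = fun q : ℝ × ℝ =>
        if q.1 < q.2 then ENNReal.ofReal (q.1 ^ ((N:ℝ)-2*(k:ℝ)-3/2)) * W q.2 else 0 := rfl
    rw [this]
    exact Measurable.ite (measurableSet_lt measurable_fst measurable_snd)
      ((measurable_fst.pow_const _).ennreal_ofReal.mul (hWm.comp measurable_snd))
      measurable_const
  have hT : ∫⁻ r in Set.Ioo (0:ℝ) 1, ENNReal.ofReal (r ^ ((N:ℝ)-2*(k:ℝ)-3/2)) * G r
      = ENNReal.ofReal (1/((N:ℝ)-2*(k:ℝ)-1/2)) * ENNReal.ofReal (1/omegaNk N k) := by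
    have h1 : ∫⁻ r in Set.Ioo (0:ℝ) 1, ENNReal.ofReal (r ^ ((N:ℝ)-2*(k:ℝ)-3/2)) * G r
        = ∫⁻ r in Set.Ioo (0:ℝ) 1, ∫⁻ s in Set.Ioo (0:ℝ) 1, U r s := by
      apply lintegral_congr_ae
      filter_upwards [ae_restrict_mem measurableSet_Ioo] with r hr
      have heq : ∀ s : ℝ, U r s
          = ENNReal.ofReal (r ^ ((N:ℝ)-2*(k:ℝ)-3/2)) * (Set.Ioi r).indicator W s := by
        intro s
        rw [Set.indicator_apply]
        by_cases hc : r < s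
        · simp [hUdef, hc, Set.mem_Ioi]
        · simp [hUdef, hc, Set.mem_Ioi]
      simp_rw [heq]
      rw [lintegral_const_mul' _ _ ENNReal.ofReal_ne_top]
      congr 1
      rw [lintegral_indicator measurableSet_Ioi, Measure.restrict_restrict measurableSet_Ioi]
      have hset : Set.Ioi r ∩ Set.Ioo (0:ℝ) 1 = Set.Ioo r 1 := by
        ext z
        constructor
        · rintro ⟨h1z, h2z, h3z⟩; exact ⟨h1z, h3z⟩
        · rintro ⟨h1z, h2z⟩; exact ⟨h1z, lt_trans hr.1 h1z, h2z⟩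
      rw [hset]
    have h2 : ∫⁻ s in Set.Ioo (0:ℝ) 1, ∫⁻ r in Set.Ioo (0:ℝ) 1, U r s
        = ∫⁻ s in Set.Ioo (0:ℝ) 1,
            ENNReal.ofReal (s ^ ((N:ℝ)-2*(k:ℝ)-1/2) / ((N:ℝ)-2*(k:ℝ)-1/2)) * W s := by
      apply lintegral_congr_ae
      filter_upwards [ae_restrict_mem measurableSet_Ioo] with s hs
      have heq : ∀ r : ℝ, U r s
          = (Set.Iio s).indicator (fun r => ENNReal.ofReal (r ^ ((N:ℝ)-2*(k:ℝ)-3/2))) r * W s := by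
        intro r
        rw [Set.indicator_apply]
        by_cases hc : r < s
        · simp [hUdef, hc, Set.mem_Iio]
        · simp [hUdef, hc, Set.mem_Iio]
      simp_rw [heq]
      rw [lintegral_mul_const' _ _ (hWne s)]
      congr 1
      rw [lintegral_indicator measurableSet_Iio, Measure.restrict_restrict measurableSet_Iio]
      have hset : Set.Iio s ∩ Set.Ioo (0:ℝ) 1 = Set.Ioo 0 s := by
        ext z
        constructor
        · rintro ⟨h1z, h2z, h3z⟩; exact ⟨h2z, h1z⟩
        · rintro ⟨h1z, h2z⟩; exact ⟨h2z, h1z, lt_trans h2z hs.2⟩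
      rw [hset, Thm1Aux.head_weight (by linarith : (-1:ℝ) < (N:ℝ)-2*(k:ℝ)-3/2) hs.1,
        show ((N:ℝ)-2*(k:ℝ)-3/2) + 1 = (N:ℝ)-2*(k:ℝ)-1/2 by ring]
    have h3 : ∫⁻ s in Set.Ioo (0:ℝ) 1,
          ENNReal.ofReal (s ^ ((N:ℝ)-2*(k:ℝ)-1/2) / ((N:ℝ)-2*(k:ℝ)-1/2)) * W s
        = ENNReal.ofReal (1/((N:ℝ)-2*(k:ℝ)-1/2)) *
          ∫⁻ s in Set.Ioo (0:ℝ) 1, ENNReal.ofReal (s ^ ((N:ℝ)-(k:ℝ))) * φ s ^ ((k:ℝ)+1) := by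
      rw [← lintegral_const_mul' _ _ ENNReal.ofReal_ne_top]
      apply lintegral_congr_ae
      filter_upwards [ae_restrict_mem measurableSet_Ioo] with s hs
      have hc32 : (0:ℝ) < (N:ℝ)-2*(k:ℝ)-1/2 := by linarith
      have hsplit : ENNReal.ofReal (s ^ ((N:ℝ)-(k:ℝ)))
          = ENNReal.ofReal (s ^ ((N:ℝ)-2*(k:ℝ)-1/2)) * ENNReal.ofReal (s ^ ((k:ℝ)+1/2)) := by
        rw [← ENNReal.ofReal_mul (Real.rpow_nonneg hs.1.le _), ← Real.rpow_add hs.1,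
          show ((N:ℝ)-2*(k:ℝ)-1/2) + ((k:ℝ)+1/2) = (N:ℝ)-(k:ℝ) by ring]
      rw [hWdef]
      simp only
      rw [show s ^ ((N:ℝ)-2*(k:ℝ)-1/2) / ((N:ℝ)-2*(k:ℝ)-1/2)
          = (1/((N:ℝ)-2*(k:ℝ)-1/2)) * s ^ ((N:ℝ)-2*(k:ℝ)-1/2) by ring]
      rw [ENNReal.ofReal_mul (le_of_lt (one_div_pos.2 hc32)), hsplit]
      ring
    rw [h1, lintegral_lintegral_swap hUm.aemeasurable, h2, h3, hE]
  -- continuity of v on (0,1)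
  have hvcont : ContinuousOn v (Set.Ioo (0:ℝ) 1) := by
    intro x hx
    have hl0 : 0 < x/2 := by linarith [hx.1]
    have hlx : x/2 < x := by linarith [hx.1]
    have hxu : x < (x+1)/2 := by linarith [hx.2]
    have hu1 : (x+1)/2 < 1 := by linarith [hx.2]
    have hder : IntegrableOn (deriv v) (Set.Icc (x/2) ((x+1)/2)) volume := by
      apply (hd_int (x/4) (by linarith)).mono_set
      intro y hy
      exact ⟨by linarith [hy.1], by linarith [hy.2]⟩
    have hprim : ContinuousOn (fun y => v (x/2) + ∫ t in Set.Ioc (x/2) y, deriv v t)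
        (Set.Icc (x/2) ((x+1)/2)) := continuousOn_const.add (intervalIntegral.continuousOn_primitive hder)
    have heq : Set.EqOn v (fun y => v (x/2) + ∫ t in Set.Ioc (x/2) y, deriv v t)
        (Set.Icc (x/2) ((x+1)/2)) := by
      intro y hy
      have hyI : y ∈ Set.Ioo (0:ℝ) 1 := ⟨by linarith [hy.1], by linarith [hy.2]⟩
      obtain ⟨hi, he⟩ := hv.ftc (x/2) ⟨hl0, by linarith⟩ y hyI
      rw [intervalIntegral.integral_of_le hy.1] at he
      simp only
      linarith [he]
    have hc := ((hprim.congr heq).continuousAt (Icc_mem_nhds hlx hxu))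
    exact hc.continuousWithinAt
  have hvm : AEMeasurable v (volume.restrict (Set.Ioo (0:ℝ) 1)) :=
    hvcont.aemeasurable measurableSet_Ioo
  -- superInt as a lower Lebesgue integral
  have hsuper : superInt N k α v = (∫⁻ r in Set.Ioo (0:ℝ) 1,
      ENNReal.ofReal (r ^ ((N:ℝ)-1) * |v r| ^ (kstar N k + r ^ α))).toReal := by
    unfold superInt
    rw [integral_eq_lintegral_of_nonneg_ae]
    · filter_upwards [ae_restrict_mem measurableSet_Ioo] with r hr
      exact mul_nonneg (Real.rpow_nonneg hr.1.le _) (Real.rpow_nonneg (abs_nonneg _) _)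
    · apply AEMeasurable.aestronglyMeasurable
      apply AEMeasurable.mul
      · exact (measurable_id.pow_const _).aemeasurable
      · exact AEMeasurable.pow (continuous_abs.measurable.comp_aemeasurable hvm)
          (measurable_const.add (measurable_id.pow_const α)).aemeasurable
  -- conclusion
  have hL : (∫⁻ r in Set.Ioo (0:ℝ) 1,
        ENNReal.ofReal (r ^ ((N:ℝ)-1) * |v r| ^ (kstar N k + r ^ α)))
      ≤ ENNReal.ofReal (thm1B N k α) := by
    calc ∫⁻ r in Set.Ioo (0:ℝ) 1, ENNReal.ofReal (r ^ ((N:ℝ)-1) * |v r| ^ (kstar N k + r ^ α))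
        ≤ ∫⁻ r in Set.Ioo (0:ℝ) 1, ENNReal.ofReal (thm1D N k α) *
            (ENNReal.ofReal (r ^ ((N:ℝ)-2*(k:ℝ)-3/2)) * G r) := by
          apply lintegral_mono_ae
          filter_upwards [ae_restrict_mem measurableSet_Ioo] with r hr
          refine le_trans (step4 r hr) (le_of_eq ?_)
          rw [ENNReal.ofReal_mul (thm1D_nonneg N k α), mul_assoc]
      _ = ENNReal.ofReal (thm1D N k α) *
          ∫⁻ r in Set.Ioo (0:ℝ) 1, ENNReal.ofReal (r ^ ((N:ℝ)-2*(k:ℝ)-3/2)) * G r :=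
            lintegral_const_mul' _ _ ENNReal.ofReal_ne_top
      _ = ENNReal.ofReal (thm1D N k α) * (ENNReal.ofReal (1/((N:ℝ)-2*(k:ℝ)-1/2)) *
            ENNReal.ofReal (1/omegaNk N k)) := by rw [hT]
      _ = ENNReal.ofReal (thm1B N k α) := by
          unfold thm1B
          rw [ENNReal.ofReal_mul (mul_nonneg (thm1D_nonneg N k α)
              (le_of_lt (one_div_pos.2 (by linarith : (0:ℝ) < (N:ℝ)-2*(k:ℝ)-1/2)))),
            ENNReal.ofReal_mul (thm1D_nonneg N k α), mul_assoc]
  rw [hsuper]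
  calc (∫⁻ r in Set.Ioo (0:ℝ) 1,
        ENNReal.ofReal (r ^ ((N:ℝ)-1) * |v r| ^ (kstar N k + r ^ α))).toReal
      ≤ (ENNReal.ofReal (thm1B N k α)).toReal :=
        ENNReal.toReal_mono ENNReal.ofReal_ne_top hL
    _ ≤ thm1B N k α := by
        have hBnn : 0 ≤ thm1B N k α := by
          unfold thm1B
          exact mul_nonneg (mul_nonneg (thm1D_nonneg N k α)
            (le_of_lt (one_div_pos.2 (by linarith : (0:ℝ) < (N:ℝ)-2*(k:ℝ)-1/2))))
            (le_of_lt (one_div_pos.2 hω))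
        rw [ENNReal.toReal_ofReal hBnn]



/-- **Theorem 1 (radial form).** For every `α > 0` the supremum
`V_{k,N,α} = sup { ∫_0^1 r^{N-1} |v|^{k*+r^α} dr : v ∈ X_1, ‖v‖_{X_1} = 1 }` is finite. -/
theorem thm1_radial (N k : ℕ) (hk : 1 ≤ k) (hN : 2 * k < N) (α : ℝ) (hα : 0 < α) :
    BddAbove ((fun v => superInt N k α v) ''
      {v : ℝ → ℝ | MemX1 N k v ∧ X1norm N k v = 1}) := by
  refine ⟨thm1B N k α, ?_⟩
  rintro x ⟨v, ⟨hv, hn⟩, rfl⟩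
  exact thm1_main_bound N k hk hN α hα v hv hn
end

section
/- (Corollary 1, radial form: continuous embedding into a variable exponent Lebesgue space.) Let α > 0. There exists a constant λ* > 0 such that for every nonzero v ∈ X_1, ω_{N−1} ∫_0^1 r^{N−1} (|v(r)|/(λ* ‖v‖_{X_1}))^{k*+r^α} dr ≤ 1. (Equivalently, the Luxemburg norm of u(x) = −v(|x|) in the variable exponent Lebesgue space L_{k*+|x|^α}(B) is at most λ* ‖v‖_{X_1}.) -/
open MeasureTheory Real Set Filter Asymptotics
open scoped ENNReal Interval

lemma holder_Ioo (k : ℕ) (hk : 1 ≤ k) (F : ℝ → ℝ≥0∞) (hF : Measurable F) (c a : ℝ) (ha : 0 < a) :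
    ∫⁻ s in Set.Ioo a 1, F s ≤
      (∫⁻ s in Set.Ioo a 1, ENNReal.ofReal (s ^ (c * ((k:ℝ)+1))) * F s ^ ((k:ℝ)+1))
          ^ (1/((k:ℝ)+1))
        * (∫⁻ s in Set.Ioo a 1, ENNReal.ofReal (s ^ (-(c * ((k:ℝ)+1)) / (k:ℝ))))
          ^ ((k:ℝ)/((k:ℝ)+1)) := by
  have hk1 : (1:ℝ) ≤ (k:ℝ) := by exact_mod_cast hk
  have hkpos : (0:ℝ) < (k:ℝ) := by linarith
  set p : ℝ := (k:ℝ) + 1 with hpdef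
  set q : ℝ := ((k:ℝ) + 1) / (k:ℝ) with hqdef
  have hppos : 0 < p := by simp only [hpdef]; linarith
  have hpq : p.HolderConjugate q := by
    rw [Real.holderConjugate_iff]
    constructor
    · simp only [hpdef]; linarith
    · rw [hpdef, hqdef, inv_div]
      rw [inv_eq_one_div, div_add_div _ _ (by linarith : (k:ℝ)+1 ≠ 0) (by linarith : (k:ℝ)+1 ≠ 0), div_eq_one_iff_eq (by positivity)]
      ring
  set f : ℝ → ℝ≥0∞ := fun s => ENNReal.ofReal (s ^ c) * F s with hfdef
  set g : ℝ → ℝ≥0∞ := fun s => ENNReal.ofReal (s ^ (-c)) with hgdef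
  have hf : Measurable f := by fun_prop
  have hg : Measurable g := by fun_prop
  have H := ENNReal.lintegral_mul_le_Lp_mul_Lq (volume.restrict (Set.Ioo a 1)) hpq
    hf.aemeasurable hg.aemeasurable
  have h1 : ∫⁻ s in Set.Ioo a 1, F s = ∫⁻ s in Set.Ioo a 1, (f * g) s := by
    refine lintegral_congr_ae ?_
    filter_upwards [ae_restrict_mem measurableSet_Ioo] with s hs
    have hs0 : 0 < s := lt_trans ha hs.1
    simp only [Pi.mul_apply, hfdef, hgdef]
    rw [mul_comm (ENNReal.ofReal (s ^ c)) (F s), mul_assoc, ← ENNReal.ofReal_mul (by positivity),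
      ← Real.rpow_add hs0]
    simp
  have h2 : ∫⁻ s in Set.Ioo a 1, f s ^ p =
      ∫⁻ s in Set.Ioo a 1, ENNReal.ofReal (s ^ (c * p)) * F s ^ p := by
    refine lintegral_congr_ae ?_
    filter_upwards [ae_restrict_mem measurableSet_Ioo] with s hs
    have hs0 : 0 < s := lt_trans ha hs.1
    simp only [hfdef]
    rw [ENNReal.mul_rpow_of_nonneg _ _ hppos.le,
      ENNReal.ofReal_rpow_of_nonneg (by positivity) hppos.le, ← Real.rpow_mul hs0.le]
  have h3 : ∫⁻ s in Set.Ioo a 1, g s ^ q =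
      ∫⁻ s in Set.Ioo a 1, ENNReal.ofReal (s ^ (-(c * p) / (k:ℝ))) := by
    refine lintegral_congr_ae ?_
    filter_upwards [ae_restrict_mem measurableSet_Ioo] with s hs
    have hs0 : 0 < s := lt_trans ha hs.1
    simp only [hgdef]
    rw [ENNReal.ofReal_rpow_of_nonneg (by positivity) hpq.symm.nonneg, ← Real.rpow_mul hs0.le]
    congr 2
    simp only [hqdef, hpdef]
    field_simp
  have h4 : 1/q = (k:ℝ)/((k:ℝ)+1) := by
    simp only [hqdef]; field_simp
  rw [h1]
  calc ∫⁻ s in Set.Ioo a 1, (f * g) s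
      ≤ (∫⁻ s in Set.Ioo a 1, f s ^ p) ^ (1/p) * (∫⁻ s in Set.Ioo a 1, g s ^ q) ^ (1/q) := H
    _ = _ := by rw [h2, h3, h4]
lemma iint_rpow {a b : ℝ} {r : ℝ} (h : -1 < r ∨ r ≠ -1 ∧ (0 : ℝ) ∉ [[a, b]]) :
    ∫ x in a..b, x ^ r = (b ^ (r + 1) - a ^ (r + 1)) / (r + 1) := integral_rpow h

lemma lint_rpow_upper {β a : ℝ} (hβ : β < -1) (ha : 0 < a) (ha1 : a ≤ 1) :
    ∫⁻ s in Set.Ioo a 1, ENNReal.ofReal (s ^ β) ≤ ENNReal.ofReal (a ^ (β+1) / (-(β+1))) := by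
  have h0 : (0:ℝ) ∉ Set.uIcc a 1 := by
    rw [Set.uIcc_of_le ha1]
    exact fun h => absurd h.1 (by linarith)
  have hInt : IntervalIntegrable (fun s : ℝ => s ^ β) volume a 1 :=
    intervalIntegral.intervalIntegrable_rpow (Or.inr h0)
  have hIoo : IntegrableOn (fun s : ℝ => s ^ β) (Set.Ioo a 1) :=
    ((intervalIntegrable_iff_integrableOn_Ioc_of_le ha1).mp hInt).mono_set Set.Ioo_subset_Ioc_self
  rw [← MeasureTheory.ofReal_integral_eq_lintegral_ofReal hIoo ?nn]
  case nn =>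
    filter_upwards [ae_restrict_mem measurableSet_Ioo] with s hs
    have hs0 : 0 < s := lt_trans ha hs.1
    positivity
  apply ENNReal.ofReal_le_ofReal
  have heval : ∫ s in Set.Ioo a 1, s ^ β = (1 - a ^ (β+1)) / (β+1) := by
    rw [← integral_Ioc_eq_integral_Ioo, ← intervalIntegral.integral_of_le ha1,
      iint_rpow (Or.inr ⟨by linarith, h0⟩), Real.one_rpow]
  rw [heval]
  have hb : 0 < -(β+1) := by linarith
  have h2 : (1 - a ^ (β+1)) / (β+1) = (a ^ (β+1) - 1) / (-(β+1)) := by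
    rw [div_neg, ← neg_div, neg_sub]
  rw [h2]
  gcongr
  linarith

lemma lint_rpow_lower {β s : ℝ} (hβ : 0 < β) (hs0 : 0 < s) :
    ∫⁻ r in Set.Ioo 0 s, ENNReal.ofReal (r ^ (β - 1)) ≤ ENNReal.ofReal (s ^ β / β) := by
  have hInt : IntervalIntegrable (fun r : ℝ => r ^ (β-1)) volume 0 s :=
    intervalIntegral.intervalIntegrable_rpow' (by linarith)
  have hIoo : IntegrableOn (fun r : ℝ => r ^ (β-1)) (Set.Ioo 0 s) :=
    ((intervalIntegrable_iff_integrableOn_Ioc_of_le hs0.le).mp hInt).mono_set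
      Set.Ioo_subset_Ioc_self
  rw [← MeasureTheory.ofReal_integral_eq_lintegral_ofReal hIoo ?nn]
  case nn =>
    filter_upwards [ae_restrict_mem measurableSet_Ioo] with r hr
    have : 0 < r := hr.1
    positivity
  apply ENNReal.ofReal_le_ofReal
  have heval : ∫ r in Set.Ioo 0 s, r ^ (β-1) = (s ^ β - 0 ^ β) / β := by
    rw [← integral_Ioc_eq_integral_Ioo, ← intervalIntegral.integral_of_le hs0.le,
      iint_rpow (Or.inl (by linarith))]
    norm_num
  rw [heval, Real.zero_rpow hβ.ne']
  norm_num

lemma fubini_tri (g h : ℝ → ℝ≥0∞) (hg : Measurable g) (hh : Measurable h) :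
    ∫⁻ r in Set.Ioo (0:ℝ) 1, h r * ∫⁻ s in Set.Ioo r 1, g s
      = ∫⁻ s in Set.Ioo (0:ℝ) 1, g s * ∫⁻ r in Set.Ioo (0:ℝ) s, h r := by
  have key : ∀ r ∈ Set.Ioo (0:ℝ) 1, ∫⁻ s in Set.Ioo r 1, g s
      = ∫⁻ s in Set.Ioo (0:ℝ) 1, (Set.Ioi r).indicator g s := by
    intro r hr
    rw [lintegral_indicator measurableSet_Ioi, Measure.restrict_restrict measurableSet_Ioi]
    have hset : Set.Ioi r ∩ Set.Ioo 0 1 = Set.Ioo r 1 := by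
      ext x
      simp only [Set.mem_inter_iff, Set.mem_Ioi, Set.mem_Ioo]
      exact ⟨fun hx => ⟨hx.1, hx.2.2⟩, fun hx => ⟨hx.1, lt_trans hr.1 hx.1, hx.2⟩⟩
    rw [hset]
  have key2 : ∀ s ∈ Set.Ioo (0:ℝ) 1, ∫⁻ r in Set.Ioo (0:ℝ) s, h r
      = ∫⁻ r in Set.Ioo (0:ℝ) 1, (Set.Iio s).indicator h r := by
    intro s hs
    rw [lintegral_indicator measurableSet_Iio, Measure.restrict_restrict measurableSet_Iio]
    have hset : Set.Iio s ∩ Set.Ioo 0 1 = Set.Ioo 0 s := by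
      ext x
      simp only [Set.mem_inter_iff, Set.mem_Iio, Set.mem_Ioo]
      exact ⟨fun hx => ⟨hx.2.1, hx.1⟩, fun hx => ⟨hx.2, hx.1, lt_trans hx.2 hs.2⟩⟩
    rw [hset]
  calc ∫⁻ r in Set.Ioo (0:ℝ) 1, h r * ∫⁻ s in Set.Ioo r 1, g s
      = ∫⁻ r in Set.Ioo (0:ℝ) 1, ∫⁻ s in Set.Ioo (0:ℝ) 1,
            h r * (Set.Ioi r).indicator g s := by
        refine setLIntegral_congr_fun measurableSet_Ioo ?_
        intro r hr
        dsimp only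
        rw [key r hr, lintegral_const_mul _ (hg.indicator measurableSet_Ioi)]
    _ = ∫⁻ s in Set.Ioo (0:ℝ) 1, ∫⁻ r in Set.Ioo (0:ℝ) 1,
            h r * (Set.Ioi r).indicator g s := by
        apply lintegral_lintegral_swap
        apply Measurable.aemeasurable
        have : (Function.uncurry fun r s => h r * (Set.Ioi r).indicator g s)
            = fun p : ℝ × ℝ => h p.1 * ({q : ℝ × ℝ | q.1 < q.2}.indicator (fun q => g q.2) p) := by
          ext p
          simp only [Function.uncurry, Set.indicator, Set.mem_Ioi, Set.mem_setOf_eq]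
        rw [this]
        exact (hh.comp measurable_fst).mul
          ((hg.comp measurable_snd).indicator (measurableSet_lt measurable_fst measurable_snd))
    _ = ∫⁻ s in Set.Ioo (0:ℝ) 1, g s * ∫⁻ r in Set.Ioo (0:ℝ) s, h r := by
        refine setLIntegral_congr_fun measurableSet_Ioo ?_
        intro s hs
        dsimp only
        rw [key2 s hs, ← lintegral_const_mul _ (hh.indicator measurableSet_Iio)]
        congr 1
        ext r
        simp only [Set.indicator, Set.mem_Ioi, Set.mem_Iio]
        by_cases h' : r < s <;> simp [h', mul_comm]

lemma v_eq_neg_integral {v : ℝ → ℝ}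
    (hftc : ∀ a ∈ Set.Ioo (0:ℝ) 1, ∀ b ∈ Set.Ioo (0:ℝ) 1,
      IntervalIntegrable (deriv v) volume a b ∧ v b - v a = ∫ s in a..b, deriv v s)
    (hlim : Tendsto v (nhdsWithin 1 (Set.Iio 1)) (nhds 0))
    {a : ℝ} (ha : a ∈ Set.Ioo (0:ℝ) 1) (hint : IntegrableOn (deriv v) (Set.Ioo a 1)) :
    v a = -∫ s in Set.Ioo a 1, deriv v s := by
  have hIcc : IntegrableOn (deriv v) (Set.Icc a 1) := by
    rw [integrableOn_Icc_iff_integrableOn_Ioo]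
    exact hint
  have hcont : ContinuousOn (fun b => ∫ s in a..b, deriv v s) (Set.Icc a 1) := by
    have h := intervalIntegral.continuousOn_primitive_interval
      (f := deriv v) (μ := volume) (a := a) (b := 1) (by rwa [Set.uIcc_of_le ha.2.le])
    rwa [Set.uIcc_of_le ha.2.le] at h
  have h1 : Tendsto (fun b => ∫ s in a..b, deriv v s) (nhdsWithin 1 (Set.Iio 1))
      (nhds (∫ s in a..(1:ℝ), deriv v s)) := by
    have hc := hcont 1 ⟨ha.2.le, le_refl 1⟩
    rw [← nhdsWithin_Ioo_eq_nhdsLT ha.2]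
    exact hc.tendsto.mono_left (nhdsWithin_mono _ Set.Ioo_subset_Icc_self)
  have h2 : Tendsto (fun b => v a + ∫ s in a..b, deriv v s) (nhdsWithin 1 (Set.Iio 1))
      (nhds (v a + ∫ s in a..(1:ℝ), deriv v s)) := tendsto_const_nhds.add h1
  have h3 : (fun b => v a + ∫ s in a..b, deriv v s) =ᶠ[nhdsWithin 1 (Set.Iio 1)] v := by
    have hmem : Set.Ioo a 1 ∈ nhdsWithin 1 (Set.Iio 1) := by
      rw [← nhdsWithin_Ioo_eq_nhdsLT ha.2]
      exact self_mem_nhdsWithin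
    filter_upwards [hmem] with b hb
    have hb' : b ∈ Set.Ioo (0:ℝ) 1 := ⟨lt_trans ha.1 hb.1, hb.2⟩
    have := (hftc a ha b hb').2
    linarith
  have h4 : Tendsto v (nhdsWithin 1 (Set.Iio 1)) (nhds (v a + ∫ s in a..(1:ℝ), deriv v s)) :=
    h2.congr' h3
  have h5 : v a + ∫ s in a..(1:ℝ), deriv v s = 0 := tendsto_nhds_unique h4 hlim
  have h6 : ∫ s in a..(1:ℝ), deriv v s = ∫ s in Set.Ioo a 1, deriv v s := by
    rw [intervalIntegral.integral_of_le ha.2.le, integral_Ioc_eq_integral_Ioo]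
  linarith
set_option maxHeartbeats 1000000 in
/-- **Corollary 1 (radial form).** There is `λ* > 0` such that for every nonzero
`v ∈ X_1`, `ω_{N-1} ∫_0^1 r^{N-1} (|v(r)|/(λ* ‖v‖_{X_1}))^{k*+r^α} dr ≤ 1`;
i.e. the Luxemburg norm of `u(x) = -v(|x|)` in `L_{k*+|x|^α}(B)` is `≤ λ* ‖v‖_{X_1}`. -/
theorem coro1_radial (N k : ℕ) (hk : 1 ≤ k) (hN : 2 * k < N) (α : ℝ) (hα : 0 < α) :
    ∃ lam : ℝ, 0 < lam ∧ ∀ v : ℝ → ℝ, MemX1 N k v → v ≠ 0 →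
      omegaSphere N *
        ∫ r in Set.Ioo (0:ℝ) 1,
          r ^ ((N : ℝ) - 1) *
            (|v r| / (lam * X1norm N k v)) ^ (kstar N k + r ^ α) ≤ 1 := by
  -- basic positivity facts
  have hk1 : (1:ℝ) ≤ (k:ℝ) := by exact_mod_cast hk
  have hkpos : (0:ℝ) < (k:ℝ) := by linarith
  have hNk : 2*(k:ℝ) < (N:ℝ) := by exact_mod_cast hN
  have hnk : (0:ℝ) < (N:ℝ) - 2*(k:ℝ) := by linarith
  have hNpos : (0:ℝ) < (N:ℝ) := by linarith
  have hp0 : (0:ℝ) < (k:ℝ)+1 := by linarith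
  have hpne : ((k:ℝ)+1) ≠ 0 := ne_of_gt hp0
  have hkstar_eq : kstar N k = ((N:ℝ)*((k:ℝ)+1))/((N:ℝ)-2*(k:ℝ)) := rfl
  have hkstar_pos : 0 < kstar N k := by
    rw [hkstar_eq]; exact div_pos (mul_pos hNpos hp0) hnk
  have hkstar_sub : kstar N k - ((k:ℝ)+1) = 2*(k:ℝ)*((k:ℝ)+1)/((N:ℝ)-2*(k:ℝ)) := by
    rw [hkstar_eq, div_sub' hnk.ne']; congr 1; ring
  have hkstar_ge : ((k:ℝ)+1) ≤ kstar N k := by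
    have h1 : 0 ≤ 2*(k:ℝ)*((k:ℝ)+1)/((N:ℝ)-2*(k:ℝ)) := div_nonneg (by positivity) hnk.le
    linarith
  -- constants
  set θv : ℝ := ((N:ℝ)-2*(k:ℝ))/((k:ℝ)+1) with hθdef
  have hθpos : 0 < θv := div_pos hnk hp0
  set D0 : ℝ := ((k:ℝ)/((N:ℝ)-2*(k:ℝ))) ^ ((k:ℝ)/((k:ℝ)+1)) with hD0def
  have hD0pos : 0 < D0 := Real.rpow_pos_of_pos (div_pos hkpos hnk) _
  set C1K : ℝ := (2*(k:ℝ)/((N:ℝ)-2*(k:ℝ))) ^ (k:ℝ) with hC1Kdef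
  have hC1Kpos : 0 < C1K := Real.rpow_pos_of_pos (div_pos (by linarith) hnk) _
  set CHv : ℝ := C1K / (((N:ℝ)-2*(k:ℝ))/2) with hCHdef
  have hCHpos : 0 < CHv := div_pos hC1Kpos (by linarith)
  set A : ℝ := Real.exp (θv/α) with hAdef
  have hApos : 0 < A := Real.exp_pos _
  have hA1 : 1 ≤ A := by
    rw [hAdef, show (1:ℝ) = Real.exp 0 by simp]
    exact Real.exp_le_exp.2 (div_nonneg hθpos.le hα.le)
  have hωpos : 0 < omegaNk N k := by
    have hωS : 0 < omegaSphere N := by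
      rw [omegaSphere]
      exact div_pos (by positivity) (Real.Gamma_pos_of_pos (div_pos hNpos two_pos))
    rw [omegaNk]
    have hkN : k ≤ N := by omega
    exact div_pos (mul_pos hωS (by exact_mod_cast Nat.choose_pos hkN)) hNpos
  have hωS : 0 < omegaSphere N := by
    rw [omegaSphere]
    exact div_pos (by positivity) (Real.Gamma_pos_of_pos (div_pos hNpos two_pos))
  set lam : ℝ := max (D0 / (omegaNk N k) ^ (1/((k:ℝ)+1)))
      ((omegaSphere N * A * CHv / omegaNk N k) ^ (1/((k:ℝ)+1))) + 1 with hlamdef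
  have hlam_ge2 : (omegaSphere N * A * CHv / omegaNk N k) ^ (1/((k:ℝ)+1)) ≤ lam := by
    rw [hlamdef]
    have := le_max_right (D0 / (omegaNk N k) ^ (1/((k:ℝ)+1)))
      ((omegaSphere N * A * CHv / omegaNk N k) ^ (1/((k:ℝ)+1)))
    linarith
  have hlam_ge1 : D0 / (omegaNk N k) ^ (1/((k:ℝ)+1)) ≤ lam := by
    rw [hlamdef]
    have := le_max_left (D0 / (omegaNk N k) ^ (1/((k:ℝ)+1)))
      ((omegaSphere N * A * CHv / omegaNk N k) ^ (1/((k:ℝ)+1)))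
    linarith
  have hlam0 : 0 < lam :=
    lt_of_lt_of_le (Real.rpow_pos_of_pos (div_pos (mul_pos (mul_pos hωS hApos) hCHpos) hωpos) _)
      hlam_ge2
  refine ⟨lam, hlam0, ?_⟩
  intro v hv _
  -- measurability of the derivative
  have hfm : Measurable (deriv v) := measurable_deriv v
  have hFm : Measurable (fun s => ENNReal.ofReal |deriv v s|) := hfm.abs.ennreal_ofReal
  set E : ℝ := ∫ r in Set.Ioo (0:ℝ) 1, r ^ ((N:ℝ)-(k:ℝ)) * |deriv v r| ^ ((k:ℝ)+1) with hEdef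
  have hE0 : 0 ≤ E := by
    rw [hEdef]
    apply setIntegral_nonneg measurableSet_Ioo
    intro x hx
    exact mul_nonneg (Real.rpow_nonneg hx.1.le _) (Real.rpow_nonneg (abs_nonneg _) _)
  have hXnorm : X1norm N k v = (omegaNk N k * E) ^ (1/((k:ℝ)+1)) := by rw [hEdef]; rfl
  by_cases hE : E = 0
  · -- degenerate case : the norm vanishes, so does the integrand
    have hX0 : X1norm N k v = 0 := by
      rw [hXnorm, hE, mul_zero,
        Real.zero_rpow (by positivity : (0:ℝ) < 1/((k:ℝ)+1)).ne']
    have heq : Set.EqOn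
        (fun r : ℝ => r ^ ((N:ℝ)-1) * (|v r| / (lam * X1norm N k v)) ^ (kstar N k + r ^ α))
        (fun _ => (0:ℝ)) (Set.Ioo (0:ℝ) 1) := by
      intro r hr
      have hne : kstar N k + r ^ α ≠ 0 :=
        ne_of_gt (add_pos hkstar_pos (Real.rpow_pos_of_pos hr.1 α))
      simp only
      rw [hX0, mul_zero, div_zero, Real.zero_rpow hne, mul_zero]
    rw [setIntegral_congr_fun measurableSet_Ioo heq]
    simp
  · have hEpos : 0 < E := lt_of_le_of_ne hE0 (Ne.symm hE)
    set M : ℝ := X1norm N k v with hMdef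
    have hMpos : 0 < M := by
      rw [hXnorm]
      exact Real.rpow_pos_of_pos (mul_pos hωpos hEpos) _
    have hlamM : 0 < lam * M := mul_pos hlam0 hMpos
    -- the fundamental lintegral identity for E
    have hEE : ∫⁻ r in Set.Ioo (0:ℝ) 1,
        ENNReal.ofReal (r ^ ((N:ℝ)-(k:ℝ))) * (ENNReal.ofReal |deriv v r|) ^ ((k:ℝ)+1)
        = ENNReal.ofReal E := by
      rw [hEdef, MeasureTheory.ofReal_integral_eq_lintegral_ofReal hv.int_deriv ?nn]
      case nn =>
        filter_upwards [ae_restrict_mem measurableSet_Ioo] with r hr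
        exact mul_nonneg (Real.rpow_nonneg hr.1.le _) (Real.rpow_nonneg (abs_nonneg _) _)
      refine lintegral_congr_ae ?_
      filter_upwards [ae_restrict_mem measurableSet_Ioo] with r hr
      rw [ENNReal.ofReal_mul (Real.rpow_nonneg hr.1.le _),
        ENNReal.ofReal_rpow_of_nonneg (abs_nonneg _) hp0.le]
    -- pointwise bound for |v a| : integrability of deriv, ENNReal bound and real sup bound
    have hsup : ∀ a ∈ Set.Ioo (0:ℝ) 1,
        (ENNReal.ofReal |v a| ≤ ∫⁻ s in Set.Ioo a 1, ENNReal.ofReal |deriv v s|) ∧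
        |v a| ≤ E ^ (1/((k:ℝ)+1)) * (D0 * a ^ (-θv)) := by
      intro a ha
      have ha0 : 0 < a := ha.1
      have hH := holder_Ioo k hk _ hFm (((N:ℝ)-(k:ℝ))/((k:ℝ)+1)) a ha0
      have e1 : (((N:ℝ)-(k:ℝ))/((k:ℝ)+1)) * ((k:ℝ)+1) = (N:ℝ)-(k:ℝ) := by field_simp
      rw [e1] at hH
      have hmono : (∫⁻ s in Set.Ioo a 1,
          ENNReal.ofReal (s ^ ((N:ℝ)-(k:ℝ))) * (ENNReal.ofReal |deriv v s|) ^ ((k:ℝ)+1))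
          ≤ ENNReal.ofReal E := by
        rw [← hEE]
        exact lintegral_mono_set (fun x hx => ⟨lt_trans ha0 hx.1, hx.2⟩)
      have hbet : -((N:ℝ)-(k:ℝ)) / (k:ℝ) < -1 := by
        rw [div_lt_iff₀ hkpos]; linarith
      have hup := lint_rpow_upper hbet ha0 ha.2.le
      have hbb1 : -((N:ℝ)-(k:ℝ)) / (k:ℝ) + 1 = -(((N:ℝ)-2*(k:ℝ))/(k:ℝ)) := by
        field_simp; ring
      rw [hbb1, neg_neg] at hup
      have hW : (∫⁻ s in Set.Ioo a 1, ENNReal.ofReal |deriv v s|) ≤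
          ENNReal.ofReal E ^ (1/((k:ℝ)+1)) *
            ENNReal.ofReal (a ^ (-(((N:ℝ)-2*(k:ℝ))/(k:ℝ))) / (((N:ℝ)-2*(k:ℝ))/(k:ℝ)))
              ^ ((k:ℝ)/((k:ℝ)+1)) := by
        exact le_trans hH (mul_le_mul' (ENNReal.rpow_le_rpow hmono (by positivity))
          (ENNReal.rpow_le_rpow hup (by positivity)))
      have hfin : (∫⁻ s in Set.Ioo a 1, ENNReal.ofReal |deriv v s|) < ⊤ :=
        lt_of_le_of_lt hW (ENNReal.mul_lt_top
          (ENNReal.rpow_lt_top_of_nonneg (by positivity) ENNReal.ofReal_ne_top)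
          (ENNReal.rpow_lt_top_of_nonneg (by positivity) ENNReal.ofReal_ne_top))
      have hIntOn : IntegrableOn (deriv v) (Set.Ioo a 1) := by
        refine ⟨hfm.aestronglyMeasurable, ?_⟩
        show (∫⁻ s in Set.Ioo a 1, ‖deriv v s‖ₑ) < ⊤
        simp_rw [Real.enorm_eq_ofReal_abs]
        exact hfin
      have hrep : v a = -∫ s in Set.Ioo a 1, deriv v s :=
        v_eq_neg_integral hv.ftc hv.lim_one ha hIntOn
      have habs : |v a| ≤ ∫ s in Set.Ioo a 1, |deriv v s| := by
        rw [hrep, abs_neg]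
        simpa [Real.norm_eq_abs] using
          MeasureTheory.norm_integral_le_integral_norm (μ := volume.restrict (Set.Ioo a 1)) (deriv v)
      have hofReal : ENNReal.ofReal (∫ s in Set.Ioo a 1, |deriv v s|)
          = ∫⁻ s in Set.Ioo a 1, ENNReal.ofReal |deriv v s| :=
        MeasureTheory.ofReal_integral_eq_lintegral_ofReal hIntOn.abs
          (Filter.Eventually.of_forall fun s => abs_nonneg _)
      have hVW : ENNReal.ofReal |v a| ≤ ∫⁻ s in Set.Ioo a 1, ENNReal.ofReal |deriv v s| := by
        rw [← hofReal]
        exact ENNReal.ofReal_le_ofReal habs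
      refine ⟨hVW, ?_⟩
      -- convert to a real inequality
      have hCa0 : 0 ≤ a ^ (-(((N:ℝ)-2*(k:ℝ))/(k:ℝ))) / (((N:ℝ)-2*(k:ℝ))/(k:ℝ)) :=
        div_nonneg (Real.rpow_nonneg ha0.le _) (div_nonneg hnk.le hkpos.le)
      have hconv : ENNReal.ofReal E ^ (1/((k:ℝ)+1)) *
          ENNReal.ofReal (a ^ (-(((N:ℝ)-2*(k:ℝ))/(k:ℝ))) / (((N:ℝ)-2*(k:ℝ))/(k:ℝ)))
            ^ ((k:ℝ)/((k:ℝ)+1))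
          = ENNReal.ofReal (E ^ (1/((k:ℝ)+1)) *
              (a ^ (-(((N:ℝ)-2*(k:ℝ))/(k:ℝ))) / (((N:ℝ)-2*(k:ℝ))/(k:ℝ))) ^ ((k:ℝ)/((k:ℝ)+1))) := by
        rw [ENNReal.ofReal_rpow_of_nonneg hE0 (by positivity),
          ENNReal.ofReal_rpow_of_nonneg hCa0 (by positivity),
          ← ENNReal.ofReal_mul (by positivity)]
      have hreal : |v a| ≤ E ^ (1/((k:ℝ)+1)) *
          (a ^ (-(((N:ℝ)-2*(k:ℝ))/(k:ℝ))) / (((N:ℝ)-2*(k:ℝ))/(k:ℝ))) ^ ((k:ℝ)/((k:ℝ)+1)) := by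
        have h1 : ENNReal.ofReal |v a| ≤ ENNReal.ofReal (E ^ (1/((k:ℝ)+1)) *
            (a ^ (-(((N:ℝ)-2*(k:ℝ))/(k:ℝ))) / (((N:ℝ)-2*(k:ℝ))/(k:ℝ))) ^ ((k:ℝ)/((k:ℝ)+1))) := by
          rw [← hconv]
          exact le_trans hVW hW
        exact (ENNReal.ofReal_le_ofReal_iff (by positivity)).1 h1
      refine le_trans hreal (le_of_eq ?_)
      congr 1
      rw [Real.div_rpow (Real.rpow_nonneg ha0.le _) (div_nonneg hnk.le hkpos.le),
        ← Real.rpow_mul ha0.le, div_eq_mul_inv,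
        ← Real.inv_rpow (div_nonneg hnk.le hkpos.le), inv_div]
      rw [hD0def, hθdef]
      have hex : -(((N:ℝ)-2*(k:ℝ))/(k:ℝ)) * ((k:ℝ)/((k:ℝ)+1)) = -(((N:ℝ)-2*(k:ℝ))/((k:ℝ)+1)) := by
        field_simp
      rw [hex]
      ring
    -- ENNReal Hardy inequality
    have hHardyE : (∫⁻ r in Set.Ioo (0:ℝ) 1,
        ENNReal.ofReal (r ^ ((N:ℝ)-2*(k:ℝ)-1)) * (ENNReal.ofReal |v r|) ^ ((k:ℝ)+1))
        ≤ ENNReal.ofReal (CHv * E) := by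
      have hgm : Measurable (fun s => ENNReal.ofReal (s ^ ((N:ℝ)/2)) *
          (ENNReal.ofReal |deriv v s|) ^ ((k:ℝ)+1)) := by fun_prop
      have hpt : ∀ r ∈ Set.Ioo (0:ℝ) 1,
          ENNReal.ofReal (r ^ ((N:ℝ)-2*(k:ℝ)-1)) * (ENNReal.ofReal |v r|) ^ ((k:ℝ)+1)
            ≤ ENNReal.ofReal (C1K * r ^ (((N:ℝ)-2*(k:ℝ))/2 - 1)) *
              ∫⁻ s in Set.Ioo r 1, ENNReal.ofReal (s ^ ((N:ℝ)/2)) *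
                (ENNReal.ofReal |deriv v s|) ^ ((k:ℝ)+1) := by
        intro r hr
        have hr0 : 0 < r := hr.1
        have hVW := (hsup r hr).1
        have hH2 := holder_Ioo k hk _ hFm ((N:ℝ)/(2*((k:ℝ)+1))) r hr0
        have e2 : ((N:ℝ)/(2*((k:ℝ)+1))) * ((k:ℝ)+1) = (N:ℝ)/2 := by
          field_simp
        rw [e2] at hH2
        have hbet2 : -((N:ℝ)/2) / (k:ℝ) < -1 := by
          rw [div_lt_iff₀ hkpos]; linarith
        have hup2 := lint_rpow_upper hbet2 hr0 hr.2.le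
        have hbb2 : -((N:ℝ)/2) / (k:ℝ) + 1 = -(((N:ℝ)-2*(k:ℝ))/(2*(k:ℝ))) := by
          field_simp
          ring
        rw [hbb2, neg_neg] at hup2
        have hWr := le_trans hH2 (mul_le_mul' le_rfl (ENNReal.rpow_le_rpow hup2 (by positivity)))
        have c1e : (1/((k:ℝ)+1)) * ((k:ℝ)+1) = 1 := by field_simp
        have c2e : ((k:ℝ)/((k:ℝ)+1)) * ((k:ℝ)+1) = (k:ℝ) := by field_simp
        have hpow : (ENNReal.ofReal |v r|) ^ ((k:ℝ)+1) ≤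
            (∫⁻ s in Set.Ioo r 1, ENNReal.ofReal (s ^ ((N:ℝ)/2)) *
              (ENNReal.ofReal |deriv v s|) ^ ((k:ℝ)+1)) *
            (ENNReal.ofReal (r ^ (-(((N:ℝ)-2*(k:ℝ))/(2*(k:ℝ)))) / (((N:ℝ)-2*(k:ℝ))/(2*(k:ℝ)))))
              ^ (k:ℝ) := by
          calc (ENNReal.ofReal |v r|) ^ ((k:ℝ)+1)
              ≤ ((∫⁻ s in Set.Ioo r 1, ENNReal.ofReal (s ^ ((N:ℝ)/2)) *
                  (ENNReal.ofReal |deriv v s|) ^ ((k:ℝ)+1)) ^ (1/((k:ℝ)+1)) *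
                (ENNReal.ofReal (r ^ (-(((N:ℝ)-2*(k:ℝ))/(2*(k:ℝ)))) /
                  (((N:ℝ)-2*(k:ℝ))/(2*(k:ℝ))))) ^ ((k:ℝ)/((k:ℝ)+1))) ^ ((k:ℝ)+1) :=
                ENNReal.rpow_le_rpow (le_trans hVW hWr) hp0.le
            _ = _ := by
                rw [ENNReal.mul_rpow_of_nonneg _ _ hp0.le, ← ENNReal.rpow_mul,
                  ← ENNReal.rpow_mul, c1e, c2e, ENNReal.rpow_one]
        have hZ0 : 0 ≤ r ^ (-(((N:ℝ)-2*(k:ℝ))/(2*(k:ℝ)))) / (((N:ℝ)-2*(k:ℝ))/(2*(k:ℝ))) :=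
          div_nonneg (Real.rpow_nonneg hr0.le _) (by positivity)
        calc ENNReal.ofReal (r ^ ((N:ℝ)-2*(k:ℝ)-1)) * (ENNReal.ofReal |v r|) ^ ((k:ℝ)+1)
            ≤ ENNReal.ofReal (r ^ ((N:ℝ)-2*(k:ℝ)-1)) *
              ((∫⁻ s in Set.Ioo r 1, ENNReal.ofReal (s ^ ((N:ℝ)/2)) *
                (ENNReal.ofReal |deriv v s|) ^ ((k:ℝ)+1)) *
              (ENNReal.ofReal (r ^ (-(((N:ℝ)-2*(k:ℝ))/(2*(k:ℝ)))) /
                (((N:ℝ)-2*(k:ℝ))/(2*(k:ℝ))))) ^ (k:ℝ)) := mul_le_mul' le_rfl hpow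
          _ = ENNReal.ofReal (C1K * r ^ (((N:ℝ)-2*(k:ℝ))/2 - 1)) *
              ∫⁻ s in Set.Ioo r 1, ENNReal.ofReal (s ^ ((N:ℝ)/2)) *
                (ENNReal.ofReal |deriv v s|) ^ ((k:ℝ)+1) := by
              rw [ENNReal.ofReal_rpow_of_nonneg hZ0 hkpos.le]
              have hz : (r ^ (-(((N:ℝ)-2*(k:ℝ))/(2*(k:ℝ)))) / (((N:ℝ)-2*(k:ℝ))/(2*(k:ℝ))))
                  ^ (k:ℝ) = C1K * r ^ (-(((N:ℝ)-2*(k:ℝ))/2)) := by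
                rw [Real.div_rpow (Real.rpow_nonneg hr0.le _) (by positivity),
                  ← Real.rpow_mul hr0.le, div_eq_mul_inv,
                  ← Real.inv_rpow (by positivity), inv_div, hC1Kdef]
                have hxx : -(((N:ℝ)-2*(k:ℝ))/(2*(k:ℝ))) * (k:ℝ) = -(((N:ℝ)-2*(k:ℝ))/2) := by
                  field_simp
                rw [hxx]
                ring
              have hmerge : ENNReal.ofReal (r ^ ((N:ℝ)-2*(k:ℝ)-1)) *
                  ENNReal.ofReal ((r ^ (-(((N:ℝ)-2*(k:ℝ))/(2*(k:ℝ)))) /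
                    (((N:ℝ)-2*(k:ℝ))/(2*(k:ℝ)))) ^ (k:ℝ))
                  = ENNReal.ofReal (C1K * r ^ (((N:ℝ)-2*(k:ℝ))/2 - 1)) := by
                rw [hz, ← ENNReal.ofReal_mul (Real.rpow_nonneg hr0.le _)]
                congr 1
                calc r ^ ((N:ℝ)-2*(k:ℝ)-1) * (C1K * r ^ (-(((N:ℝ)-2*(k:ℝ))/2)))
                    = C1K * (r ^ ((N:ℝ)-2*(k:ℝ)-1) * r ^ (-(((N:ℝ)-2*(k:ℝ))/2))) := by ring
                  _ = C1K * r ^ (((N:ℝ)-2*(k:ℝ))/2 - 1) := by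
                      rw [← Real.rpow_add hr0]
                      ring_nf
              calc ENNReal.ofReal (r ^ ((N:ℝ)-2*(k:ℝ)-1)) *
                    ((∫⁻ s in Set.Ioo r 1, ENNReal.ofReal (s ^ ((N:ℝ)/2)) *
                      (ENNReal.ofReal |deriv v s|) ^ ((k:ℝ)+1)) *
                    ENNReal.ofReal ((r ^ (-(((N:ℝ)-2*(k:ℝ))/(2*(k:ℝ)))) /
                      (((N:ℝ)-2*(k:ℝ))/(2*(k:ℝ)))) ^ (k:ℝ)))
                  = (ENNReal.ofReal (r ^ ((N:ℝ)-2*(k:ℝ)-1)) *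
                      ENNReal.ofReal ((r ^ (-(((N:ℝ)-2*(k:ℝ))/(2*(k:ℝ)))) /
                        (((N:ℝ)-2*(k:ℝ))/(2*(k:ℝ)))) ^ (k:ℝ))) *
                    ∫⁻ s in Set.Ioo r 1, ENNReal.ofReal (s ^ ((N:ℝ)/2)) *
                      (ENNReal.ofReal |deriv v s|) ^ ((k:ℝ)+1) := by ring
                _ = _ := by rw [hmerge]
      calc (∫⁻ r in Set.Ioo (0:ℝ) 1,
            ENNReal.ofReal (r ^ ((N:ℝ)-2*(k:ℝ)-1)) * (ENNReal.ofReal |v r|) ^ ((k:ℝ)+1))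
          ≤ ∫⁻ r in Set.Ioo (0:ℝ) 1, ENNReal.ofReal (C1K * r ^ (((N:ℝ)-2*(k:ℝ))/2 - 1)) *
              ∫⁻ s in Set.Ioo r 1, ENNReal.ofReal (s ^ ((N:ℝ)/2)) *
                (ENNReal.ofReal |deriv v s|) ^ ((k:ℝ)+1) := by
            refine lintegral_mono_ae ?_
            filter_upwards [ae_restrict_mem measurableSet_Ioo] with r hr
            exact hpt r hr
        _ = ∫⁻ s in Set.Ioo (0:ℝ) 1, (ENNReal.ofReal (s ^ ((N:ℝ)/2)) *
              (ENNReal.ofReal |deriv v s|) ^ ((k:ℝ)+1)) *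
              ∫⁻ r in Set.Ioo (0:ℝ) s, ENNReal.ofReal (C1K * r ^ (((N:ℝ)-2*(k:ℝ))/2 - 1)) := by
            rw [← fubini_tri _ _ hgm (by fun_prop)]
        _ ≤ ∫⁻ s in Set.Ioo (0:ℝ) 1, ENNReal.ofReal (C1K/(((N:ℝ)-2*(k:ℝ))/2)) *
              (ENNReal.ofReal (s ^ ((N:ℝ)-(k:ℝ))) * (ENNReal.ofReal |deriv v s|) ^ ((k:ℝ)+1)) := by
            refine lintegral_mono_ae ?_
            filter_upwards [ae_restrict_mem measurableSet_Ioo] with s hs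
            have hs0 : 0 < s := hs.1
            have hin : (∫⁻ r in Set.Ioo (0:ℝ) s,
                ENNReal.ofReal (C1K * r ^ (((N:ℝ)-2*(k:ℝ))/2 - 1)))
                ≤ ENNReal.ofReal C1K * ENNReal.ofReal (s ^ (((N:ℝ)-2*(k:ℝ))/2) /
                    (((N:ℝ)-2*(k:ℝ))/2)) := by
              calc (∫⁻ r in Set.Ioo (0:ℝ) s, ENNReal.ofReal (C1K * r ^ (((N:ℝ)-2*(k:ℝ))/2 - 1)))
                  = ∫⁻ r in Set.Ioo (0:ℝ) s,
                      ENNReal.ofReal C1K * ENNReal.ofReal (r ^ (((N:ℝ)-2*(k:ℝ))/2 - 1)) := by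
                    simp_rw [ENNReal.ofReal_mul hC1Kpos.le]
                _ = ENNReal.ofReal C1K *
                      ∫⁻ r in Set.Ioo (0:ℝ) s, ENNReal.ofReal (r ^ (((N:ℝ)-2*(k:ℝ))/2 - 1)) :=
                    lintegral_const_mul _ (by fun_prop)
                _ ≤ _ := mul_le_mul' le_rfl (lint_rpow_lower (by linarith) hs0)
            calc (ENNReal.ofReal (s ^ ((N:ℝ)/2)) * (ENNReal.ofReal |deriv v s|) ^ ((k:ℝ)+1)) *
                  ∫⁻ r in Set.Ioo (0:ℝ) s, ENNReal.ofReal (C1K * r ^ (((N:ℝ)-2*(k:ℝ))/2 - 1))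
                ≤ (ENNReal.ofReal (s ^ ((N:ℝ)/2)) * (ENNReal.ofReal |deriv v s|) ^ ((k:ℝ)+1)) *
                  (ENNReal.ofReal C1K *
                    ENNReal.ofReal (s ^ (((N:ℝ)-2*(k:ℝ))/2) / (((N:ℝ)-2*(k:ℝ))/2))) :=
                  mul_le_mul' le_rfl hin
              _ = ENNReal.ofReal (C1K/(((N:ℝ)-2*(k:ℝ))/2)) *
                  (ENNReal.ofReal (s ^ ((N:ℝ)-(k:ℝ))) * (ENNReal.ofReal |deriv v s|) ^ ((k:ℝ)+1)) := by
                  have hmm : ENNReal.ofReal (s ^ ((N:ℝ)/2)) * (ENNReal.ofReal C1K *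
                      ENNReal.ofReal (s ^ (((N:ℝ)-2*(k:ℝ))/2) / (((N:ℝ)-2*(k:ℝ))/2)))
                      = ENNReal.ofReal (C1K/(((N:ℝ)-2*(k:ℝ))/2)) *
                        ENNReal.ofReal (s ^ ((N:ℝ)-(k:ℝ))) := by
                    rw [← ENNReal.ofReal_mul hC1Kpos.le,
                      ← ENNReal.ofReal_mul (Real.rpow_nonneg hs0.le _),
                      ← ENNReal.ofReal_mul (div_nonneg hC1Kpos.le (by linarith))]
                    congr 1
                    calc s ^ ((N:ℝ)/2) * (C1K * (s ^ (((N:ℝ)-2*(k:ℝ))/2) / (((N:ℝ)-2*(k:ℝ))/2)))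
                        = C1K/(((N:ℝ)-2*(k:ℝ))/2) * (s ^ ((N:ℝ)/2) *
                            s ^ (((N:ℝ)-2*(k:ℝ))/2)) := by ring
                      _ = C1K/(((N:ℝ)-2*(k:ℝ))/2) * s ^ ((N:ℝ)-(k:ℝ)) := by
                          rw [← Real.rpow_add hs0]
                          ring_nf
                  calc (ENNReal.ofReal (s ^ ((N:ℝ)/2)) * (ENNReal.ofReal |deriv v s|) ^ ((k:ℝ)+1)) *
                        (ENNReal.ofReal C1K *
                          ENNReal.ofReal (s ^ (((N:ℝ)-2*(k:ℝ))/2) / (((N:ℝ)-2*(k:ℝ))/2)))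
                      = (ENNReal.ofReal (s ^ ((N:ℝ)/2)) * (ENNReal.ofReal C1K *
                          ENNReal.ofReal (s ^ (((N:ℝ)-2*(k:ℝ))/2) / (((N:ℝ)-2*(k:ℝ))/2)))) *
                        (ENNReal.ofReal |deriv v s|) ^ ((k:ℝ)+1) := by ring
                    _ = _ := by rw [hmm]; ring
        _ = ENNReal.ofReal (C1K/(((N:ℝ)-2*(k:ℝ))/2)) * ENNReal.ofReal E := by
            rw [lintegral_const_mul _ (by fun_prop), hEE]
        _ = ENNReal.ofReal (CHv * E) := by
            rw [hCHdef, ← ENNReal.ofReal_mul (div_nonneg hC1Kpos.le (by linarith))]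
    -- a.e. measurability of |v| on (0,1)
    have hvm : AEMeasurable (fun r => |v r|) (volume.restrict (Set.Ioo (0:ℝ) 1)) := by
      have hφ : AEMeasurable (fun r : ℝ => r ^ ((N:ℝ)-1) * |v r| ^ ((k:ℝ)+1))
          (volume.restrict (Set.Ioo (0:ℝ) 1)) := hv.int_self.1.aemeasurable
      have h1 : AEMeasurable (fun r : ℝ => ((r ^ ((N:ℝ)-1) * |v r| ^ ((k:ℝ)+1)) *
          r ^ (-((N:ℝ)-1))) ^ (1/((k:ℝ)+1))) (volume.restrict (Set.Ioo (0:ℝ) 1)) :=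
        (by fun_prop : Measurable fun t : ℝ => t ^ (1/((k:ℝ)+1))).comp_aemeasurable
          (hφ.mul ((by fun_prop : Measurable fun r : ℝ => r ^ (-((N:ℝ)-1))).aemeasurable))
      refine h1.congr ?_
      filter_upwards [ae_restrict_mem measurableSet_Ioo] with r hr
      have hr0 : 0 < r := hr.1
      rw [mul_comm (r ^ ((N:ℝ)-1)) _, mul_assoc, ← Real.rpow_add hr0, add_neg_cancel,
        Real.rpow_zero, mul_one, ← Real.rpow_mul (abs_nonneg _),
        mul_one_div_cancel hpne, Real.rpow_one]
    -- real Hardy inequality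
    have hhnn : 0 ≤ᵐ[volume.restrict (Set.Ioo (0:ℝ) 1)]
        fun r : ℝ => r ^ ((N:ℝ)-2*(k:ℝ)-1) * |v r| ^ ((k:ℝ)+1) := by
      filter_upwards [ae_restrict_mem measurableSet_Ioo] with r hr
      exact mul_nonneg (Real.rpow_nonneg hr.1.le _) (Real.rpow_nonneg (abs_nonneg _) _)
    have hhsm : AEStronglyMeasurable (fun r : ℝ => r ^ ((N:ℝ)-2*(k:ℝ)-1) * |v r| ^ ((k:ℝ)+1))
        (volume.restrict (Set.Ioo (0:ℝ) 1)) := by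
      apply AEMeasurable.aestronglyMeasurable
      exact ((by fun_prop : Measurable fun r : ℝ => r ^ ((N:ℝ)-2*(k:ℝ)-1)).aemeasurable).mul
        ((by fun_prop : Measurable fun t : ℝ => t ^ ((k:ℝ)+1)).comp_aemeasurable hvm)
    have hlint_eq : (∫⁻ r in Set.Ioo (0:ℝ) 1,
        ENNReal.ofReal (r ^ ((N:ℝ)-2*(k:ℝ)-1) * |v r| ^ ((k:ℝ)+1)))
        = ∫⁻ r in Set.Ioo (0:ℝ) 1,
          ENNReal.ofReal (r ^ ((N:ℝ)-2*(k:ℝ)-1)) * (ENNReal.ofReal |v r|) ^ ((k:ℝ)+1) := by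
      refine lintegral_congr_ae ?_
      filter_upwards [ae_restrict_mem measurableSet_Ioo] with r hr
      rw [ENNReal.ofReal_mul (Real.rpow_nonneg hr.1.le _),
        ENNReal.ofReal_rpow_of_nonneg (abs_nonneg _) hp0.le]
    have hHint : IntegrableOn (fun r : ℝ => r ^ ((N:ℝ)-2*(k:ℝ)-1) * |v r| ^ ((k:ℝ)+1))
        (Set.Ioo (0:ℝ) 1) := by
      refine ⟨hhsm, ?_⟩
      show (∫⁻ r in Set.Ioo (0:ℝ) 1,
        ‖r ^ ((N:ℝ)-2*(k:ℝ)-1) * |v r| ^ ((k:ℝ)+1)‖ₑ) < ⊤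
      have heql : (∫⁻ r in Set.Ioo (0:ℝ) 1,
          ‖r ^ ((N:ℝ)-2*(k:ℝ)-1) * |v r| ^ ((k:ℝ)+1)‖ₑ)
          = ∫⁻ r in Set.Ioo (0:ℝ) 1,
            ENNReal.ofReal (r ^ ((N:ℝ)-2*(k:ℝ)-1) * |v r| ^ ((k:ℝ)+1)) := by
        refine lintegral_congr_ae ?_
        filter_upwards [hhnn] with r hr
        rw [Real.enorm_eq_ofReal_abs, abs_of_nonneg hr]
      rw [heql, hlint_eq]
      exact lt_of_le_of_lt hHardyE ENNReal.ofReal_lt_top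
    have hHreal : (∫ r in Set.Ioo (0:ℝ) 1, r ^ ((N:ℝ)-2*(k:ℝ)-1) * |v r| ^ ((k:ℝ)+1))
        ≤ CHv * E := by
      rw [MeasureTheory.integral_eq_lintegral_of_nonneg_ae hhnn hhsm]
      have hb : (∫⁻ r in Set.Ioo (0:ℝ) 1,
          ENNReal.ofReal (r ^ ((N:ℝ)-2*(k:ℝ)-1) * |v r| ^ ((k:ℝ)+1)))
          ≤ ENNReal.ofReal (CHv * E) := by
        rw [hlint_eq]; exact hHardyE
      calc (∫⁻ r in Set.Ioo (0:ℝ) 1,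
            ENNReal.ofReal (r ^ ((N:ℝ)-2*(k:ℝ)-1) * |v r| ^ ((k:ℝ)+1))).toReal
          ≤ (ENNReal.ofReal (CHv * E)).toReal := ENNReal.toReal_mono ENNReal.ofReal_ne_top hb
        _ = CHv * E := ENNReal.toReal_ofReal (mul_nonneg hCHpos.le hE0)
    -- pointwise domination
    have hLMp : ((lam*M)^((k:ℝ)+1)) ≠ 0 := (Real.rpow_pos_of_pos hlamM _).ne'
    have hdom : ∀ r ∈ Set.Ioo (0:ℝ) 1,
        r ^ ((N:ℝ)-1) * (|v r| / (lam * M)) ^ (kstar N k + r ^ α)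
          ≤ (A/(lam*M)^((k:ℝ)+1)) * (r ^ ((N:ℝ)-2*(k:ℝ)-1) * |v r| ^ ((k:ℝ)+1)) := by
      intro r hr
      have hr0 : 0 < r := hr.1
      have hρ0 : 0 ≤ |v r| / (lam * M) := div_nonneg (abs_nonneg _) hlamM.le
      have hEC : E ^ (1/((k:ℝ)+1)) * D0 ≤ lam * M := by
        have hωp : (0:ℝ) < (omegaNk N k) ^ (1/((k:ℝ)+1)) := Real.rpow_pos_of_pos hωpos _
        have hMe : M = (omegaNk N k) ^ (1/((k:ℝ)+1)) * E ^ (1/((k:ℝ)+1)) := by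
          rw [hXnorm, Real.mul_rpow hωpos.le hE0]
        have h1 : (D0 / (omegaNk N k) ^ (1/((k:ℝ)+1))) * M ≤ lam * M :=
          mul_le_mul_of_nonneg_right hlam_ge1 hMpos.le
        calc E ^ (1/((k:ℝ)+1)) * D0
            = (D0 / (omegaNk N k) ^ (1/((k:ℝ)+1))) *
              ((omegaNk N k) ^ (1/((k:ℝ)+1)) * E ^ (1/((k:ℝ)+1))) := by
              field_simp
          _ ≤ lam * M := by rw [← hMe]; exact h1
      have hρbound : |v r| / (lam * M) ≤ r ^ (-θv) := by
        have h1 := (hsup r hr).2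
        calc |v r| / (lam * M) = |v r| * (lam*M)⁻¹ := div_eq_mul_inv _ _
          _ ≤ (E ^ (1/((k:ℝ)+1)) * (D0 * r ^ (-θv))) * (lam*M)⁻¹ :=
              mul_le_mul_of_nonneg_right h1 (inv_nonneg.2 hlamM.le)
          _ = (E ^ (1/((k:ℝ)+1)) * D0 / (lam*M)) * r ^ (-θv) := by ring
          _ ≤ 1 * r ^ (-θv) := by
              apply mul_le_mul_of_nonneg_right _ (Real.rpow_nonneg hr0.le _)
              rw [div_le_one hlamM]
              exact hEC
          _ = r ^ (-θv) := one_mul _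
      rcases eq_or_lt_of_le hρ0 with hz | hρpos
      · have hv0 : |v r| = 0 := by
          rcases div_eq_zero_iff.1 hz.symm with h | h
          · exact h
          · exact absurd h hlamM.ne'
        have hexpne : kstar N k + r ^ α ≠ 0 :=
          ne_of_gt (add_pos hkstar_pos (Real.rpow_pos_of_pos hr0 α))
        rw [← hz, Real.zero_rpow hexpne, mul_zero, hv0, Real.zero_rpow hpne, mul_zero, mul_zero]
      · have hsuper : (|v r| / (lam*M)) ^ (kstar N k + r ^ α)
            ≤ A * (|v r| / (lam*M)) ^ (kstar N k) := by
          rcases le_or_gt (|v r| / (lam*M)) 1 with h1 | h1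
          · calc (|v r| / (lam*M)) ^ (kstar N k + r ^ α)
                ≤ (|v r| / (lam*M)) ^ (kstar N k) :=
                  Real.rpow_le_rpow_of_exponent_ge hρpos h1
                    (le_add_of_nonneg_right (Real.rpow_nonneg hr0.le α))
              _ ≤ A * (|v r| / (lam*M)) ^ (kstar N k) :=
                  le_mul_of_one_le_left (Real.rpow_nonneg hρ0 _) hA1
          · have hexp : (|v r| / (lam*M)) ^ (r ^ α) ≤ A := by
              calc (|v r| / (lam*M)) ^ (r ^ α) ≤ (r ^ (-θv)) ^ (r ^ α) :=
                  Real.rpow_le_rpow hρ0 hρbound (Real.rpow_nonneg hr0.le α)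
                _ = r ^ (-θv * r ^ α) := (Real.rpow_mul hr0.le _ _).symm
                _ ≤ A := by
                    rw [Real.rpow_def_of_pos hr0, hAdef]
                    apply Real.exp_le_exp.2
                    have hlog : r ^ α * (-Real.log r) ≤ 1/α := by
                      have hy : 0 < r ^ α := Real.rpow_pos_of_pos hr0 α
                      have hlogy : Real.log (r ^ α) = α * Real.log r := Real.log_rpow hr0 α
                      have h2 := Real.log_le_sub_one_of_pos (inv_pos.2 hy)
                      rw [Real.log_inv] at h2
                      have h3 : r ^ α * (-Real.log (r ^ α)) ≤ r ^ α * ((r ^ α)⁻¹ - 1) :=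
                        mul_le_mul_of_nonneg_left h2 hy.le
                      rw [hlogy] at h3
                      have h4 : r ^ α * ((r ^ α)⁻¹ - 1) = 1 - r ^ α := by field_simp
                      rw [le_div_iff₀ hα]
                      nlinarith [hy.le]
                    have hθr : Real.log r * (-θv * r ^ α) = θv * (r ^ α * (-Real.log r)) := by
                      ring
                    rw [hθr]
                    calc θv * (r ^ α * (-Real.log r)) ≤ θv * (1/α) :=
                        mul_le_mul_of_nonneg_left hlog hθpos.le
                      _ = θv / α := by ring
            rw [Real.rpow_add hρpos]
            calc (|v r| / (lam*M)) ^ (kstar N k) * (|v r| / (lam*M)) ^ (r ^ α)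
                ≤ (|v r| / (lam*M)) ^ (kstar N k) * A :=
                  mul_le_mul_of_nonneg_left hexp (Real.rpow_nonneg hρ0 _)
              _ = A * (|v r| / (lam*M)) ^ (kstar N k) := mul_comm _ _
        have hcrit : (|v r| / (lam*M)) ^ (kstar N k)
            ≤ (|v r| / (lam*M)) ^ ((k:ℝ)+1) * r ^ (-(2*(k:ℝ))) := by
          have hsplit : (|v r| / (lam*M)) ^ (kstar N k)
              = (|v r| / (lam*M)) ^ ((k:ℝ)+1) *
                (|v r| / (lam*M)) ^ (kstar N k - ((k:ℝ)+1)) := by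
            rw [← Real.rpow_add hρpos]
            congr 1
            ring
          rw [hsplit]
          apply mul_le_mul_of_nonneg_left _ (Real.rpow_nonneg hρ0 _)
          calc (|v r| / (lam*M)) ^ (kstar N k - ((k:ℝ)+1))
              ≤ (r ^ (-θv)) ^ (kstar N k - ((k:ℝ)+1)) :=
                Real.rpow_le_rpow hρ0 hρbound (by linarith)
            _ = r ^ (-(2*(k:ℝ))) := by
                rw [← Real.rpow_mul hr0.le]
                congr 1
                rw [hkstar_sub, hθdef]
                field_simp
        calc r ^ ((N:ℝ)-1) * (|v r| / (lam * M)) ^ (kstar N k + r ^ α)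
            ≤ r ^ ((N:ℝ)-1) * (A * ((|v r| / (lam*M)) ^ ((k:ℝ)+1) * r ^ (-(2*(k:ℝ))))) := by
              apply mul_le_mul_of_nonneg_left _ (Real.rpow_nonneg hr0.le _)
              exact le_trans hsuper (mul_le_mul_of_nonneg_left hcrit hApos.le)
          _ = A * ((r ^ ((N:ℝ)-1) * r ^ (-(2*(k:ℝ)))) * (|v r| / (lam*M)) ^ ((k:ℝ)+1)) := by
              ring
          _ = A * (r ^ ((N:ℝ)-2*(k:ℝ)-1) * (|v r| / (lam*M)) ^ ((k:ℝ)+1)) := by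
              rw [← Real.rpow_add hr0]
              ring_nf
          _ = (A/(lam*M)^((k:ℝ)+1)) * (r ^ ((N:ℝ)-2*(k:ℝ)-1) * |v r| ^ ((k:ℝ)+1)) := by
              rw [Real.div_rpow (abs_nonneg _) hlamM.le]
              field_simp
    -- integrate the domination
    have hg : IntegrableOn (fun r : ℝ => (A/(lam*M)^((k:ℝ)+1)) *
        (r ^ ((N:ℝ)-2*(k:ℝ)-1) * |v r| ^ ((k:ℝ)+1))) (Set.Ioo (0:ℝ) 1) := hHint.const_mul _
    have hIb : (∫ r in Set.Ioo (0:ℝ) 1,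
        r ^ ((N:ℝ)-1) * (|v r| / (lam * M)) ^ (kstar N k + r ^ α))
        ≤ (A/(lam*M)^((k:ℝ)+1)) * (CHv * E) := by
      have h1 := MeasureTheory.integral_mono_of_nonneg
        (μ := volume.restrict (Set.Ioo (0:ℝ) 1))
        (f := fun r : ℝ => r ^ ((N:ℝ)-1) * (|v r| / (lam * M)) ^ (kstar N k + r ^ α))
        (g := fun r : ℝ => (A/(lam*M)^((k:ℝ)+1)) *
          (r ^ ((N:ℝ)-2*(k:ℝ)-1) * |v r| ^ ((k:ℝ)+1))) ?nn hg ?le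
      case nn =>
        filter_upwards [ae_restrict_mem measurableSet_Ioo] with r hr
        exact mul_nonneg (Real.rpow_nonneg hr.1.le _)
          (Real.rpow_nonneg (div_nonneg (abs_nonneg _) hlamM.le) _)
      case le =>
        filter_upwards [ae_restrict_mem measurableSet_Ioo] with r hr
        exact hdom r hr
      calc (∫ r in Set.Ioo (0:ℝ) 1,
            r ^ ((N:ℝ)-1) * (|v r| / (lam * M)) ^ (kstar N k + r ^ α))
          ≤ ∫ r in Set.Ioo (0:ℝ) 1, (A/(lam*M)^((k:ℝ)+1)) *
              (r ^ ((N:ℝ)-2*(k:ℝ)-1) * |v r| ^ ((k:ℝ)+1)) := h1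
        _ = (A/(lam*M)^((k:ℝ)+1)) * ∫ r in Set.Ioo (0:ℝ) 1,
              r ^ ((N:ℝ)-2*(k:ℝ)-1) * |v r| ^ ((k:ℝ)+1) := integral_const_mul _ _
        _ ≤ (A/(lam*M)^((k:ℝ)+1)) * (CHv * E) :=
            mul_le_mul_of_nonneg_left hHreal
              (div_nonneg hApos.le (Real.rpow_nonneg hlamM.le _))
    -- final numerics
    have hMp : (lam * M)^((k:ℝ)+1) = lam^((k:ℝ)+1) * (omegaNk N k * E) := by
      rw [Real.mul_rpow hlam0.le hMpos.le, hXnorm,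
        ← Real.rpow_mul (mul_pos hωpos hEpos).le,
        show (1/((k:ℝ)+1)) * ((k:ℝ)+1) = 1 by field_simp, Real.rpow_one]
    have hlamp : omegaSphere N * A * CHv / omegaNk N k ≤ lam^((k:ℝ)+1) := by
      have h0 : 0 ≤ omegaSphere N * A * CHv / omegaNk N k :=
        div_nonneg (mul_nonneg (mul_nonneg hωS.le hApos.le) hCHpos.le) hωpos.le
      calc omegaSphere N * A * CHv / omegaNk N k
          = ((omegaSphere N * A * CHv / omegaNk N k) ^ (1/((k:ℝ)+1))) ^ ((k:ℝ)+1) := by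
            rw [← Real.rpow_mul h0,
              show (1/((k:ℝ)+1)) * ((k:ℝ)+1) = 1 by field_simp, Real.rpow_one]
        _ ≤ lam ^ ((k:ℝ)+1) := Real.rpow_le_rpow (Real.rpow_nonneg h0 _) hlam_ge2 hp0.le
    have hfin : omegaSphere N * ((A/(lam*M)^((k:ℝ)+1)) * (CHv * E)) ≤ 1 := by
      rw [hMp]
      have hlamppos : 0 < lam ^ ((k:ℝ)+1) := Real.rpow_pos_of_pos hlam0 _
      have heq : omegaSphere N * ((A/(lam^((k:ℝ)+1) * (omegaNk N k * E))) * (CHv * E))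
          = (omegaSphere N * A * CHv / omegaNk N k) / lam^((k:ℝ)+1) := by
        field_simp
      rw [heq, div_le_one hlamppos]
      exact hlamp
    calc omegaSphere N * ∫ r in Set.Ioo (0:ℝ) 1,
          r ^ ((N:ℝ)-1) * (|v r| / (lam * M)) ^ (kstar N k + r ^ α)
        ≤ omegaSphere N * ((A/(lam*M)^((k:ℝ)+1)) * (CHv * E)) :=
          mul_le_mul_of_nonneg_left hIb hωS.le
      _ ≤ 1 := hfin
end

section
/- (Radial-type lemma.) For every v ∈ X_1 and every 0 < r ≤ 1, |v(r)| ≤ [c̄ (r^{−(N−2k)/k} − 1)]^{k/(k+1)} ‖v‖_{X_1}, where c̄ = (k/(N−2k)) ω_{N,k}^{−1/k}. -/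
open MeasureTheory Real Set Filter Asymptotics

/-- **Radial-type lemma.** For every `v ∈ X_1` and `0 < r ≤ 1`,
`|v(r)| ≤ [c̄ (r^{-(N-2k)/k} - 1)]^{k/(k+1)} ‖v‖_{X_1}`,
where `c̄ = (k/(N-2k)) ω_{N,k}^{-1/k}`. -/
theorem radial_lemma (N k : ℕ) (hk : 1 ≤ k) (hN : 2 * k < N) (v : ℝ → ℝ)
    (hv : MemX1 N k v) (r : ℝ) (hr : r ∈ Set.Ioc (0:ℝ) 1) :
    |v r| ≤
      (((k : ℝ) / ((N : ℝ) - 2 * (k : ℝ)) * omegaNk N k ^ (-(1 : ℝ) / (k : ℝ))) *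
          (r ^ (-(((N : ℝ) - 2 * (k : ℝ)) / (k : ℝ))) - 1)) ^ ((k : ℝ) / ((k : ℝ) + 1)) *
        X1norm N k v := by
  obtain ⟨hr0, hr1'⟩ := hr
  have hk0 : (0:ℝ) < k := by exact_mod_cast Nat.lt_of_lt_of_le Nat.zero_lt_one hk
  have hkR : (1:ℝ) ≤ k := by exact_mod_cast hk
  have hNk : (2*(k:ℝ)) < N := by exact_mod_cast hN
  have hp0 : (0:ℝ) < (k:ℝ) + 1 := by linarith
  have hm0 : (0:ℝ) < ((N:ℝ) - 2*(k:ℝ)) := by linarith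
  have hNk0 : (0:ℝ) < ((N:ℝ) - (k:ℝ)) := by linarith
  have hee0 : (0:ℝ) < (k:ℝ)/((k:ℝ)+1) := by positivity
  have hω : 0 < omegaNk N k := by
    unfold omegaNk omegaSphere
    have hN0 : (0:ℝ) < (N:ℝ) := by linarith
    have hΓ : 0 < Real.Gamma ((N:ℝ)/2) := Real.Gamma_pos_of_pos (by positivity)
    have hchoose : 0 < (N.choose k : ℝ) := by
      exact_mod_cast Nat.choose_pos (by omega)
    apply div_pos (mul_pos (div_pos (by positivity) hΓ) hchoose) hN0
  have hX1nn : 0 ≤ X1norm N k v := by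
    unfold X1norm
    apply Real.rpow_nonneg
    apply mul_nonneg hω.le
    apply setIntegral_nonneg measurableSet_Ioo
    intro x hx
    exact mul_nonneg (Real.rpow_nonneg hx.1.le _) (Real.rpow_nonneg (abs_nonneg _) _)
  rcases eq_or_lt_of_le hr1' with h1 | hr1
  · -- r = 1
    rw [h1, hv.val_one, abs_zero, Real.one_rpow, sub_self, mul_zero,
      Real.zero_rpow (ne_of_gt hee0), zero_mul]
  -- Main case : r < 1
  have hmeasD : Measurable (deriv v) := measurable_deriv v
  have hsub : Set.Ioo r 1 ⊆ Set.Ioo (0:ℝ) 1 := Set.Ioo_subset_Ioo hr0.le le_rfl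
  have hint1 : MeasureTheory.IntegrableOn
      (fun s : ℝ => s ^ ((N:ℝ)-(k:ℝ)) * |deriv v s| ^ ((k:ℝ)+1)) (Set.Ioo r 1) :=
    hv.int_deriv.mono_set hsub
  have hderint : MeasureTheory.IntegrableOn (deriv v) (Set.Ioo r 1) := by
    refine Integrable.mono'
      (g := fun s : ℝ => 1 + r ^ (-((N:ℝ)-(k:ℝ))) * (s ^ ((N:ℝ)-(k:ℝ)) * |deriv v s| ^ ((k:ℝ)+1)))
      ((integrableOn_const measure_Ioo_lt_top.ne).add (hint1.const_mul _))
      hmeasD.aestronglyMeasurable ?_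
    filter_upwards [ae_restrict_mem measurableSet_Ioo] with s hs
    have hs0 : (0:ℝ) < s := lt_trans hr0 hs.1
    have hrpos : (0:ℝ) < r ^ (-((N:ℝ)-(k:ℝ))) := Real.rpow_pos_of_pos hr0 _
    have hterm : 0 ≤ r ^ (-((N:ℝ)-(k:ℝ))) * (s ^ ((N:ℝ)-(k:ℝ)) * |deriv v s| ^ ((k:ℝ)+1)) := by
      have := Real.rpow_nonneg hs0.le ((N:ℝ)-(k:ℝ))
      have := Real.rpow_nonneg (abs_nonneg (deriv v s)) ((k:ℝ)+1)
      positivity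
    rw [Real.norm_eq_abs]
    rcases le_or_gt (|deriv v s|) 1 with h | h
    · linarith
    · have h1 : |deriv v s| ≤ |deriv v s| ^ ((k:ℝ)+1) := by
        calc |deriv v s| = |deriv v s| ^ (1:ℝ) := (Real.rpow_one _).symm
        _ ≤ _ := Real.rpow_le_rpow_of_exponent_le h.le (by linarith)
      have h2 : r ^ ((N:ℝ)-(k:ℝ)) ≤ s ^ ((N:ℝ)-(k:ℝ)) :=
        Real.rpow_le_rpow hr0.le hs.1.le hNk0.le
      have hr_inv : r ^ (-((N:ℝ)-(k:ℝ))) * r ^ ((N:ℝ)-(k:ℝ)) = 1 := by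
        rw [← Real.rpow_add hr0, neg_add_cancel, Real.rpow_zero]
      have h4 : |deriv v s| ^ ((k:ℝ)+1)
          ≤ r ^ (-((N:ℝ)-(k:ℝ))) * (s ^ ((N:ℝ)-(k:ℝ)) * |deriv v s| ^ ((k:ℝ)+1)) := by
        have h5 : r ^ ((N:ℝ)-(k:ℝ)) * |deriv v s| ^ ((k:ℝ)+1)
            ≤ s ^ ((N:ℝ)-(k:ℝ)) * |deriv v s| ^ ((k:ℝ)+1) :=
          mul_le_mul_of_nonneg_right h2 (Real.rpow_nonneg (abs_nonneg _) _)
        calc |deriv v s| ^ ((k:ℝ)+1)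
            = r ^ (-((N:ℝ)-(k:ℝ))) * (r ^ ((N:ℝ)-(k:ℝ)) * |deriv v s| ^ ((k:ℝ)+1)) := by
              rw [← mul_assoc, hr_inv, one_mul]
          _ ≤ _ := mul_le_mul_of_nonneg_left h5 hrpos.le
      linarith
  set C : ℝ := ∫ s in Set.Ioo r 1, |deriv v s| with hC
  have habs_int : MeasureTheory.IntegrableOn (fun s => |deriv v s|) (Set.Ioo r 1) := hderint.abs
  have hvr : |v r| ≤ C := by
    have hstep : ∀ b ∈ Set.Ioo r 1, |v r| ≤ |v b| + C := by
      intro b hb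
      have hftc := (hv.ftc r ⟨hr0, hr1⟩ b ⟨lt_trans hr0 hb.1, hb.2⟩).2
      have h1 : |v r| ≤ |v b| + |∫ s in r..b, deriv v s| := by
        have hvrw : v r = v b - ∫ s in r..b, deriv v s := by linarith
        rw [hvrw]; exact abs_sub _ _
      have h2 : |∫ s in r..b, deriv v s| ≤ ∫ s in r..b, |deriv v s| :=
        intervalIntegral.abs_integral_le_integral_abs hb.1.le
      have h3 : (∫ s in r..b, |deriv v s|) ≤ C := by
        rw [intervalIntegral.integral_of_le hb.1.le, MeasureTheory.integral_Ioc_eq_integral_Ioo]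
        exact setIntegral_mono_set habs_int (ae_of_all _ fun x => abs_nonneg _)
          (HasSubset.Subset.eventuallyLE (Set.Ioo_subset_Ioo le_rfl hb.2.le))
      linarith
    have htend : Filter.Tendsto (fun b => |v b|) (nhdsWithin 1 (Set.Iio 1)) (nhds 0) := by
      have habs : Filter.Tendsto (fun x : ℝ => |x|) (nhds 0) (nhds 0) := by
        simpa using continuous_abs.tendsto (0:ℝ)
      exact habs.comp hv.lim_one
    have hev : ∀ᶠ b in nhdsWithin 1 (Set.Iio 1), |v r| - C ≤ |v b| := by
      filter_upwards [Ioo_mem_nhdsLT_of_mem ⟨hr1, le_rfl⟩] with b hb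
      linarith [hstep b hb]
    have := ge_of_tendsto htend hev
    linarith
  -- Hölder
  have hpq : Real.HolderConjugate ((k:ℝ)+1) (((k:ℝ)+1)/(k:ℝ)) := by
    rw [Real.holderConjugate_iff]
    constructor
    · linarith
    · rw [inv_div]
      field_simp
      ring
  set a : ℝ := ((N:ℝ)-(k:ℝ))/((k:ℝ)+1) with ha
  set f : ℝ → ℝ := fun s => s ^ a * |deriv v s| with hf
  set g : ℝ → ℝ := fun s => s ^ (-a) with hg
  set μ' := MeasureTheory.volume.restrict (Set.Ioo r 1) with hμ'
  have hfm : AEStronglyMeasurable f μ' := by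
    apply Measurable.aestronglyMeasurable
    fun_prop
  have hgm : AEStronglyMeasurable g μ' := by
    apply Measurable.aestronglyMeasurable
    fun_prop
  have hfp_ae : ∀ᵐ s ∂μ', s ^ ((N:ℝ)-(k:ℝ)) * |deriv v s| ^ ((k:ℝ)+1) = f s ^ ((k:ℝ)+1) := by
    filter_upwards [ae_restrict_mem measurableSet_Ioo] with s hs
    have hs0 : (0:ℝ) < s := lt_trans hr0 hs.1
    rw [hf]
    rw [Real.mul_rpow (Real.rpow_nonneg hs0.le _) (abs_nonneg _), ← Real.rpow_mul hs0.le,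
      show a * ((k:ℝ)+1) = (N:ℝ)-(k:ℝ) by rw [ha]; field_simp]
  have hgq_ae : ∀ᵐ s ∂μ', s ^ (-(((N:ℝ)-(k:ℝ))/(k:ℝ))) = g s ^ (((k:ℝ)+1)/(k:ℝ)) := by
    filter_upwards [ae_restrict_mem measurableSet_Ioo] with s hs
    have hs0 : (0:ℝ) < s := lt_trans hr0 hs.1
    rw [hg]
    rw [← Real.rpow_mul hs0.le,
      show (-a) * (((k:ℝ)+1)/(k:ℝ)) = -(((N:ℝ)-(k:ℝ))/(k:ℝ)) by rw [ha]; field_simp]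
  have hfp_int : Integrable (fun s => ‖f s‖ ^ ((k:ℝ)+1)) μ' := by
    apply (hint1.congr ?_)
    filter_upwards [hfp_ae, ae_restrict_mem measurableSet_Ioo] with s hsa hs
    have hs0 : (0:ℝ) < s := lt_trans hr0 hs.1
    rw [hsa, Real.norm_eq_abs,
      abs_of_nonneg (mul_nonneg (Real.rpow_nonneg hs0.le _) (abs_nonneg _))]
  have hgq_int : Integrable (fun s => ‖g s‖ ^ (((k:ℝ)+1)/(k:ℝ))) μ' := by
    have he_int : MeasureTheory.IntegrableOn
        (fun s : ℝ => s ^ (-(((N:ℝ)-(k:ℝ))/(k:ℝ)))) (Set.Icc r 1) := by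
      apply ContinuousOn.integrableOn_Icc
      intro x hx
      exact (Real.continuousAt_rpow_const x _
        (Or.inl (ne_of_gt (lt_of_lt_of_le hr0 hx.1)))).continuousWithinAt
    apply ((he_int.mono_set Set.Ioo_subset_Icc_self).congr ?_)
    filter_upwards [hgq_ae, ae_restrict_mem measurableSet_Ioo] with s hsa hs
    have hs0 : (0:ℝ) < s := lt_trans hr0 hs.1
    rw [hsa, hg, Real.norm_eq_abs, abs_of_nonneg (Real.rpow_nonneg hs0.le _)]
  have hp_ne0 : ENNReal.ofReal ((k:ℝ)+1) ≠ 0 := (ENNReal.ofReal_pos.mpr hp0).ne'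
  have hq_ne0 : ENNReal.ofReal (((k:ℝ)+1)/(k:ℝ)) ≠ 0 :=
    (ENNReal.ofReal_pos.mpr (by positivity)).ne'
  have hf_mem : MemLp f (ENNReal.ofReal ((k:ℝ)+1)) μ' := by
    rw [← memLp_norm_rpow_iff hfm hp_ne0 ENNReal.ofReal_ne_top,
      ENNReal.div_self hp_ne0 ENNReal.ofReal_ne_top, memLp_one_iff_integrable,
      ENNReal.toReal_ofReal hp0.le]
    exact hfp_int
  have hg_mem : MemLp g (ENNReal.ofReal (((k:ℝ)+1)/(k:ℝ))) μ' := by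
    rw [← memLp_norm_rpow_iff hgm hq_ne0 ENNReal.ofReal_ne_top,
      ENNReal.div_self hq_ne0 ENNReal.ofReal_ne_top, memLp_one_iff_integrable,
      ENNReal.toReal_ofReal (by positivity)]
    exact hgq_int
  have hfnn : 0 ≤ᵐ[μ'] f := by
    filter_upwards [ae_restrict_mem measurableSet_Ioo] with s hs
    exact mul_nonneg (Real.rpow_nonneg (lt_trans hr0 hs.1).le _) (abs_nonneg _)
  have hgnn : 0 ≤ᵐ[μ'] g := by
    filter_upwards [ae_restrict_mem measurableSet_Ioo] with s hs
    exact Real.rpow_nonneg (lt_trans hr0 hs.1).le _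
  have hold := MeasureTheory.integral_mul_le_Lp_mul_Lq_of_nonneg hpq hfnn hgnn hf_mem hg_mem
  -- identify the three integrals
  have hCeq : C = ∫ s, f s * g s ∂μ' := by
    rw [hC]
    apply integral_congr_ae
    filter_upwards [ae_restrict_mem measurableSet_Ioo] with s hs
    have hs0 : (0:ℝ) < s := lt_trans hr0 hs.1
    have hone : s ^ a * s ^ (-a) = 1 := by
      rw [← Real.rpow_add hs0, add_neg_cancel, Real.rpow_zero]
    calc |deriv v s| = (s ^ a * s ^ (-a)) * |deriv v s| := by rw [hone, one_mul]
      _ = f s * g s := by rw [hf, hg]; ring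
  have hIeq : (∫ s, f s ^ ((k:ℝ)+1) ∂μ')
      = ∫ s in Set.Ioo r 1, s ^ ((N:ℝ)-(k:ℝ)) * |deriv v s| ^ ((k:ℝ)+1) :=
    (integral_congr_ae hfp_ae).symm
  have hGeq : (∫ s, g s ^ (((k:ℝ)+1)/(k:ℝ)) ∂μ')
      = (k:ℝ)/((N:ℝ)-2*(k:ℝ)) * (r ^ (-(((N:ℝ)-2*(k:ℝ))/(k:ℝ))) - 1) := by
    rw [← integral_congr_ae hgq_ae]
    have h0mem : (0:ℝ) ∉ Set.uIcc r 1 := by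
      rw [Set.uIcc_of_le hr1.le]
      exact fun h => (not_le.mpr hr0) h.1
    have hne : -(((N:ℝ)-(k:ℝ))/(k:ℝ)) ≠ -1 := by
      have h2 : (1:ℝ) < ((N:ℝ)-(k:ℝ))/(k:ℝ) := (one_lt_div hk0).mpr (by linarith)
      intro h
      rw [neg_inj] at h
      linarith
    rw [hμ', ← MeasureTheory.integral_Ioc_eq_integral_Ioo,
      ← intervalIntegral.integral_of_le hr1.le,
      integral_rpow (Or.inr ⟨hne, h0mem⟩), Real.one_rpow,
      show -(((N:ℝ)-(k:ℝ))/(k:ℝ)) + 1 = -(((N:ℝ)-2*(k:ℝ))/(k:ℝ)) by field_simp; ring]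
    have hmne : -(((N:ℝ)-2*(k:ℝ))/(k:ℝ)) ≠ 0 := by
      intro h
      rw [neg_eq_zero, div_eq_zero_iff] at h
      rcases h with h | h <;> linarith
    set X : ℝ := r ^ (-(((N:ℝ)-2*(k:ℝ))/(k:ℝ))) with hXdef
    have h2kN : (k:ℝ) * 2 - (N:ℝ) ≠ 0 := by intro h; linarith
    have hkne : (k:ℝ) ≠ 0 := hk0.ne'
    have hmne2 : (N:ℝ) - 2*(k:ℝ) ≠ 0 := hm0.ne'
    rw [div_eq_iff hmne]
    have hmne3 : (N:ℝ) - (k:ℝ)*2 ≠ 0 := by linarith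
    field_simp
    ring
  set I₀ : ℝ := ∫ s in Set.Ioo (0:ℝ) 1, s ^ ((N:ℝ)-(k:ℝ)) * |deriv v s| ^ ((k:ℝ)+1) with hI₀
  have hI₀nn : 0 ≤ I₀ := by
    apply setIntegral_nonneg measurableSet_Ioo
    intro x hx
    exact mul_nonneg (Real.rpow_nonneg hx.1.le _) (Real.rpow_nonneg (abs_nonneg _) _)
  have hIrnn : 0 ≤ ∫ s in Set.Ioo r 1, s ^ ((N:ℝ)-(k:ℝ)) * |deriv v s| ^ ((k:ℝ)+1) := by
    apply setIntegral_nonneg measurableSet_Ioo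
    intro x hx
    exact mul_nonneg (Real.rpow_nonneg (lt_trans hr0 hx.1).le _)
      (Real.rpow_nonneg (abs_nonneg _) _)
  have hImono : (∫ s in Set.Ioo r 1, s ^ ((N:ℝ)-(k:ℝ)) * |deriv v s| ^ ((k:ℝ)+1)) ≤ I₀ := by
    apply setIntegral_mono_set hv.int_deriv ?_ (HasSubset.Subset.eventuallyLE hsub)
    filter_upwards [ae_restrict_mem measurableSet_Ioo] with x hx
    exact mul_nonneg (Real.rpow_nonneg hx.1.le _) (Real.rpow_nonneg (abs_nonneg _) _)
  have hX : 0 ≤ r ^ (-(((N:ℝ)-2*(k:ℝ))/(k:ℝ))) - 1 := by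
    have := Real.one_le_rpow_of_pos_of_le_one_of_nonpos (z := -(((N:ℝ)-2*(k:ℝ))/(k:ℝ))) hr0 hr1.le
      (neg_nonpos_of_nonneg (by positivity))
    linarith
  have hcx : 0 ≤ (k:ℝ)/((N:ℝ)-2*(k:ℝ)) * (r ^ (-(((N:ℝ)-2*(k:ℝ))/(k:ℝ))) - 1) :=
    mul_nonneg (by positivity) hX
  have hRHS : (((k:ℝ) / ((N:ℝ) - 2*(k:ℝ)) * omegaNk N k ^ (-(1:ℝ)/(k:ℝ))) *
          (r ^ (-(((N:ℝ) - 2*(k:ℝ))/(k:ℝ))) - 1)) ^ ((k:ℝ)/((k:ℝ)+1)) * X1norm N k v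
      = I₀ ^ (1/((k:ℝ)+1)) *
        ((k:ℝ)/((N:ℝ)-2*(k:ℝ)) * (r ^ (-(((N:ℝ)-2*(k:ℝ))/(k:ℝ))) - 1)) ^ ((k:ℝ)/((k:ℝ)+1)) := by
    have hX1 : X1norm N k v = (omegaNk N k * I₀) ^ (1/((k:ℝ)+1)) := rfl
    rw [hX1,
      show ((k:ℝ) / ((N:ℝ) - 2*(k:ℝ)) * omegaNk N k ^ (-(1:ℝ)/(k:ℝ))) *
          (r ^ (-(((N:ℝ) - 2*(k:ℝ))/(k:ℝ))) - 1)
        = ((k:ℝ)/((N:ℝ)-2*(k:ℝ)) * (r ^ (-(((N:ℝ)-2*(k:ℝ))/(k:ℝ))) - 1)) *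
          omegaNk N k ^ (-(1:ℝ)/(k:ℝ)) by ring,
      Real.mul_rpow hcx (Real.rpow_nonneg hω.le _),
      Real.mul_rpow hω.le hI₀nn,
      ← Real.rpow_mul hω.le]
    have hωcomb : omegaNk N k ^ ((-(1:ℝ)/(k:ℝ)) * ((k:ℝ)/((k:ℝ)+1)))
        * omegaNk N k ^ (1/((k:ℝ)+1)) = 1 := by
      rw [← Real.rpow_add hω,
        show (-(1:ℝ)/(k:ℝ)) * ((k:ℝ)/((k:ℝ)+1)) + 1/((k:ℝ)+1) = 0 by field_simp; ring,
        Real.rpow_zero]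
    calc ((k:ℝ)/((N:ℝ)-2*(k:ℝ)) * (r ^ (-(((N:ℝ)-2*(k:ℝ))/(k:ℝ))) - 1)) ^ ((k:ℝ)/((k:ℝ)+1))
          * omegaNk N k ^ ((-(1:ℝ)/(k:ℝ)) * ((k:ℝ)/((k:ℝ)+1)))
          * (omegaNk N k ^ (1/((k:ℝ)+1)) * I₀ ^ (1/((k:ℝ)+1)))
        = I₀ ^ (1/((k:ℝ)+1)) *
          ((k:ℝ)/((N:ℝ)-2*(k:ℝ)) * (r ^ (-(((N:ℝ)-2*(k:ℝ))/(k:ℝ))) - 1)) ^ ((k:ℝ)/((k:ℝ)+1))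
          * (omegaNk N k ^ ((-(1:ℝ)/(k:ℝ)) * ((k:ℝ)/((k:ℝ)+1)))
            * omegaNk N k ^ (1/((k:ℝ)+1))) := by ring
      _ = _ := by rw [hωcomb, mul_one]
  have hq_inv : 1/(((k:ℝ)+1)/(k:ℝ)) = (k:ℝ)/((k:ℝ)+1) := one_div_div _ _
  calc |v r| ≤ C := hvr
    _ = ∫ s, f s * g s ∂μ' := hCeq
    _ ≤ (∫ s, f s ^ ((k:ℝ)+1) ∂μ') ^ (1/((k:ℝ)+1))
        * (∫ s, g s ^ (((k:ℝ)+1)/(k:ℝ)) ∂μ') ^ (1/(((k:ℝ)+1)/(k:ℝ))) := hold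
    _ = (∫ s in Set.Ioo r 1, s ^ ((N:ℝ)-(k:ℝ)) * |deriv v s| ^ ((k:ℝ)+1)) ^ (1/((k:ℝ)+1))
        * ((k:ℝ)/((N:ℝ)-2*(k:ℝ)) * (r ^ (-(((N:ℝ)-2*(k:ℝ))/(k:ℝ))) - 1)) ^ ((k:ℝ)/((k:ℝ)+1)) := by
        rw [hIeq, hGeq, hq_inv]
    _ ≤ I₀ ^ (1/((k:ℝ)+1))
        * ((k:ℝ)/((N:ℝ)-2*(k:ℝ)) * (r ^ (-(((N:ℝ)-2*(k:ℝ))/(k:ℝ))) - 1)) ^ ((k:ℝ)/((k:ℝ)+1)) :=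
        mul_le_mul_of_nonneg_right (Real.rpow_le_rpow hIrnn hImono (by positivity))
          (Real.rpow_nonneg hcx _)
    _ = _ := hRHS.symm
end

section
/- (Sharp instanton integral asymptotics, subcritical weight case.) Let β, δ be real numbers with 0 ≤ β < N/k, δ ≥ 0, and let γ ∈ (0,1). Then the integral J = ∫_0^∞ s^{N+β−1}(log(1+s²))^δ (1+s²)^{−(k+1)N/(2k)} ds is finite and lim_{ε→0⁺} ε^{−β} ∫_0^{ε^γ} r^{N+β−1} (v*_ε(r))^{k*} (log(1 + r²/ε²))^δ dr = ĉ^{k*} J. -/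
open MeasureTheory Real Set Filter Asymptotics

-- integrability of F(s) = s^a * log(1+s^2)^δ * (1+s^2)^(-p) on Ioi 0
-- assumptions: a ≥ 0 (a = N+β-1, really a+1 > 0), δ ≥ 0, 2p > a + 1
lemma Fmeas (a δ p : ℝ) : Measurable (fun s : ℝ =>
    s ^ a * Real.log (1 + s ^ 2) ^ δ * (1 + s ^ 2) ^ (-p)) := by
  measurability

lemma Fint (a δ p : ℝ) (ha : 0 ≤ a) (hδ : 0 ≤ δ) (hp : a + 1 < 2 * p) :
    IntegrableOn (fun s : ℝ =>
      s ^ a * Real.log (1 + s ^ 2) ^ δ * (1 + s ^ 2) ^ (-p)) (Ioi 0) := by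
  set F := fun s : ℝ => s ^ a * Real.log (1 + s ^ 2) ^ δ * (1 + s ^ 2) ^ (-p) with hF
  have hFnn : ∀ s : ℝ, 0 ≤ s → 0 ≤ F s := by
    intro s hs
    have h1 : (0:ℝ) ≤ Real.log (1 + s ^ 2) := Real.log_nonneg (by nlinarith)
    positivity
  have hmeas := Fmeas a δ p
  have h01 : IntegrableOn F (Ioc 0 1) := by
    apply Measure.integrableOn_of_bounded (M := 1) measure_Ioc_lt_top.ne
      hmeas.aestronglyMeasurable
    filter_upwards [ae_restrict_mem measurableSet_Ioc] with s hs
    have hs0 : 0 < s := hs.1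
    have hs1 : s ≤ 1 := hs.2
    rw [Real.norm_eq_abs, abs_of_nonneg (hFnn s hs0.le)]
    have e1 : s ^ a ≤ 1 := Real.rpow_le_one hs0.le hs1 ha
    have e2 : Real.log (1 + s ^ 2) ^ δ ≤ 1 := by
      apply Real.rpow_le_one (Real.log_nonneg (by nlinarith))
      · calc Real.log (1 + s ^ 2) ≤ (1 + s^2) - 1 := Real.log_le_sub_one_of_pos (by positivity)
          _ ≤ 1 := by nlinarith
      · exact hδ
    have e3 : (1 + s ^ 2) ^ (-p) ≤ 1 := by
      apply Real.rpow_le_one_of_one_le_of_nonpos (by nlinarith)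
      nlinarith
    have h1 : (0:ℝ) ≤ Real.log (1 + s ^ 2) := Real.log_nonneg (by nlinarith)
    calc F s ≤ 1 * 1 * 1 := by
          apply mul_le_mul (mul_le_mul e1 e2 (by positivity) (by positivity)) e3 (by positivity)
          norm_num
      _ = 1 := by norm_num
  have hd : 0 < 2 * p - a - 1 := by linarith
  set α : ℝ := (2 * p - a - 1) / (4 * (δ + 1)) with hα
  have hαpos : 0 < α := by positivity
  have h2αδ : 2 * α * δ ≤ (2 * p - a - 1) / 2 := by
    have e : 2 * α * δ = (2 * p - a - 1) * δ / (2 * (δ + 1)) := by rw [hα]; field_simp; ring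
    rw [e, div_le_div_iff₀ (by positivity) two_pos]
    nlinarith
  have h1i : IntegrableOn F (Ioi 1) := by
    have hexp : a + 2 * (α * δ - p) < -1 := by nlinarith
    have hig : IntegrableOn (fun s : ℝ => α ^ (-δ) * s ^ (a + 2 * (α * δ - p))) (Ioi 1) :=
      (integrableOn_Ioi_rpow_of_lt hexp one_pos).const_mul _
    apply Integrable.mono' hig hmeas.aestronglyMeasurable
    filter_upwards [ae_restrict_mem measurableSet_Ioi] with s hs
    have hs1 : (1:ℝ) ≤ s := le_of_lt hs
    have hs0 : 0 < s := lt_of_lt_of_le one_pos hs1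
    rw [Real.norm_eq_abs, abs_of_nonneg (hFnn s hs0.le)]
    have hlognn : (0:ℝ) ≤ Real.log (1 + s ^ 2) := Real.log_nonneg (by nlinarith)
    have e2 : Real.log (1 + s ^ 2) ^ δ ≤ α ^ (-δ) * (1 + s ^ 2) ^ (α * δ) := by
      calc Real.log (1 + s ^ 2) ^ δ ≤ ((1 + s ^ 2) ^ α / α) ^ δ := by
            apply Real.rpow_le_rpow hlognn (Real.log_le_rpow_div (by positivity) hαpos) hδ
        _ = α ^ (-δ) * (1 + s ^ 2) ^ (α * δ) := by
            rw [Real.div_rpow (by positivity) hαpos.le, ← Real.rpow_mul (by positivity),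
              Real.rpow_neg hαpos.le, div_eq_inv_mul]
    have e3 : (1 + s ^ 2) ^ (α * δ) * (1 + s ^ 2) ^ (-p) = (1 + s ^ 2) ^ (α * δ - p) := by
      rw [← Real.rpow_add (by positivity)]; ring_nf
    have e4 : (1 + s ^ 2) ^ (α * δ - p) ≤ s ^ (2 * (α * δ - p)) := by
      have : (s ^ 2 : ℝ) ≤ 1 + s ^ 2 := by nlinarith
      have hle : (1 + s ^ 2) ^ (α * δ - p) ≤ (s ^ 2) ^ (α * δ - p) := by
        apply Real.rpow_le_rpow_of_nonpos (by positivity) this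
        nlinarith
      calc (1 + s ^ 2) ^ (α * δ - p) ≤ (s ^ 2) ^ (α * δ - p) := hle
        _ = s ^ (2 * (α * δ - p)) := by
            rw [← Real.rpow_natCast s 2, ← Real.rpow_mul hs0.le]; norm_num
    calc F s = s ^ a * Real.log (1 + s ^ 2) ^ δ * (1 + s ^ 2) ^ (-p) := rfl
      _ ≤ s ^ a * (α ^ (-δ) * (1 + s ^ 2) ^ (α * δ)) * (1 + s ^ 2) ^ (-p) := by
          apply mul_le_mul_of_nonneg_right (mul_le_mul_of_nonneg_left e2 (by positivity))
            (by positivity)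
      _ = α ^ (-δ) * (s ^ a * ((1 + s ^ 2) ^ (α * δ) * (1 + s ^ 2) ^ (-p))) := by ring
      _ = α ^ (-δ) * (s ^ a * (1 + s ^ 2) ^ (α * δ - p)) := by rw [e3]
      _ ≤ α ^ (-δ) * (s ^ a * s ^ (2 * (α * δ - p))) := by
          apply mul_le_mul_of_nonneg_left (mul_le_mul_of_nonneg_left e4 (by positivity))
            (by positivity)
      _ = α ^ (-δ) * s ^ (a + 2 * (α * δ - p)) := by rw [← Real.rpow_add hs0]
  have : Ioc (0:ℝ) 1 ∪ Ioi 1 = Ioi 0 := Ioc_union_Ioi_eq_Ioi (by norm_num)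
  rw [← this]
  exact h01.union h1i

lemma chat_pos (N k : ℕ) (hk : 1 ≤ k) (hN : 2 * k < N) : 0 < chat N k := by
  have hk' : (1:ℝ) ≤ (k:ℝ) := by exact_mod_cast hk
  have hNk : 2 * (k:ℝ) < (N:ℝ) := by exact_mod_cast hN
  apply Real.rpow_pos_of_pos
  have h1 : (0:ℝ) < ((N:ℝ) - 2*(k:ℝ)) / (k:ℝ) := div_pos (by linarith) (by linarith)
  exact mul_pos (by linarith) (pow_pos h1 k)

lemma vstar_pow (N k : ℕ) (hk : 1 ≤ k) (hN : 2 * k < N) {ε s : ℝ}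
    (hε : 0 < ε) :
    vstar N k ε (ε * s) ^ kstar N k =
      chat N k ^ kstar N k * ε ^ (-(N:ℝ)) *
        (1 + s ^ 2) ^ (-(((k:ℝ) + 1) * (N:ℝ) / (2 * (k:ℝ)))) := by
  have hk' : (1:ℝ) ≤ (k:ℝ) := by exact_mod_cast hk
  have hNk : 2 * (k:ℝ) < (N:ℝ) := by exact_mod_cast hN
  have hc := chat_pos N k hk hN
  have h1s : (0:ℝ) < 1 + s ^ 2 := by positivity
  set m : ℝ := ((N:ℝ) - 2 * (k:ℝ)) / (2 * (k:ℝ)) with hm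
  have hεe : (0:ℝ) < ε ^ ((2:ℝ) / ((k:ℝ) + 1)) := Real.rpow_pos_of_pos hε _
  have key : ε ^ ((2:ℝ) / ((k:ℝ) + 1)) / (ε ^ 2 + (ε * s) ^ 2)
      = ε ^ ((2:ℝ) / ((k:ℝ) + 1) - 2) * (1 + s ^ 2)⁻¹ := by
    have h2 : ε ^ 2 + (ε * s) ^ 2 = ε ^ (2:ℝ) * (1 + s ^ 2) := by
      rw [show ε ^ (2:ℝ) = ε ^ (2:ℕ) by rw [← Real.rpow_natCast ε 2]; norm_num]
      ring
    rw [h2, div_mul_eq_div_div, ← Real.rpow_sub hε, div_eq_mul_inv]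
  have step : vstar N k ε (ε * s)
      = chat N k * (ε ^ (((2:ℝ) / ((k:ℝ) + 1) - 2) * m) * ((1 + s ^ 2) ^ m)⁻¹) := by
    rw [vstar, key, Real.mul_rpow (Real.rpow_pos_of_pos hε _).le (by positivity),
      ← Real.rpow_mul hε.le, Real.inv_rpow h1s.le]
  rw [step, Real.mul_rpow (by positivity) (by positivity),
    Real.mul_rpow (Real.rpow_pos_of_pos hε _).le (by positivity),
    ← Real.rpow_mul hε.le, ← Real.rpow_neg_one ((1 + s ^ 2) ^ m),
    ← Real.rpow_mul h1s.le, ← Real.rpow_mul h1s.le]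
  have hknz : (k:ℝ) ≠ 0 := by linarith
  have hk1nz : (k:ℝ) + 1 ≠ 0 := by linarith
  have hN2k : (N:ℝ) - 2 * (k:ℝ) ≠ 0 := by linarith
  have e1 : ((2:ℝ) / ((k:ℝ) + 1) - 2) * m * kstar N k = -(N:ℝ) := by
    rw [hm, kstar]; field_simp; ring
  have e2 : m * (-1) * kstar N k = -(((k:ℝ) + 1) * (N:ℝ) / (2 * (k:ℝ))) := by
    rw [hm, kstar]; field_simp
  rw [e1, e2, mul_assoc]

lemma integrand_eq (N k : ℕ) (hk : 1 ≤ k) (hN : 2 * k < N) (β δ : ℝ) {ε s : ℝ}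
    (hε : 0 < ε) (hs : 0 ≤ s) :
    (ε * s) ^ ((N:ℝ) + β - 1) * vstar N k ε (ε * s) ^ kstar N k *
        Real.log (1 + (ε * s) ^ 2 / ε ^ 2) ^ δ
      = ε ^ (β - 1) * (chat N k ^ kstar N k *
          (s ^ ((N:ℝ) + β - 1) * Real.log (1 + s ^ 2) ^ δ *
            (1 + s ^ 2) ^ (-(((k:ℝ) + 1) * (N:ℝ) / (2 * (k:ℝ)))))) := by
  have hεne : ε ≠ 0 := hε.ne'
  have hlog : (1 + (ε * s) ^ 2 / ε ^ 2) = 1 + s ^ 2 := by field_simp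
  rw [hlog, Real.mul_rpow hε.le hs, vstar_pow N k hk hN hε]
  have hεβ : ε ^ (β - 1) = ε ^ ((N:ℝ) + β - 1) * ε ^ (-(N:ℝ)) := by
    rw [← Real.rpow_add hε]; ring_nf
  rw [hεβ]; ring



/-- **Sharp instanton integral asymptotics, subcritical weight case `β < N/k`.**
The limit integral `J` is finite and
`ε^{-β} ∫_0^{ε^γ} r^{N+β-1} (v*_ε)^{k*} (log(1+r²/ε²))^δ dr → ĉ^{k*} J` as `ε → 0⁺`. -/
theorem instanton_subcritical (N k : ℕ) (hk : 1 ≤ k) (hN : 2 * k < N)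
    (β δ γ : ℝ) (hβ0 : 0 ≤ β) (hβ : β < (N : ℝ) / (k : ℝ)) (hδ : 0 ≤ δ)
    (hγ : γ ∈ Set.Ioo (0:ℝ) 1) :
    MeasureTheory.IntegrableOn
      (fun s : ℝ => s ^ ((N : ℝ) + β - 1) * Real.log (1 + s ^ 2) ^ δ *
        (1 + s ^ 2) ^ (-(((k : ℝ) + 1) * (N : ℝ) / (2 * (k : ℝ))))) (Set.Ioi 0) ∧
    Filter.Tendsto
      (fun ε : ℝ => ε ^ (-β) *
        ∫ r in Set.Ioo (0:ℝ) (ε ^ γ),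
          r ^ ((N : ℝ) + β - 1) * vstar N k ε r ^ kstar N k *
            Real.log (1 + r ^ 2 / ε ^ 2) ^ δ)
      (nhdsWithin 0 (Set.Ioi 0))
      (nhds (chat N k ^ kstar N k *
        ∫ s in Set.Ioi (0:ℝ),
          s ^ ((N : ℝ) + β - 1) * Real.log (1 + s ^ 2) ^ δ *
            (1 + s ^ 2) ^ (-(((k : ℝ) + 1) * (N : ℝ) / (2 * (k : ℝ)))))) := by
  
  have hk' : (1:ℝ) ≤ (k:ℝ) := by exact_mod_cast hk
  have hNk : 2 * (k:ℝ) < (N:ℝ) := by exact_mod_cast hN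
  have hknz : (k:ℝ) ≠ 0 := by linarith
  set p : ℝ := ((k:ℝ) + 1) * (N:ℝ) / (2 * (k:ℝ)) with hp
  set F : ℝ → ℝ := fun s => s ^ ((N:ℝ) + β - 1) * Real.log (1 + s ^ 2) ^ δ *
    (1 + s ^ 2) ^ (-p) with hFdef
  have h2p : 2 * p = (N:ℝ) + (N:ℝ) / (k:ℝ) := by rw [hp]; field_simp
  have hFint : IntegrableOn F (Ioi 0) := by
    apply Fint
    · linarith
    · exact hδ
    · linarith
  refine ⟨hFint, ?_⟩
  set C : ℝ := chat N k ^ kstar N k with hC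
  have htop : Tendsto (fun ε : ℝ => ε ^ (γ - 1)) (nhdsWithin 0 (Ioi 0)) atTop := by
    have h1γ : (0:ℝ) < 1 - γ := by linarith [hγ.2]
    refine ((tendsto_rpow_atTop h1γ).comp tendsto_inv_nhdsGT_zero).congr' ?_
    filter_upwards [self_mem_nhdsWithin] with ε hε
    have hε : (0:ℝ) < ε := hε
    simp only [Function.comp_apply]
    rw [← Real.rpow_neg_one ε, ← Real.rpow_mul hε.le]
    ring_nf
  have hmain : Tendsto (fun ε : ℝ => C * ∫ s in (0:ℝ)..(ε ^ (γ - 1)), F s)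
      (nhdsWithin 0 (Ioi 0)) (nhds (C * ∫ s in Ioi (0:ℝ), F s)) :=
    (intervalIntegral_tendsto_integral_Ioi 0 hFint htop).const_mul C
  refine hmain.congr' ?_
  filter_upwards [self_mem_nhdsWithin] with ε hε
  have hε : (0:ℝ) < ε := hε
  set G : ℝ → ℝ := fun r => r ^ ((N:ℝ) + β - 1) * vstar N k ε r ^ kstar N k *
    Real.log (1 + r ^ 2 / ε ^ 2) ^ δ with hG
  set T : ℝ := ε ^ (γ - 1) with hT
  have hTpos : 0 < T := Real.rpow_pos_of_pos hε _
  have hγpos : 0 < ε ^ γ := Real.rpow_pos_of_pos hε _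
  have hεγ : ε ^ γ = ε * T := by
    rw [hT]
    nth_rewrite 1 [show γ = 1 + (γ - 1) by ring]
    rw [Real.rpow_add hε, Real.rpow_one]
  have step1 : (∫ r in Ioo (0:ℝ) (ε ^ γ), G r) = ∫ r in (0:ℝ)..(ε ^ γ), G r := by
    rw [intervalIntegral.integral_of_le hγpos.le, integral_Ioc_eq_integral_Ioo]
  have step2 : (ε • ∫ x in (0:ℝ)..T, G (ε * x)) = ∫ r in (0:ℝ)..(ε * T), G r := by
    have := intervalIntegral.smul_integral_comp_mul_left (a := 0) (b := T) G ε
    rwa [mul_zero] at this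
  have step3 : (∫ x in (0:ℝ)..T, G (ε * x)) = ∫ x in (0:ℝ)..T, ε ^ (β - 1) * (C * F x) := by
    apply intervalIntegral.integral_congr
    intro x hx
    rw [uIcc_of_le hTpos.le] at hx
    exact integrand_eq N k hk hN β δ hε hx.1
  have step4 : (∫ x in (0:ℝ)..T, ε ^ (β - 1) * (C * F x))
      = ε ^ (β - 1) * (C * ∫ x in (0:ℝ)..T, F x) := by
    rw [intervalIntegral.integral_const_mul, intervalIntegral.integral_const_mul]
  have hcancel : ε ^ (-β) * (ε * ε ^ (β - 1)) = 1 := by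
    nth_rewrite 2 [show ε = ε ^ (1:ℝ) by rw [Real.rpow_one]]
    rw [← Real.rpow_add hε, ← Real.rpow_add hε]
    norm_num
  calc C * ∫ s in (0:ℝ)..T, F s
      = ε ^ (-β) * (ε * ε ^ (β - 1)) * (C * ∫ s in (0:ℝ)..T, F s) := by
        rw [hcancel, one_mul]
    _ = ε ^ (-β) * (ε • ∫ x in (0:ℝ)..T, G (ε * x)) := by
        rw [step3, step4, smul_eq_mul]; ring
    _ = ε ^ (-β) * ∫ r in Ioo (0:ℝ) (ε ^ γ), G r := by
        rw [step2, step1, hεγ]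
end

section
/- (Sharp instanton integral asymptotics, critical weight case.) Let δ ≥ 0 be a real number and γ ∈ (0,1). Then, with β = N/k, lim_{ε→0⁺} [ε^{N/k} (−log ε)^{δ+1}]^{−1} ∫_0^{ε^γ} r^{N+β−1} (v*_ε(r))^{k*} (log(1 + r²/ε²))^δ dr = ĉ^{k*} (2(1−γ))^{δ+1} / (2(δ+1)). -/
open MeasureTheory Real Set Filter Asymptotics
open Topology

namespace InstantonAux


noncomputable def Lf (s : ℝ) : ℝ := Real.log (1 + s ^ 2)

noncomputable def gf (m δ s : ℝ) : ℝ := s ^ (2*m-1) * (1+s^2) ^ (-m) * Lf s ^ δ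

noncomputable def hf (δ s : ℝ) : ℝ := s / (1+s^2) * Lf s ^ δ

noncomputable def Hf (δ s : ℝ) : ℝ := Lf s ^ (δ+1) / (2*(δ+1))

lemma one_add_sq_pos (s : ℝ) : 0 < 1 + s^2 := by positivity

lemma Lf_nonneg (s : ℝ) : 0 ≤ Lf s := log_nonneg (by nlinarith [sq_nonneg s])

lemma Lf_mono {s t : ℝ} (h : s ≤ t) (hs : 0 ≤ s) : Lf s ≤ Lf t := by
  apply Real.log_le_log (one_add_sq_pos s)
  nlinarith

lemma measurable_Lf : Measurable Lf := (measurable_const.add (measurable_id.pow_const 2)).log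

lemma measurable_gf (m δ : ℝ) : Measurable (gf m δ) := by unfold gf Lf; measurability

lemma measurable_hf (δ : ℝ) : Measurable (hf δ) := by unfold hf Lf; measurability

lemma hf_nonneg (δ : ℝ) {s : ℝ} (hs : 0 ≤ s) : 0 ≤ hf δ s :=
  mul_nonneg (div_nonneg hs (one_add_sq_pos s).le) (rpow_nonneg (Lf_nonneg s) δ)

lemma gf_nonneg (m δ : ℝ) {s : ℝ} (hs : 0 ≤ s) : 0 ≤ gf m δ s :=
  mul_nonneg (mul_nonneg (rpow_nonneg hs _) (rpow_nonneg (one_add_sq_pos s).le _))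
    (rpow_nonneg (Lf_nonneg s) _)

lemma gf_eq (m δ : ℝ) {s : ℝ} (hs : 0 < s) :
    gf m δ s = hf δ s * (s^2/(1+s^2)) ^ (m-1) := by
  have hP := one_add_sq_pos s
  have h1 : s ^ (2*m-1) = s * (s^2) ^ (m-1) := by
    rw [show 2*m-1 = 1+2*(m-1) by ring, rpow_add hs, rpow_one]
    congr 1
    rw [← rpow_natCast s 2, ← rpow_mul hs.le]
    norm_num
  have h2 : (1+s^2) ^ (-m) = (1+s^2)⁻¹ * ((1+s^2) ^ (m-1))⁻¹ := by
    rw [show -m = (-1) + -(m-1) by ring, rpow_add hP, rpow_neg_one, rpow_neg hP.le]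
  rw [gf, hf, h1, h2, div_rpow (sq_nonneg s) hP.le]
  ring

lemma ratio_le_one (m : ℝ) (hm : 2 ≤ m) (s : ℝ) : (s^2/(1+s^2)) ^ (m-1) ≤ 1 := by
  have hP := one_add_sq_pos s
  exact rpow_le_one (by positivity) (by rw [div_le_one hP]; linarith) (by linarith)

lemma gf_le_hf (m δ : ℝ) (hm : 2 ≤ m) {s : ℝ} (hs : 0 < s) : gf m δ s ≤ hf δ s := by
  rw [gf_eq m δ hs]
  calc hf δ s * (s^2/(1+s^2)) ^ (m-1) ≤ hf δ s * 1 :=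
        mul_le_mul_of_nonneg_left (ratio_le_one m hm s) (hf_nonneg δ hs.le)
    _ = hf δ s := mul_one _


lemma hf_sub_gf_le (m δ : ℝ) (hm : 2 ≤ m) (hδ : 0 ≤ δ) {s : ℝ} (hs : 0 < s) :
    hf δ s - gf m δ s ≤ ((m-1) * (4*(δ+1))^δ) * (1+s^2) ^ (-(5/4) : ℝ) := by
  have hP := one_add_sq_pos s
  set q : ℝ := 1/(4*(δ+1)) with hq
  have hq0 : 0 < q := by rw [hq]; positivity
  -- Bernoulli bound on 1 - x^(m-1)
  have hbern : 1 - (s^2/(1+s^2)) ^ (m-1) ≤ (m-1) * (1+s^2)⁻¹ := by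
    have h := one_add_mul_self_le_rpow_one_add
      (s := s^2/(1+s^2) - 1) (by
        have : 0 ≤ s^2/(1+s^2) := by positivity
        linarith) (p := m-1) (by linarith)
    have hx : 1 + (s^2/(1+s^2) - 1) = s^2/(1+s^2) := by ring
    rw [hx] at h
    have h1x : 1 - s^2/(1+s^2) = (1+s^2)⁻¹ := by field_simp; ring
    nlinarith [h]
  -- bound on s/(1+s^2)
  have hpiece1 : s/(1+s^2) ≤ (1+s^2) ^ (-(1/2) : ℝ) := by
    have hsqrt : s ≤ (1+s^2) ^ ((1:ℝ)/2) := by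
      rw [← Real.sqrt_eq_rpow]
      rw [show (1:ℝ)+s^2 = s^2 + 1 by ring]
      nlinarith [Real.sq_sqrt (by positivity : (0:ℝ) ≤ s^2+1),
        Real.sqrt_nonneg (s^2+1), hs]
    calc s/(1+s^2) ≤ (1+s^2) ^ ((1:ℝ)/2) / (1+s^2) := by gcongr
      _ = (1+s^2) ^ (-(1/2) : ℝ) := by
          rw [show (-(1/2) : ℝ) = 1/2 - 1 by norm_num, rpow_sub hP, rpow_one]
  -- bound on Lf^δ
  have hpiece2 : Lf s ^ δ ≤ (4*(δ+1))^δ * (1+s^2) ^ (q*δ) := by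
    have hL : Lf s ≤ (1+s^2) ^ q / q := log_le_rpow_div hP.le hq0
    have := rpow_le_rpow (Lf_nonneg s) hL hδ
    calc Lf s ^ δ ≤ ((1+s^2) ^ q / q) ^ δ := this
      _ = ((1+s^2) ^ q) ^ δ / q ^ δ := div_rpow (rpow_nonneg hP.le q) hq0.le δ
      _ = (1+s^2) ^ (q*δ) / q ^ δ := by rw [← rpow_mul hP.le]
      _ = (4*(δ+1))^δ * (1+s^2) ^ (q*δ) := by
          have h1q : q ^ δ = ((4*(δ+1):ℝ)^δ)⁻¹ := by
            rw [hq, div_rpow zero_le_one (by positivity), one_rpow, one_div]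
          rw [h1q]; field_simp
  have hfactor : hf δ s - gf m δ s
      = (s/(1+s^2)) * Lf s ^ δ * (1 - (s^2/(1+s^2)) ^ (m-1)) := by
    rw [gf_eq m δ hs, hf]; ring
  rw [hfactor]
  have h1mx : 0 ≤ 1 - (s^2/(1+s^2)) ^ (m-1) := by
    have := ratio_le_one m hm s; linarith
  have step : (s/(1+s^2)) * Lf s ^ δ * (1 - (s^2/(1+s^2)) ^ (m-1))
      ≤ (1+s^2)^(-(1/2):ℝ) * ((4*(δ+1))^δ * (1+s^2)^(q*δ)) * ((m-1)*(1+s^2)⁻¹) := by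
    apply mul_le_mul
      (mul_le_mul hpiece1 hpiece2 (rpow_nonneg (Lf_nonneg s) δ) (rpow_nonneg hP.le _))
      hbern h1mx (by positivity)
  refine step.trans ?_
  have hcollapse : (1+s^2)^(-(1/2):ℝ) * ((4*(δ+1))^δ * (1+s^2)^(q*δ)) * ((m-1)*(1+s^2)⁻¹)
      = ((m-1) * (4*(δ+1))^δ) * (1+s^2) ^ (-(1/2) + q*δ + (-1) : ℝ) := by
    rw [rpow_add hP, rpow_add hP, rpow_neg_one]
    ring
  rw [hcollapse]
  apply mul_le_mul_of_nonneg_left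
  · apply rpow_le_rpow_of_exponent_le (by nlinarith)
    have hqd : q*δ ≤ 1/4 := by
      rw [hq, div_mul_eq_mul_div, one_mul, div_le_div_iff₀ (by positivity) (by norm_num)]
      linarith
    linarith
  · have : (0:ℝ) ≤ (4*(δ+1))^δ := rpow_nonneg (by positivity) δ
    nlinarith


lemma integrable_psi : IntegrableOn (fun s : ℝ => (1+s^2) ^ (-(5/4) : ℝ)) (Ioi 0) := by
  have hmeas : Measurable (fun s : ℝ => (1+s^2) ^ (-(5/4) : ℝ)) := by measurability
  have h1 : IntegrableOn (fun s : ℝ => (1+s^2) ^ (-(5/4) : ℝ)) (Ioc 0 1) := by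
    apply Measure.integrableOn_of_bounded (M := 1) measure_Ioc_lt_top.ne
      hmeas.aestronglyMeasurable
    filter_upwards with a
    rw [Real.norm_eq_abs, abs_of_nonneg (rpow_nonneg (one_add_sq_pos a).le _)]
    exact rpow_le_one_of_one_le_of_nonpos (by nlinarith [sq_nonneg a]) (by norm_num)
  have h2 : IntegrableOn (fun s : ℝ => (1+s^2) ^ (-(5/4) : ℝ)) (Ioi 1) := by
    apply Integrable.mono'
      (integrableOn_Ioi_rpow_of_lt (by norm_num : (-(5/2):ℝ) < -1) one_pos)
      hmeas.aestronglyMeasurable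
    filter_upwards [ae_restrict_mem measurableSet_Ioi] with a ha
    rw [Real.norm_eq_abs, abs_of_nonneg (rpow_nonneg (one_add_sq_pos a).le _)]
    have ha1 : (1:ℝ) < a := ha
    calc (1+a^2) ^ (-(5/4):ℝ) ≤ (a^2) ^ (-(5/4):ℝ) :=
          rpow_le_rpow_of_nonpos (by positivity) (by linarith) (by norm_num)
      _ = a ^ (-(5/2):ℝ) := by
          rw [← rpow_natCast a 2, ← rpow_mul (by linarith : (0:ℝ) ≤ a)]
          norm_num
  have h := h1.union h2
  rwa [Ioc_union_Ioi_eq_Ioi (by norm_num : (0:ℝ) ≤ 1)] at h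

lemma integrable_diff (m δ : ℝ) (hm : 2 ≤ m) (hδ : 0 ≤ δ) :
    IntegrableOn (fun s => hf δ s - gf m δ s) (Ioi 0) := by
  apply Integrable.mono' (integrable_psi.const_mul ((m-1) * (4*(δ+1))^δ))
    ((measurable_hf δ).sub (measurable_gf m δ)).aestronglyMeasurable
  filter_upwards [ae_restrict_mem measurableSet_Ioi] with a ha
  have h0 : (0:ℝ) < a := ha
  rw [Real.norm_eq_abs, Pi.sub_apply, abs_of_nonneg (sub_nonneg.mpr (gf_le_hf m δ hm h0))]
  exact hf_sub_gf_le m δ hm hδ h0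

lemma hf_le_bound (δ : ℝ) (hδ : 0 ≤ δ) {T a : ℝ} (ha : a ∈ Ioc 0 T) :
    hf δ a ≤ Lf T ^ δ := by
  obtain ⟨ha0, haT⟩ := ha
  calc hf δ a = a/(1+a^2) * Lf a ^ δ := rfl
    _ ≤ 1 * Lf T ^ δ := by
        apply mul_le_mul _ (rpow_le_rpow (Lf_nonneg a) (Lf_mono haT ha0.le) hδ)
          (rpow_nonneg (Lf_nonneg a) δ) zero_le_one
        rw [div_le_one (one_add_sq_pos a)]
        nlinarith [sq_nonneg (a-1), ha0.le]
    _ = Lf T ^ δ := one_mul _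

lemma integrableOn_hf_Ioc (δ : ℝ) (hδ : 0 ≤ δ) {T : ℝ} (hT : 0 < T) :
    IntegrableOn (hf δ) (Ioc 0 T) := by
  apply Measure.integrableOn_of_bounded (M := Lf T ^ δ) measure_Ioc_lt_top.ne
    (measurable_hf δ).aestronglyMeasurable
  filter_upwards [ae_restrict_mem measurableSet_Ioc] with a ha
  rw [Real.norm_eq_abs, abs_of_nonneg (hf_nonneg δ ha.1.le)]
  exact hf_le_bound δ hδ ha

lemma integrableOn_gf_Ioc (m δ : ℝ) (hm : 2 ≤ m) (hδ : 0 ≤ δ) {T : ℝ} (hT : 0 < T) :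
    IntegrableOn (gf m δ) (Ioc 0 T) := by
  apply Measure.integrableOn_of_bounded (M := Lf T ^ δ) measure_Ioc_lt_top.ne
    (measurable_gf m δ).aestronglyMeasurable
  filter_upwards [ae_restrict_mem measurableSet_Ioc] with a ha
  rw [Real.norm_eq_abs, abs_of_nonneg (gf_nonneg m δ ha.1.le)]
  exact (gf_le_hf m δ hm ha.1).trans (hf_le_bound δ hδ ha)

lemma hasDerivAt_Hf (δ : ℝ) (hδ : 0 ≤ δ) (s : ℝ) : HasDerivAt (Hf δ) (hf δ s) s := by
  have hP := one_add_sq_pos s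
  have h1 : HasDerivAt (fun s : ℝ => 1 + s^2) (2*s) s := by
    simpa using ((hasDerivAt_pow 2 s).const_add 1)
  have h2 : HasDerivAt Lf (2*s/(1+s^2)) s := h1.log hP.ne'
  have h3 : HasDerivAt (fun y : ℝ => y ^ (δ+1)) ((δ+1) * Lf s ^ δ) (Lf s) := by
    have h := Real.hasDerivAt_rpow_const (x := Lf s) (p := δ+1) (Or.inr (by linarith))
    simpa using h
  have h5 := (h3.comp s h2).div_const (2*(δ+1))
  refine h5.congr_deriv ?_
  unfold hf
  field_simp

lemma integral_hf (δ : ℝ) (hδ : 0 ≤ δ) {T : ℝ} (hT : 0 < T) :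
    ∫ s in Ioo (0:ℝ) T, hf δ s = Hf δ T := by
  have hFTC := intervalIntegral.integral_eq_sub_of_hasDerivAt
    (f := Hf δ) (f' := hf δ) (a := 0) (b := T)
    (fun s _ => hasDerivAt_Hf δ hδ s)
    (by
      rw [intervalIntegrable_iff, uIoc_of_le hT.le]
      exact integrableOn_hf_Ioc δ hδ hT)
  rw [intervalIntegral.integral_of_le hT.le, integral_Ioc_eq_integral_Ioo] at hFTC
  rw [hFTC]
  have hL0 : Lf 0 = 0 := by unfold Lf; norm_num
  have h0 : Hf δ 0 = 0 := by
    unfold Hf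
    rw [hL0, zero_rpow (by positivity : δ+1 ≠ 0), zero_div]
  rw [h0, sub_zero]


lemma tendsto_Hf_div (δ : ℝ) (hδ : 0 ≤ δ) :
    Tendsto (fun T => Hf δ T / Real.log T ^ (δ+1)) atTop (𝓝 (2^δ/(δ+1))) := by
  have hratio : Tendsto (fun T => Lf T / Real.log T) atTop (𝓝 2) := by
    have h2 : Tendsto (fun T : ℝ => 1 + (T^2)⁻¹) atTop (𝓝 1) := by
      have h : Tendsto (fun T : ℝ => (T^2)⁻¹) atTop (𝓝 0) :=
        (tendsto_pow_atTop (by norm_num : (2:ℕ) ≠ 0)).inv_tendsto_atTop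
      simpa using tendsto_const_nhds.add h
    have h1 : Tendsto (fun T : ℝ => Real.log (1 + (T^2)⁻¹)) atTop (𝓝 0) := by
      have h := (Real.continuousAt_log one_ne_zero).tendsto.comp h2
      simpa [Function.comp_def] using h
    have h3 : Tendsto (fun T : ℝ => 2 + Real.log (1+(T^2)⁻¹) * (Real.log T)⁻¹) atTop (𝓝 2) := by
      have hinv : Tendsto (fun T : ℝ => (Real.log T)⁻¹) atTop (𝓝 0) :=
        Real.tendsto_log_atTop.inv_tendsto_atTop
      have h := h1.mul hinv
      simpa using tendsto_const_nhds.add h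
    apply h3.congr'
    filter_upwards [eventually_gt_atTop 1] with T hT
    have hT0 : (0:ℝ) < T := lt_trans one_pos hT
    have hlogT : Real.log T ≠ 0 := (Real.log_pos hT).ne'
    have hsplit : Lf T = 2 * Real.log T + Real.log (1+(T^2)⁻¹) := by
      unfold Lf
      rw [show (1:ℝ) + T^2 = T^2 * (1+(T^2)⁻¹) by field_simp; ring,
        Real.log_mul (by positivity) (by positivity), Real.log_pow]
      push_cast
      ring
    rw [hsplit]
    field_simp
  have hpow : Tendsto (fun T => (Lf T / Real.log T) ^ (δ+1)) atTop (𝓝 ((2:ℝ) ^ (δ+1))) :=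
    hratio.rpow_const (Or.inl two_ne_zero)
  have hdiv := hpow.div_const (2*(δ+1))
  have hval : (2:ℝ) ^ (δ+1) / (2*(δ+1)) = 2^δ/(δ+1) := by
    rw [rpow_add_one two_ne_zero, div_eq_div_iff (by positivity) (by positivity)]
    ring
  rw [hval] at hdiv
  apply hdiv.congr'
  filter_upwards [eventually_gt_atTop 1] with T hT
  have hlog0 : (0:ℝ) ≤ Real.log T := Real.log_nonneg hT.le
  rw [div_rpow (Lf_nonneg T) hlog0]
  unfold Hf
  ring

lemma tendsto_main (m δ : ℝ) (hm : 2 ≤ m) (hδ : 0 ≤ δ) :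
    Tendsto (fun T => (∫ s in Ioo (0:ℝ) T, gf m δ s) / Real.log T ^ (δ+1)) atTop
      (𝓝 (2^δ/(δ+1))) := by
  set C := ∫ s in Ioi (0:ℝ), (hf δ s - gf m δ s) with hC
  have hEb : ∀ T : ℝ, 0 < T → (0 ≤ ∫ s in Ioo (0:ℝ) T, (hf δ s - gf m δ s)) ∧
      (∫ s in Ioo (0:ℝ) T, (hf δ s - gf m δ s)) ≤ C := by
    intro T hT
    constructor
    · apply setIntegral_nonneg measurableSet_Ioo
      intro a ha; exact sub_nonneg.mpr (gf_le_hf m δ hm ha.1)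
    · apply setIntegral_mono_set (integrable_diff m δ hm hδ)
      · filter_upwards [ae_restrict_mem measurableSet_Ioi] with a ha
        exact sub_nonneg.mpr (gf_le_hf m δ hm ha)
      · exact HasSubset.Subset.eventuallyLE Ioo_subset_Ioi_self
  have hE0 : Tendsto (fun T => (∫ s in Ioo (0:ℝ) T, (hf δ s - gf m δ s))
      / Real.log T ^ (δ+1)) atTop (𝓝 0) := by
    have hup : Tendsto (fun T : ℝ => C * (Real.log T ^ (δ+1))⁻¹) atTop (𝓝 0) := by
      have h : Tendsto (fun T : ℝ => (Real.log T ^ (δ+1))⁻¹) atTop (𝓝 0) :=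
        ((tendsto_rpow_atTop (by positivity : (0:ℝ) < δ+1)).comp
          Real.tendsto_log_atTop).inv_tendsto_atTop
      simpa using h.const_mul C
    apply squeeze_zero' ?_ ?_ hup
    · filter_upwards [eventually_gt_atTop 1] with T hT
      exact div_nonneg (hEb T (lt_trans one_pos hT)).1
        (rpow_nonneg (Real.log_nonneg hT.le) _)
    · filter_upwards [eventually_gt_atTop 1] with T hT
      rw [div_eq_mul_inv]
      apply mul_le_mul_of_nonneg_right (hEb T (lt_trans one_pos hT)).2
      have : (0:ℝ) ≤ Real.log T ^ (δ+1) := rpow_nonneg (Real.log_nonneg hT.le) _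
      positivity
  have hmain := (tendsto_Hf_div δ hδ).sub hE0
  rw [sub_zero] at hmain
  apply hmain.congr'
  filter_upwards [eventually_gt_atTop 1] with T hT
  have hT0 : (0:ℝ) < T := lt_trans one_pos hT
  have hint1 : IntegrableOn (hf δ) (Ioo (0:ℝ) T) :=
    (integrableOn_hf_Ioc δ hδ hT0).mono_set Ioo_subset_Ioc_self
  have hint2 : IntegrableOn (fun s => hf δ s - gf m δ s) (Ioo (0:ℝ) T) :=
    hint1.sub ((integrableOn_gf_Ioc m δ hm hδ hT0).mono_set Ioo_subset_Ioc_self)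
  have hdecomp : ∫ s in Ioo (0:ℝ) T, gf m δ s
      = Hf δ T - ∫ s in Ioo (0:ℝ) T, (hf δ s - gf m δ s) := by
    have h1 : ∫ s in Ioo (0:ℝ) T, gf m δ s
        = ∫ s in Ioo (0:ℝ) T, (hf δ s - (hf δ s - gf m δ s)) := by
      simp only [sub_sub_cancel]
    rw [h1, integral_sub hint1 hint2, integral_hf δ hδ hT0]
  rw [hdecomp, sub_div]

lemma tendsto_eps (γ : ℝ) (hγ : γ < 1) :
    Tendsto (fun ε : ℝ => ε ^ (γ-1)) (nhdsWithin 0 (Ioi 0)) atTop := by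
  have h : Tendsto (fun ε : ℝ => Real.exp ((γ-1) * Real.log ε)) (nhdsWithin 0 (Ioi 0)) atTop := by
    apply Real.tendsto_exp_atTop.comp
    exact (tendsto_const_mul_atTop_of_neg (by linarith : γ-1 < 0)).mpr
      Real.tendsto_log_nhdsGT_zero
  apply h.congr'
  filter_upwards [self_mem_nhdsWithin] with ε hε
  rw [Real.rpow_def_of_pos hε]
  ring_nf


lemma chat_pos (N k : ℕ) (hk0 : (0:ℝ) < k) (hNk : 2*(k:ℝ) < (N:ℝ)) : 0 < chat N k := by
  have hN0 : (0:ℝ) < N := by linarith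
  exact rpow_pos_of_pos (mul_pos hN0 (pow_pos (div_pos (by linarith) hk0) k)) _

lemma vstar_rpow (N k : ℕ) (hk0 : (0:ℝ) < k) (hNk : 2*(k:ℝ) < (N:ℝ)) {ε : ℝ}
    (hε : 0 < ε) (r : ℝ) :
    vstar N k ε r ^ kstar N k
      = chat N k ^ kstar N k * (ε ^ ((N:ℝ)/(k:ℝ)) *
          (ε^2 + r^2) ^ (-((N:ℝ)*((k:ℝ)+1)/(2*(k:ℝ))))) := by
  have hN0 : (0:ℝ) < N := by linarith
  have hB : (0:ℝ) < ε^2 + r^2 := by positivity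
  have hA : (0:ℝ) < ε ^ ((2:ℝ)/((k:ℝ)+1)) := rpow_pos_of_pos hε _
  have hAB : (0:ℝ) ≤ ε ^ ((2:ℝ)/((k:ℝ)+1)) / (ε^2+r^2) := (div_pos hA hB).le
  have hNk2 : (N:ℝ) - 2*(k:ℝ) ≠ 0 := by linarith
  have hk' : (k:ℝ) ≠ 0 := hk0.ne'
  have hk1 : (k:ℝ) + 1 ≠ 0 := by positivity
  unfold vstar
  rw [mul_rpow (chat_pos N k hk0 hNk).le (rpow_nonneg hAB _)]
  congr 1
  rw [← Real.rpow_mul hAB]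
  rw [show ((N:ℝ)-2*(k:ℝ))/(2*(k:ℝ)) * kstar N k = (N:ℝ)*((k:ℝ)+1)/(2*(k:ℝ)) from by
    unfold kstar; field_simp]
  rw [div_rpow hA.le hB.le, div_eq_mul_inv, ← rpow_neg hB.le]
  congr 1
  rw [← Real.rpow_mul hε.le]
  congr 1
  field_simp

lemma key_integral (N k : ℕ) (hk0 : (0:ℝ) < k) (hNk : 2*(k:ℝ) < (N:ℝ))
    (δ γ : ℝ) {ε : ℝ} (hε : 0 < ε) :
    (∫ r in Ioo (0:ℝ) (ε ^ γ),
        r ^ ((N:ℝ) + (N:ℝ)/(k:ℝ) - 1) * vstar N k ε r ^ kstar N k *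
          Real.log (1 + r ^ 2 / ε ^ 2) ^ δ)
      = chat N k ^ kstar N k * ε ^ ((N:ℝ)/(k:ℝ)) *
          ∫ s in Ioo (0:ℝ) (ε ^ (γ-1)), gf ((N:ℝ)*((k:ℝ)+1)/(2*(k:ℝ))) δ s := by
  set m : ℝ := (N:ℝ)*((k:ℝ)+1)/(2*(k:ℝ)) with hm_def
  set c : ℝ := chat N k ^ kstar N k with hc_def
  have hN0 : (0:ℝ) < N := by linarith
  have hk' : (k:ℝ) ≠ 0 := hk0.ne'
  have h2m : (N:ℝ) + (N:ℝ)/(k:ℝ) - 1 = 2*m - 1 := by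
    rw [hm_def]; field_simp
  set T : ℝ := ε ^ (γ-1) with hT_def
  have hT0 : 0 < T := rpow_pos_of_pos hε _
  have hstep1 : EqOn
      (fun r : ℝ => r ^ ((N:ℝ) + (N:ℝ)/(k:ℝ) - 1) * vstar N k ε r ^ kstar N k *
        Real.log (1 + r^2/ε^2) ^ δ)
      (fun r : ℝ => c * ε ^ ((N:ℝ)/(k:ℝ)) *
        (r ^ (2*m-1) * (ε^2+r^2) ^ (-m) * Real.log (1+r^2/ε^2) ^ δ))
      (Ioo (0:ℝ) (ε^γ)) := by
    intro r _
    simp only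
    rw [h2m, vstar_rpow N k hk0 hNk hε r, ← hc_def]
    ring
  rw [setIntegral_congr_fun measurableSet_Ioo hstep1, integral_const_mul]
  congr 1
  have hγT : ε ^ γ = ε * T := by
    calc ε ^ γ = ε ^ ((1:ℝ)+(γ-1)) := by norm_num
      _ = ε ^ (1:ℝ) * ε ^ (γ-1) := rpow_add hε _ _
      _ = ε * T := by rw [rpow_one, hT_def]
  rw [← integral_Ioc_eq_integral_Ioo,
    ← intervalIntegral.integral_of_le (by positivity : (0:ℝ) ≤ ε^γ)]
  rw [show (∫ s in Ioo (0:ℝ) T, gf m δ s) = ∫ s in (0:ℝ)..T, gf m δ s from by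
    rw [intervalIntegral.integral_of_le hT0.le, integral_Ioc_eq_integral_Ioo]]
  rw [hγT]
  have hcomp := intervalIntegral.smul_integral_comp_mul_left
    (f := fun r => r ^ (2*m-1) * (ε^2+r^2) ^ (-m) * Real.log (1+r^2/ε^2) ^ δ)
    (a := 0) (b := T) ε
  rw [mul_zero] at hcomp
  rw [← hcomp]
  have hptw : EqOn
      (fun s : ℝ => (ε*s) ^ (2*m-1) * (ε^2+(ε*s)^2) ^ (-m) *
        Real.log (1+(ε*s)^2/ε^2) ^ δ)
      (fun s : ℝ => ε⁻¹ * gf m δ s) (uIcc (0:ℝ) T) := by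
    intro s hs
    rw [uIcc_of_le hT0.le] at hs
    have hs0 : 0 ≤ s := hs.1
    simp only
    have e1 : (ε*s) ^ (2*m-1) = ε ^ (2*m-1) * s ^ (2*m-1) := mul_rpow hε.le hs0
    have e2 : ε^2 + (ε*s)^2 = ε^2 * (1+s^2) := by ring
    have e3 : (ε^2*(1+s^2)) ^ (-m) = ε ^ (-(2*m)) * (1+s^2) ^ (-m) := by
      rw [mul_rpow (sq_nonneg ε) (one_add_sq_pos s).le]
      congr 1
      rw [← rpow_natCast ε 2, ← Real.rpow_mul hε.le]
      congr 1
      push_cast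
      ring
    have e4 : 1 + (ε*s)^2/ε^2 = 1 + s^2 := by
      field_simp
    have e5 : ε ^ (2*m-1) * ε ^ (-(2*m)) = ε⁻¹ := by
      rw [← rpow_add hε, show 2*m-1 + -(2*m) = -1 by ring, rpow_neg_one]
    rw [e1, e2, e3, e4]
    unfold gf Lf
    rw [show ε ^ (2*m-1) * s ^ (2*m-1) * (ε ^ (-(2*m)) * (1+s^2) ^ (-m)) *
        Real.log (1+s^2) ^ δ
        = (ε ^ (2*m-1) * ε ^ (-(2*m))) *
          (s ^ (2*m-1) * (1+s^2) ^ (-m) * Real.log (1+s^2) ^ δ) from by ring, e5]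
  rw [intervalIntegral.integral_congr hptw, intervalIntegral.integral_const_mul,
    smul_eq_mul]
  rw [← mul_assoc, mul_inv_cancel₀ hε.ne', one_mul]

end InstantonAux

/-- **Sharp instanton integral asymptotics, critical weight case `β = N/k`.**
`[ε^{N/k} (-log ε)^{δ+1}]⁻¹ ∫_0^{ε^γ} r^{N+β-1} (v*_ε)^{k*} (log(1+r²/ε²))^δ dr
  → ĉ^{k*} (2(1-γ))^{δ+1} / (2(δ+1))` as `ε → 0⁺`. -/
theorem instanton_critical (N k : ℕ) (hk : 1 ≤ k) (hN : 2 * k < N)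
    (δ γ : ℝ) (hδ : 0 ≤ δ) (hγ : γ ∈ Set.Ioo (0:ℝ) 1) :
    Filter.Tendsto
      (fun ε : ℝ => (ε ^ ((N : ℝ) / (k : ℝ)) * (-Real.log ε) ^ (δ + 1))⁻¹ *
        ∫ r in Set.Ioo (0:ℝ) (ε ^ γ),
          r ^ ((N : ℝ) + (N : ℝ) / (k : ℝ) - 1) * vstar N k ε r ^ kstar N k *
            Real.log (1 + r ^ 2 / ε ^ 2) ^ δ)
      (nhdsWithin 0 (Set.Ioi 0))
      (nhds (chat N k ^ kstar N k * (2 * (1 - γ)) ^ (δ + 1) / (2 * (δ + 1)))) := by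
  have hk0 : (0:ℝ) < k := by
    have : 0 < k := lt_of_lt_of_le Nat.zero_lt_one hk
    exact_mod_cast this
  have hNk : 2*(k:ℝ) < (N:ℝ) := by exact_mod_cast hN
  have hN0 : (0:ℝ) < N := by linarith
  have hk1 : (1:ℝ) ≤ k := by exact_mod_cast hk
  set m : ℝ := (N:ℝ)*((k:ℝ)+1)/(2*(k:ℝ)) with hm_def
  have hm : 2 ≤ m := by
    rw [hm_def, le_div_iff₀ (by positivity)]
    nlinarith
  set c : ℝ := chat N k ^ kstar N k with hc_def
  have h1γ : (0:ℝ) < 1 - γ := by linarith [hγ.2]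
  have hval : c * (2*(1-γ)) ^ (δ+1) / (2*(δ+1)) = c * (1-γ)^(δ+1) * (2^δ/(δ+1)) := by
    rw [mul_rpow (by norm_num : (0:ℝ) ≤ 2) h1γ.le, rpow_add_one (two_ne_zero)]
    field_simp
  rw [hval]
  have hT := (InstantonAux.tendsto_main m δ hm hδ).comp (InstantonAux.tendsto_eps γ hγ.2)
  have hmodel := hT.const_mul (c * (1-γ)^(δ+1))
  apply hmodel.congr'
  filter_upwards [Ioo_mem_nhdsGT_of_mem
    (show (0:ℝ) ∈ Ico (0:ℝ) 1 from ⟨le_refl _, one_pos⟩)] with ε hε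
  obtain ⟨hε0, hε1⟩ := hε
  have hlogneg : Real.log ε < 0 := Real.log_neg hε0 hε1
  have hlogpos : (0:ℝ) < -Real.log ε := by linarith
  show c * (1-γ)^(δ+1) *
      ((∫ s in Ioo (0:ℝ) (ε^(γ-1)), InstantonAux.gf m δ s) /
        Real.log (ε^(γ-1)) ^ (δ+1)) = _
  rw [InstantonAux.key_integral N k hk0 hNk δ γ hε0, ← hm_def, ← hc_def,
    Real.log_rpow hε0,
    show (γ-1) * Real.log ε = (1-γ) * (-Real.log ε) from by ring,
    mul_rpow h1γ.le hlogpos.le]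
  have hεβ : (0:ℝ) < ε ^ ((N:ℝ)/(k:ℝ)) := rpow_pos_of_pos hε0 _
  have hx1 : ((1:ℝ)-γ) ^ (δ+1) ≠ 0 := (rpow_pos_of_pos h1γ _).ne'
  have hx2 : (-Real.log ε) ^ (δ+1) ≠ 0 := (rpow_pos_of_pos hlogpos _).ne'
  field_simp
end

section
/- (Instanton integral estimates away from the concentration scale.) Let β ≥ 0 be a real number and γ ∈ (0,1). Then, as ε → 0⁺: if β < N/k, ∫_{ε^γ}^1 r^{N+β−1}(v*_ε(r))^{k*} dr = O(ε^{(1−γ)N/k + βγ}); if β = N/k, ∫_{ε^γ}^1 r^{N+β−1}(v*_ε(r))^{k*} dr = O(ε^{N/k}(−log ε)); and if β > N/k, ∫_{ε^γ}^1 r^{N+β−1}(v*_ε(r))^{k*} dr = O(ε^{N/k}). -/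
open MeasureTheory Real Set Filter Asymptotics

section Main
variable (N k : ℕ)

lemma myIntegral_rpow_Ioo {a : ℝ} (ha : 0 < a) (ha1 : a ≤ 1) {t : ℝ} (ht : t ≠ -1) :
    ∫ r in Set.Ioo a 1, r ^ t = (1 - a ^ (t + 1)) / (t + 1) := by
  rw [← MeasureTheory.integral_Ioc_eq_integral_Ioo,
    ← intervalIntegral.integral_of_le ha1,
    integral_rpow (Or.inr ⟨ht, Set.notMem_uIcc_of_lt ha one_pos⟩), Real.one_rpow]

lemma myIntegral_inv_Ioo {a : ℝ} (ha : 0 < a) (ha1 : a ≤ 1) :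
    ∫ r in Set.Ioo a 1, r ^ (-1 : ℝ) = -Real.log a := by
  rw [MeasureTheory.setIntegral_congr_fun measurableSet_Ioo
      (fun r _ => Real.rpow_neg_one r),
    ← MeasureTheory.integral_Ioc_eq_integral_Ioo,
    ← intervalIntegral.integral_of_le ha1,
    integral_inv (Set.notMem_uIcc_of_lt ha one_pos), one_div, Real.log_inv]

end Main

/-- **Instanton integral estimates away from the concentration scale.**
As `ε → 0⁺`: `∫_{ε^γ}^1 r^{N+β-1} (v*_ε)^{k*} dr` is `O(ε^{(1-γ)N/k + βγ})` if
`β < N/k`, `O(ε^{N/k} (-log ε))` if `β = N/k`, and `O(ε^{N/k})` if `β > N/k`. -/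
theorem instanton_away (N k : ℕ) (hk : 1 ≤ k) (hN : 2 * k < N)
    (β γ : ℝ) (hβ : 0 ≤ β) (hγ : γ ∈ Set.Ioo (0:ℝ) 1) :
    (β < (N : ℝ) / (k : ℝ) →
      (fun ε : ℝ => ∫ r in Set.Ioo (ε ^ γ) 1,
          r ^ ((N : ℝ) + β - 1) * vstar N k ε r ^ kstar N k)
        =O[nhdsWithin 0 (Set.Ioi 0)]
          fun ε : ℝ => ε ^ ((1 - γ) * (N : ℝ) / (k : ℝ) + β * γ)) ∧
    (β = (N : ℝ) / (k : ℝ) →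
      (fun ε : ℝ => ∫ r in Set.Ioo (ε ^ γ) 1,
          r ^ ((N : ℝ) + β - 1) * vstar N k ε r ^ kstar N k)
        =O[nhdsWithin 0 (Set.Ioi 0)]
          fun ε : ℝ => ε ^ ((N : ℝ) / (k : ℝ)) * (-Real.log ε)) ∧
    ((N : ℝ) / (k : ℝ) < β →
      (fun ε : ℝ => ∫ r in Set.Ioo (ε ^ γ) 1,
          r ^ ((N : ℝ) + β - 1) * vstar N k ε r ^ kstar N k)
        =O[nhdsWithin 0 (Set.Ioi 0)]
          fun ε : ℝ => ε ^ ((N : ℝ) / (k : ℝ))) := by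
  have hk0 : (0:ℝ) < (k:ℝ) := by exact_mod_cast Nat.pos_of_ne_zero (by omega)
  have hN0 : (0:ℝ) < (N:ℝ) := by exact_mod_cast (by omega : 0 < N)
  have hNk : (0:ℝ) < (N:ℝ) - 2*(k:ℝ) := by
    have h := (Nat.cast_lt (α := ℝ)).mpr hN
    push_cast at h; linarith
  have hk1 : (1:ℝ) ≤ (k:ℝ) := by exact_mod_cast hk
  have hN1 : (1:ℝ) ≤ (N:ℝ) := by linarith
  have hkse : kstar N k = (N:ℝ)*((k:ℝ)+1)/((N:ℝ)-2*(k:ℝ)) := rfl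
  have hks0 : 0 ≤ kstar N k := by rw [hkse]; positivity
  set nk : ℝ := (N:ℝ)/(k:ℝ) with hnkdef
  have hnk0 : 0 < nk := by rw [hnkdef]; positivity
  set p' : ℝ := (N:ℝ)*((k:ℝ)+1)/(2*(k:ℝ)) with hp'def
  have hp'0 : 0 ≤ p' := by rw [hp'def]; positivity
  set C : ℝ := chat N k ^ kstar N k with hCdef
  have hchat0 : 0 ≤ chat N k := Real.rpow_nonneg (by positivity) _
  have hC0 : 0 ≤ C := Real.rpow_nonneg hchat0 _
  -- pointwise identity and bound
  have hbound : ∀ {ε r : ℝ}, 0 < ε → 0 < r →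
      r ^ ((N:ℝ)+β-1) * vstar N k ε r ^ kstar N k
        ≤ C * ε ^ nk * r ^ (β - nk - 1) := by
    intro ε r hε hr
    have hb : (0:ℝ) < ε^2 + r^2 := by positivity
    have hnum : 0 ≤ ε ^ ((2:ℝ)/((k:ℝ)+1)) := Real.rpow_nonneg hε.le _
    have hbase : 0 ≤ ε ^ ((2:ℝ)/((k:ℝ)+1)) / (ε^2+r^2) := div_nonneg hnum hb.le
    have hvs : vstar N k ε r ^ kstar N k = C * (ε ^ nk * ((ε^2 + r^2) ^ p')⁻¹) := by
      rw [vstar, Real.mul_rpow hchat0 (Real.rpow_nonneg hbase _),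
          ← Real.rpow_mul hbase]
      have h1 : (((N:ℝ) - 2*(k:ℝ))/(2*(k:ℝ))) * kstar N k = p' := by
        rw [hkse, hp'def]; field_simp
      rw [h1, Real.div_rpow hnum hb.le, ← Real.rpow_mul hε.le]
      have h2 : (2:ℝ)/((k:ℝ)+1) * p' = nk := by
        rw [hp'def, hnkdef]; field_simp
      rw [h2, div_eq_mul_inv, hCdef]
    rw [hvs]
    have h3 : ((r:ℝ)^2) ^ p' ≤ (ε^2 + r^2) ^ p' :=
      Real.rpow_le_rpow (by positivity) (by nlinarith [sq_nonneg ε]) hp'0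
    have h4 : ((ε^2 + r^2) ^ p')⁻¹ ≤ (((r:ℝ)^2) ^ p')⁻¹ :=
      inv_anti₀ (by positivity) h3
    have h5 : (((r:ℝ)^2) ^ p')⁻¹ = r ^ (-(2*p')) := by
      rw [← Real.rpow_natCast r 2, ← Real.rpow_mul hr.le, ← Real.rpow_neg hr.le]
      norm_num
    calc r ^ ((N:ℝ)+β-1) * (C * (ε ^ nk * ((ε^2+r^2) ^ p')⁻¹))
        ≤ r ^ ((N:ℝ)+β-1) * (C * (ε ^ nk * (r ^ (-(2*p'))))) := by
          rw [← h5]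
          exact mul_le_mul_of_nonneg_left
            (mul_le_mul_of_nonneg_left
              (mul_le_mul_of_nonneg_left h4 (Real.rpow_nonneg hε.le _)) hC0)
            (Real.rpow_nonneg hr.le _)
      _ = C * ε ^ nk * (r ^ ((N:ℝ)+β-1) * r ^ (-(2*p'))) := by ring
      _ = C * ε ^ nk * r ^ ((N:ℝ)+β-1 + -(2*p')) := by rw [Real.rpow_add hr]
      _ = C * ε ^ nk * r ^ (β - nk - 1) := by
          congr 1
          rw [hp'def, hnkdef]; field_simp; ring
  -- main integral bound
  have main : ∀ ε ∈ Set.Ioo (0:ℝ) 1,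
      |∫ r in Set.Ioo (ε ^ γ) 1, r ^ ((N:ℝ)+β-1) * vstar N k ε r ^ kstar N k|
        ≤ C * ε ^ nk * ∫ r in Set.Ioo (ε ^ γ) 1, r ^ (β - nk - 1) := by
    intro ε hε
    have hεpos := hε.1
    have ha : 0 < ε ^ γ := Real.rpow_pos_of_pos hεpos γ
    have hvspos : ∀ r : ℝ, 0 ≤ vstar N k ε r := by
      intro r
      exact mul_nonneg hchat0 (Real.rpow_nonneg
        (div_nonneg (Real.rpow_nonneg hεpos.le _)
          (by positivity)) _)
    have hfc : Continuous (fun r : ℝ => r ^ ((N:ℝ)+β-1) * vstar N k ε r ^ kstar N k) := by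
      apply Continuous.mul
      · exact continuous_id.rpow_const (fun x => Or.inr (by linarith))
      · apply Continuous.rpow_const _ (fun x => Or.inr hks0)
        apply continuous_const.mul
        apply Continuous.rpow_const _
          (fun x => Or.inr (by positivity))
        exact continuous_const.div (by fun_prop)
          (fun x => ne_of_gt (by positivity))
    have hfi : MeasureTheory.IntegrableOn
        (fun r : ℝ => r ^ ((N:ℝ)+β-1) * vstar N k ε r ^ kstar N k)
        (Set.Ioo (ε ^ γ) 1) :=
      (hfc.integrableOn_Icc).mono_set Set.Ioo_subset_Icc_self
    have hgc : ContinuousOn (fun r : ℝ => r ^ (β - nk - 1)) (Set.Icc (ε^γ) 1) :=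
      ContinuousOn.rpow_const continuousOn_id
        (fun x hx => Or.inl (ne_of_gt (lt_of_lt_of_le ha hx.1)))
    have hgi : MeasureTheory.IntegrableOn (fun r : ℝ => r ^ (β - nk - 1))
        (Set.Ioo (ε^γ) 1) :=
      (hgc.integrableOn_Icc).mono_set Set.Ioo_subset_Icc_self
    have hmono := MeasureTheory.setIntegral_mono_on hfi
      (hgi.const_mul (C * ε ^ nk)) measurableSet_Ioo
      (fun r hr => hbound hεpos (ha.trans hr.1))
    rw [abs_of_nonneg (MeasureTheory.setIntegral_nonneg measurableSet_Ioo
      (fun r hr => mul_nonneg (Real.rpow_nonneg ((ha.trans hr.1).le) _)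
        (Real.rpow_nonneg (hvspos r) _)))]
    calc (∫ r in Set.Ioo (ε^γ) 1, r ^ ((N:ℝ)+β-1) * vstar N k ε r ^ kstar N k)
        ≤ ∫ r in Set.Ioo (ε^γ) 1, C * ε ^ nk * r ^ (β - nk - 1) := hmono
      _ = C * ε ^ nk * ∫ r in Set.Ioo (ε^γ) 1, r ^ (β - nk - 1) :=
          MeasureTheory.integral_const_mul _ _
  refine ⟨?_, ?_, ?_⟩
  · -- β < N/k
    intro hlt
    have hs : β - nk < 0 := sub_neg.mpr hlt
    rw [Asymptotics.isBigO_iff]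
    refine ⟨C / (-(β - nk)), ?_⟩
    filter_upwards [Ioo_mem_nhdsGT_of_mem (Set.left_mem_Ico.mpr one_pos)] with ε hε
    have hεpos := hε.1
    have ha : 0 < ε ^ γ := Real.rpow_pos_of_pos hεpos γ
    have ha1 : ε ^ γ ≤ 1 := (Real.rpow_lt_one hεpos.le hε.2 hγ.1).le
    have hInt := myIntegral_rpow_Ioo ha ha1 (t := β - nk - 1) (by intro h; linarith)
    have he : β - nk - 1 + 1 = β - nk := by ring
    rw [he] at hInt
    have hb1 : (∫ r in Set.Ioo (ε^γ) 1, r ^ (β - nk - 1))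
        ≤ (ε^γ) ^ (β - nk) / (-(β - nk)) := by
      rw [hInt]
      have e1 : (1 - (ε^γ) ^ (β - nk)) / (β - nk)
          = ((ε^γ) ^ (β - nk) - 1) / (-(β - nk)) := by
        rw [div_neg, ← neg_div, neg_sub]
      rw [e1]
      gcongr
      · linarith
      · linarith
    have h8 := (main ε hε).trans
      (mul_le_mul_of_nonneg_left hb1 (mul_nonneg hC0 (Real.rpow_nonneg hεpos.le _)))
    rw [Real.norm_eq_abs, Real.norm_eq_abs,
      abs_of_nonneg (Real.rpow_nonneg hεpos.le _)]
    calc |∫ r in Set.Ioo (ε^γ) 1, r ^ ((N:ℝ)+β-1) * vstar N k ε r ^ kstar N k|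
        ≤ C * ε ^ nk * ((ε^γ) ^ (β - nk) / (-(β - nk))) := h8
      _ = C / (-(β - nk)) * (ε ^ nk * (ε^γ) ^ (β - nk)) := by ring
      _ = C / (-(β - nk)) * ε ^ ((1 - γ) * (N:ℝ) / (k:ℝ) + β * γ) := by
          rw [← Real.rpow_mul hεpos.le, ← Real.rpow_add hεpos]
          congr 2
          rw [hnkdef]; field_simp; ring
  · -- β = N/k
    intro heq
    rw [Asymptotics.isBigO_iff]
    refine ⟨C * γ, ?_⟩
    filter_upwards [Ioo_mem_nhdsGT_of_mem (Set.left_mem_Ico.mpr one_pos)] with ε hε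
    have hεpos := hε.1
    have ha : 0 < ε ^ γ := Real.rpow_pos_of_pos hεpos γ
    have ha1 : ε ^ γ ≤ 1 := (Real.rpow_lt_one hεpos.le hε.2 hγ.1).le
    have hlog : Real.log ε < 0 := Real.log_neg hεpos hε.2
    have he : β - nk - 1 = -1 := by rw [heq]; ring
    have hInt : (∫ r in Set.Ioo (ε^γ) 1, r ^ (β - nk - 1)) = γ * (-Real.log ε) := by
      rw [he, myIntegral_inv_Ioo ha ha1, Real.log_rpow hεpos]; ring
    have h8 := (main ε hε).trans_eq (by rw [hInt])
    rw [Real.norm_eq_abs, Real.norm_eq_abs,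
      abs_of_nonneg (mul_nonneg (Real.rpow_nonneg hεpos.le _) (by linarith))]
    calc |∫ r in Set.Ioo (ε^γ) 1, r ^ ((N:ℝ)+β-1) * vstar N k ε r ^ kstar N k|
        ≤ C * ε ^ nk * (γ * (-Real.log ε)) := h8
      _ = C * γ * (ε ^ nk * (-Real.log ε)) := by ring
  · -- β > N/k
    intro hgt
    have hs : 0 < β - nk := sub_pos.mpr hgt
    rw [Asymptotics.isBigO_iff]
    refine ⟨C / (β - nk), ?_⟩
    filter_upwards [Ioo_mem_nhdsGT_of_mem (Set.left_mem_Ico.mpr one_pos)] with ε hε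
    have hεpos := hε.1
    have ha : 0 < ε ^ γ := Real.rpow_pos_of_pos hεpos γ
    have ha1 : ε ^ γ ≤ 1 := (Real.rpow_lt_one hεpos.le hε.2 hγ.1).le
    have hInt := myIntegral_rpow_Ioo ha ha1 (t := β - nk - 1) (by intro h; linarith)
    have he : β - nk - 1 + 1 = β - nk := by ring
    rw [he] at hInt
    have hpow : 0 ≤ (ε^γ) ^ (β - nk) := Real.rpow_nonneg ha.le _
    have hb1 : (∫ r in Set.Ioo (ε^γ) 1, r ^ (β - nk - 1)) ≤ 1 / (β - nk) := by
      rw [hInt]; gcongr; linarith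
    have h8 := (main ε hε).trans
      (mul_le_mul_of_nonneg_left hb1 (mul_nonneg hC0 (Real.rpow_nonneg hεpos.le _)))
    rw [Real.norm_eq_abs, Real.norm_eq_abs,
      abs_of_nonneg (Real.rpow_nonneg hεpos.le _)]
    calc |∫ r in Set.Ioo (ε^γ) 1, r ^ ((N:ℝ)+β-1) * vstar N k ε r ^ kstar N k|
        ≤ C * ε ^ nk * (1 / (β - nk)) := h8
      _ = C / (β - nk) * ε ^ nk := by ring
end
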